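/- arXiv:1911.06120 — 6 statements merged into one kernel-verified Lean document; each statement's English description precedes it below -/
import Mathlib

section
/- If a subgroup Γ of Aff(2,ℍ) acts freely on ℍ², then Γ is conjugate in Aff(2,ℍ) to a subgroup of G₂, the group of all matrices [[1,b,r],[0,d,s],[0,0,1]] with b,r,s,d ∈ ℍ, d ≠ 0. -/
open Quaternion Matrix

noncomputable section

/-- Membership in Aff(2,ℍ): a 3×3 quaternionic matrix whose last row is (0,0,1). -/
def IsAffMat (M : Matrix (Fin 3) (Fin 3) ℍ[ℝ]) : Prop :=
  M 2 0 = 0 ∧ M 2 1 = 0 ∧ M 2 2 = 1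

/-- The affine action of a 3×3 quaternionic matrix on ℍ²:
`(x,y) ↦ (ax+by+r, cx+dy+s)`. -/
def affAct (M : Matrix (Fin 3) (Fin 3) ℍ[ℝ]) (p : ℍ[ℝ] × ℍ[ℝ]) : ℍ[ℝ] × ℍ[ℝ] :=
  (M 0 0 * p.1 + M 0 1 * p.2 + M 0 2, M 1 0 * p.1 + M 1 1 * p.2 + M 1 2)

/-- A subgroup of GL(3,ℍ) (whose elements are affine) acts freely on ℍ² if no element
other than the identity fixes a point. -/
def ActsFreely (Γ : Subgroup (Matrix (Fin 3) (Fin 3) ℍ[ℝ])ˣ) : Prop :=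
  ∀ g ∈ Γ, (∃ p : ℍ[ℝ] × ℍ[ℝ], affAct g.val p = p) → g = 1
/-- Membership in G₂: matrices `[[1,b,r],[0,d,s],[0,0,1]]` with `d ≠ 0`. -/
def InG2 (M : Matrix (Fin 3) (Fin 3) ℍ[ℝ]) : Prop :=
  M 0 0 = 1 ∧ M 1 0 = 0 ∧ M 1 1 ≠ 0 ∧ IsAffMat M

set_option maxHeartbeats 2000000
namespace AffAux

abbrev K := ℍ[ℝ]
abbrev Q3 := Matrix (Fin 3) (Fin 3) K
abbrev U3 := Q3ˣ

lemma mul3 (M N : Q3) (i j : Fin 3) :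
    (M * N) i j = M i 0 * N 0 j + M i 1 * N 1 j + M i 2 * N 2 j := by
  rw [Matrix.mul_apply, Fin.sum_univ_three]

lemma entry_eq {M N : Q3} (h : M = N) (i j : Fin 3) : M i j = N i j := by rw [h]

lemma affine_mul {M N : Q3} (hM : IsAffMat M) (hN : IsAffMat N) : IsAffMat (M * N) := by
  obtain ⟨h1, h2, h3⟩ := hM
  obtain ⟨k1, k2, k3⟩ := hN
  refine ⟨?_, ?_, ?_⟩ <;>
    simp only [mul3, h1, h2, h3, k1, k2, k3, zero_mul, one_mul, mul_zero, mul_one,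
      zero_add, add_zero]

lemma affine_inv {g : U3} (hg : IsAffMat g.val) : IsAffMat (g⁻¹).val := by
  have hv : g.val * (g⁻¹).val = 1 := g.mul_inv
  obtain ⟨h1, h2, h3⟩ := hg
  refine ⟨?_, ?_, ?_⟩
  · have := entry_eq hv 2 0
    rw [mul3, h1, h2, h3, Matrix.one_apply_ne (by decide)] at this
    simpa only [zero_mul, one_mul, zero_add] using this
  · have := entry_eq hv 2 1
    rw [mul3, h1, h2, h3, Matrix.one_apply_ne (by decide)] at this
    simpa only [zero_mul, one_mul, zero_add] using this
  · have := entry_eq hv 2 2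
    rw [mul3, h1, h2, h3, Matrix.one_apply_eq] at this
    simpa only [zero_mul, one_mul, zero_add] using this

lemma row_ne_zero {g : U3} (hg : IsAffMat g.val) (i : Fin 3) (hi : i ≠ 2)
    (h0 : g.val i 0 = 0) (h1 : g.val i 1 = 0) : False := by
  have hv : g.val * (g⁻¹).val = 1 := g.mul_inv
  have hinv := affine_inv hg
  have h2i : (g⁻¹).val 2 i = 0 := by
    fin_cases i
    · exact hinv.1
    · exact hinv.2.1
    · exact absurd rfl hi
  have e1 := entry_eq hv i i
  rw [mul3, h0, h1, h2i, mul_zero, Matrix.one_apply_eq] at e1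
  simp only [zero_mul, zero_add, add_zero] at e1
  exact one_ne_zero e1.symm

lemma affAct_mul {M N : Q3} (hN : IsAffMat N) (p : K × K) :
    affAct (M * N) p = affAct M (affAct N p) := by
  obtain ⟨k1, k2, k3⟩ := hN
  unfold affAct
  rw [Prod.mk.injEq]
  constructor
  · rw [mul3, mul3, mul3, k1, k2, k3]
    noncomm_ring
  · rw [mul3, mul3, mul3, k1, k2, k3]
    noncomm_ring

lemma solve2 (p q r s : K) :
    (∀ t1 t2 : K, ∃ x y : K, p * x + q * y = t1 ∧ r * x + s * y = t2) ∨
    (∃ x y : K, ¬(x = 0 ∧ y = 0) ∧ p * x + q * y = 0 ∧ r * x + s * y = 0) := by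
  by_cases hp : p = 0
  · by_cases hq : q = 0
    · right
      by_cases hr : r = 0
      · exact ⟨1, 0, by simp, by rw [hp, hq]; simp, by rw [hr]; simp⟩
      · refine ⟨-(r⁻¹ * s), 1, by simp, by rw [hp, hq]; simp, ?_⟩
        rw [mul_neg, mul_inv_cancel_left₀ hr, mul_one, neg_add_cancel]
    · by_cases hr : r = 0
      · right
        exact ⟨1, 0, by simp, by rw [hp]; simp, by rw [hr]; simp⟩
      · left
        intro t1 t2
        refine ⟨r⁻¹ * (t2 - s * (q⁻¹ * t1)), q⁻¹ * t1, ?_, ?_⟩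
        · rw [hp, zero_mul, zero_add, mul_inv_cancel_left₀ hq]
        · rw [mul_inv_cancel_left₀ hr, sub_add_cancel]
  · by_cases he : s - r * p⁻¹ * q = 0
    · right
      refine ⟨-(p⁻¹ * q), 1, by simp, ?_, ?_⟩
      · rw [mul_neg, mul_inv_cancel_left₀ hp, mul_one, neg_add_cancel]
      · have hs : s = r * p⁻¹ * q := by
          have := sub_eq_zero.mp he; exact this
        rw [mul_neg, mul_one, hs, mul_assoc r]
        exact neg_add_cancel _
    · left
      intro t1 t2
      set e := s - r * p⁻¹ * q with hedef
      set y := e⁻¹ * (t2 - r * (p⁻¹ * t1)) with hy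
      refine ⟨p⁻¹ * (t1 - q * y), y, ?_, ?_⟩
      · rw [mul_inv_cancel_left₀ hp, sub_add_cancel]
      · have hey : e * y = t2 - r * (p⁻¹ * t1) := by
          rw [hy, mul_inv_cancel_left₀ he]
        calc r * (p⁻¹ * (t1 - q * y)) + s * y
            = r * (p⁻¹ * t1) + (s - r * p⁻¹ * q) * y := by noncomm_ring
          _ = r * (p⁻¹ * t1) + (t2 - r * (p⁻¹ * t1)) := by rw [← hedef, hey]
          _ = t2 := by noncomm_ring


def Cov (p q : K) (M : Q3) : Prop :=
  p * M 0 0 + q * M 1 0 = p ∧ p * M 0 1 + q * M 1 1 = q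

def tv (p q : K) (M : Q3) : K := p * M 0 2 + q * M 1 2

lemma cov_mul {p q : K} {M N : Q3} (hN : IsAffMat N)
    (cM : Cov p q M) (cN : Cov p q N) :
    Cov p q (M * N) ∧ tv p q (M * N) = tv p q M + tv p q N := by
  obtain ⟨k1, k2, k3⟩ := hN
  have e00 : (M * N) 0 0 = M 0 0 * N 0 0 + M 0 1 * N 1 0 := by
    rw [mul3, k1, mul_zero, add_zero]
  have e10 : (M * N) 1 0 = M 1 0 * N 0 0 + M 1 1 * N 1 0 := by
    rw [mul3, k1, mul_zero, add_zero]
  have e01 : (M * N) 0 1 = M 0 0 * N 0 1 + M 0 1 * N 1 1 := by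
    rw [mul3, k2, mul_zero, add_zero]
  have e11 : (M * N) 1 1 = M 1 0 * N 0 1 + M 1 1 * N 1 1 := by
    rw [mul3, k2, mul_zero, add_zero]
  have e02 : (M * N) 0 2 = M 0 0 * N 0 2 + M 0 1 * N 1 2 + M 0 2 := by
    rw [mul3, k3, mul_one]
  have e12 : (M * N) 1 2 = M 1 0 * N 0 2 + M 1 1 * N 1 2 + M 1 2 := by
    rw [mul3, k3, mul_one]
  refine ⟨⟨?_, ?_⟩, ?_⟩
  · rw [e00, e10]
    calc p * (M 0 0 * N 0 0 + M 0 1 * N 1 0) + q * (M 1 0 * N 0 0 + M 1 1 * N 1 0)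
        = (p * M 0 0 + q * M 1 0) * N 0 0 + (p * M 0 1 + q * M 1 1) * N 1 0 := by
          noncomm_ring
      _ = p * N 0 0 + q * N 1 0 := by rw [cM.1, cM.2]
      _ = p := cN.1
  · rw [e01, e11]
    calc p * (M 0 0 * N 0 1 + M 0 1 * N 1 1) + q * (M 1 0 * N 0 1 + M 1 1 * N 1 1)
        = (p * M 0 0 + q * M 1 0) * N 0 1 + (p * M 0 1 + q * M 1 1) * N 1 1 := by
          noncomm_ring
      _ = p * N 0 1 + q * N 1 1 := by rw [cM.1, cM.2]
      _ = q := cN.2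
  · unfold tv
    rw [e02, e12]
    calc p * (M 0 0 * N 0 2 + M 0 1 * N 1 2 + M 0 2) +
          q * (M 1 0 * N 0 2 + M 1 1 * N 1 2 + M 1 2)
        = (p * M 0 0 + q * M 1 0) * N 0 2 + (p * M 0 1 + q * M 1 1) * N 1 2 +
          (p * M 0 2 + q * M 1 2) := by noncomm_ring
      _ = p * N 0 2 + q * N 1 2 + (p * M 0 2 + q * M 1 2) := by rw [cM.1, cM.2]
      _ = p * M 0 2 + q * M 1 2 + (p * N 0 2 + q * N 1 2) := by abel

lemma cov_inv {p q : K} {g : U3} (hg : IsAffMat g.val) (c : Cov p q g.val) :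
    Cov p q (g⁻¹).val ∧ tv p q (g⁻¹).val = -tv p q g.val := by
  have hi := affine_inv hg
  have hv : g.val * (g⁻¹).val = 1 := g.mul_inv
  set M := g.val with hM
  set Y := (g⁻¹).val with hY
  have E1 : M 0 0 * Y 0 0 + M 0 1 * Y 1 0 = 1 := by
    have := entry_eq hv 0 0
    rw [mul3, hi.1, mul_zero, add_zero, Matrix.one_apply_eq] at this
    exact this
  have E2 : M 1 0 * Y 0 0 + M 1 1 * Y 1 0 = 0 := by
    have := entry_eq hv 1 0
    rw [mul3, hi.1, mul_zero, add_zero, Matrix.one_apply_ne (by decide)] at this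
    exact this
  have E3 : M 0 0 * Y 0 1 + M 0 1 * Y 1 1 = 0 := by
    have := entry_eq hv 0 1
    rw [mul3, hi.2.1, mul_zero, add_zero, Matrix.one_apply_ne (by decide)] at this
    exact this
  have E4 : M 1 0 * Y 0 1 + M 1 1 * Y 1 1 = 1 := by
    have := entry_eq hv 1 1
    rw [mul3, hi.2.1, mul_zero, add_zero, Matrix.one_apply_eq] at this
    exact this
  have E5 : M 0 0 * Y 0 2 + M 0 1 * Y 1 2 + M 0 2 = 0 := by
    have := entry_eq hv 0 2
    rw [mul3, hi.2.2, mul_one, Matrix.one_apply_ne (by decide)] at this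
    exact this
  have E6 : M 1 0 * Y 0 2 + M 1 1 * Y 1 2 + M 1 2 = 0 := by
    have := entry_eq hv 1 2
    rw [mul3, hi.2.2, mul_one, Matrix.one_apply_ne (by decide)] at this
    exact this
  have c1 : p * Y 0 0 + q * Y 1 0 = p := by
    calc p * Y 0 0 + q * Y 1 0
        = (p * M 0 0 + q * M 1 0) * Y 0 0 + (p * M 0 1 + q * M 1 1) * Y 1 0 := by
          rw [c.1, c.2]
      _ = p * (M 0 0 * Y 0 0 + M 0 1 * Y 1 0) + q * (M 1 0 * Y 0 0 + M 1 1 * Y 1 0) := by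
          noncomm_ring
      _ = p := by rw [E1, E2, mul_one, mul_zero, add_zero]
  have c2 : p * Y 0 1 + q * Y 1 1 = q := by
    calc p * Y 0 1 + q * Y 1 1
        = (p * M 0 0 + q * M 1 0) * Y 0 1 + (p * M 0 1 + q * M 1 1) * Y 1 1 := by
          rw [c.1, c.2]
      _ = p * (M 0 0 * Y 0 1 + M 0 1 * Y 1 1) + q * (M 1 0 * Y 0 1 + M 1 1 * Y 1 1) := by
          noncomm_ring
      _ = q := by rw [E3, E4, mul_one, mul_zero, zero_add]
  refine ⟨⟨c1, c2⟩, ?_⟩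
  have key : (p * Y 0 2 + q * Y 1 2) + (p * M 0 2 + q * M 1 2) = 0 := by
    calc (p * Y 0 2 + q * Y 1 2) + (p * M 0 2 + q * M 1 2)
        = (p * M 0 0 + q * M 1 0) * Y 0 2 + (p * M 0 1 + q * M 1 1) * Y 1 2 +
            (p * M 0 2 + q * M 1 2) := by rw [c.1, c.2]
      _ = p * (M 0 0 * Y 0 2 + M 0 1 * Y 1 2 + M 0 2) +
            q * (M 1 0 * Y 0 2 + M 1 1 * Y 1 2 + M 1 2) := by noncomm_ring
      _ = 0 := by rw [E5, E6, mul_zero, mul_zero, add_zero]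
  unfold tv
  exact eq_neg_of_add_eq_zero_left key

lemma cov_fixed {p q : K} {C : Q3} (hC : IsAffMat C) (hpq : ¬(p = 0 ∧ q = 0))
    (c : Cov p q C) (ht : tv p q C = 0)
    (hA : ¬(C 0 0 = 1 ∧ C 0 1 = 0 ∧ C 1 0 = 0 ∧ C 1 1 = 1)) :
    ∃ pt : K × K, affAct C pt = pt := by
  have f1 : p * (C 0 0 - 1) + q * C 1 0 = 0 := by
    calc p * (C 0 0 - 1) + q * C 1 0 = (p * C 0 0 + q * C 1 0) - p := by noncomm_ring
      _ = 0 := by rw [c.1, sub_self]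
  have f2 : p * C 0 1 + q * (C 1 1 - 1) = 0 := by
    calc p * C 0 1 + q * (C 1 1 - 1) = (p * C 0 1 + q * C 1 1) - q := by noncomm_ring
      _ = 0 := by rw [c.2, sub_self]
  have f3 : p * C 0 2 + q * C 1 2 = 0 := ht
  by_cases hp : p = 0
  · have hq : q ≠ 0 := fun h => hpq ⟨hp, h⟩
    rw [hp, zero_mul, zero_add] at f1 f2 f3
    have h10 : C 1 0 = 0 := by
      rcases mul_eq_zero.mp f1 with h | h
      · exact absurd h hq
      · exact h
    have h11 : C 1 1 = 1 := by
      rcases mul_eq_zero.mp f2 with h | h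
      · exact absurd h hq
      · exact sub_eq_zero.mp h
    have h12 : C 1 2 = 0 := by
      rcases mul_eq_zero.mp f3 with h | h
      · exact absurd h hq
      · exact h
    by_cases h00 : C 0 0 = 1
    · have h01 : C 0 1 ≠ 0 := fun h => hA ⟨h00, h, h10, h11⟩
      refine ⟨(0, -((C 0 1)⁻¹ * C 0 2)), ?_⟩
      unfold affAct
      rw [Prod.mk.injEq]
      constructor
      · rw [mul_zero, zero_add, mul_neg, mul_inv_cancel_left₀ h01, neg_add_cancel]
      · rw [mul_zero, zero_add, h11, h12, one_mul, add_zero]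
    · refine ⟨(-((C 0 0 - 1)⁻¹ * C 0 2), 0), ?_⟩
      have hkey : (C 0 0 - 1) * ((C 0 0 - 1)⁻¹ * C 0 2) = C 0 2 :=
        mul_inv_cancel_left₀ (sub_ne_zero.mpr h00) _
      unfold affAct
      rw [Prod.mk.injEq]
      constructor
      · rw [mul_zero, add_zero, mul_neg]
        calc -(C 0 0 * ((C 0 0 - 1)⁻¹ * C 0 2)) + C 0 2
            = -((C 0 0 - 1) * ((C 0 0 - 1)⁻¹ * C 0 2)) + C 0 2
              - ((C 0 0 - 1)⁻¹ * C 0 2) := by noncomm_ring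
          _ = -((C 0 0 - 1)⁻¹ * C 0 2) := by rw [hkey]; noncomm_ring
      · rw [h10, h12, zero_mul, mul_zero, add_zero, add_zero]
  · -- p ≠ 0 case
    have d00 : p * (C 0 0 - 1) = -(q * C 1 0) := eq_neg_of_add_eq_zero_left f1
    have d01 : p * C 0 1 = -(q * (C 1 1 - 1)) := eq_neg_of_add_eq_zero_left f2
    have d02 : p * C 0 2 = -(q * C 1 2) := eq_neg_of_add_eq_zero_left f3
    by_cases h10 : C 1 0 = 0
    · by_cases h11 : C 1 1 = 1
      · exfalso
        apply hA
        have e00 : C 0 0 = 1 := by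
          rw [h10, mul_zero, neg_zero] at d00
          have := (mul_eq_zero.mp d00).resolve_left hp
          exact sub_eq_zero.mp this
        have e01 : C 0 1 = 0 := by
          rw [h11, sub_self, mul_zero, neg_zero] at d01
          exact (mul_eq_zero.mp d01).resolve_left hp
        exact ⟨e00, e01, h10, h11⟩
      · -- x = 0, y = -((C11-1)⁻¹ * C12)
        refine ⟨(0, -((C 1 1 - 1)⁻¹ * C 1 2)), ?_⟩
        have hkey : (C 1 1 - 1) * ((C 1 1 - 1)⁻¹ * C 1 2) = C 1 2 :=
          mul_inv_cancel_left₀ (sub_ne_zero.mpr h11) _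
        have hy : C 0 1 * -((C 1 1 - 1)⁻¹ * C 1 2) + C 0 2 = 0 := by
          have hp1 : p * (C 0 1 * -((C 1 1 - 1)⁻¹ * C 1 2) + C 0 2) = 0 := by
            calc p * (C 0 1 * -((C 1 1 - 1)⁻¹ * C 1 2) + C 0 2)
                = (p * C 0 1) * -((C 1 1 - 1)⁻¹ * C 1 2) + p * C 0 2 := by noncomm_ring
              _ = -(q * (C 1 1 - 1)) * -((C 1 1 - 1)⁻¹ * C 1 2) + -(q * C 1 2) := by
                  rw [d01, d02]
              _ = q * ((C 1 1 - 1) * ((C 1 1 - 1)⁻¹ * C 1 2)) + -(q * C 1 2) := by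
                  noncomm_ring
              _ = 0 := by rw [hkey, add_neg_cancel]
          exact (mul_eq_zero.mp hp1).resolve_left hp
        unfold affAct
        rw [Prod.mk.injEq]
        constructor
        · rw [mul_zero, zero_add, hy]
        · rw [mul_zero, zero_add, mul_neg]
          calc -(C 1 1 * ((C 1 1 - 1)⁻¹ * C 1 2)) + C 1 2
              = -((C 1 1 - 1) * ((C 1 1 - 1)⁻¹ * C 1 2)) + C 1 2
                - ((C 1 1 - 1)⁻¹ * C 1 2) := by noncomm_ring
            _ = -((C 1 1 - 1)⁻¹ * C 1 2) := by rw [hkey]; noncomm_ring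
    · -- C10 ≠ 0 : x = -(C10⁻¹ * C12), y = 0
      refine ⟨(-((C 1 0)⁻¹ * C 1 2), 0), ?_⟩
      have hkey : C 1 0 * ((C 1 0)⁻¹ * C 1 2) = C 1 2 := mul_inv_cancel_left₀ h10 _
      have hx : C 0 0 * -((C 1 0)⁻¹ * C 1 2) + C 0 2 = -((C 1 0)⁻¹ * C 1 2) := by
        have hp1 : p * (C 0 0 * -((C 1 0)⁻¹ * C 1 2) + C 0 2 - -((C 1 0)⁻¹ * C 1 2)) = 0 := by
          calc p * (C 0 0 * -((C 1 0)⁻¹ * C 1 2) + C 0 2 - -((C 1 0)⁻¹ * C 1 2))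
              = (p * (C 0 0 - 1)) * -((C 1 0)⁻¹ * C 1 2) + p * C 0 2 := by noncomm_ring
            _ = -(q * C 1 0) * -((C 1 0)⁻¹ * C 1 2) + -(q * C 1 2) := by rw [d00, d02]
            _ = q * (C 1 0 * ((C 1 0)⁻¹ * C 1 2)) + -(q * C 1 2) := by noncomm_ring
            _ = 0 := by rw [hkey, add_neg_cancel]
        have := (mul_eq_zero.mp hp1).resolve_left hp
        exact sub_eq_zero.mp this
      unfold affAct
      rw [Prod.mk.injEq]
      constructor
      · rw [mul_zero, add_zero, hx]
      · rw [mul_zero, add_zero, mul_neg, hkey, neg_add_cancel]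

lemma machine {Γ : Subgroup U3} (haff : ∀ g ∈ Γ, IsAffMat g.val)
    (hfree : ActsFreely Γ) {g h : U3} (hgΓ : g ∈ Γ) (hhΓ : h ∈ Γ)
    {p q : K} (hpq : ¬(p = 0 ∧ q = 0))
    (cg : Cov p q g.val) (ch : Cov p q h.val) :
    (g.val * h.val) 0 1 = (h.val * g.val) 0 1 ∧
    (g.val * h.val) 1 0 = (h.val * g.val) 1 0 := by
  have hag := haff g hgΓ
  have hah := haff h hhΓ
  have hgh : IsAffMat (g * h).val := by rw [Units.val_mul]; exact affine_mul hag hah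
  have hhg : IsAffMat (h * g).val := by rw [Units.val_mul]; exact affine_mul hah hag
  have cgh : Cov p q (g * h).val ∧ tv p q (g * h).val = tv p q g.val + tv p q h.val := by
    rw [Units.val_mul]; exact cov_mul hah cg ch
  have chg : Cov p q (h * g).val ∧ tv p q (h * g).val = tv p q h.val + tv p q g.val := by
    rw [Units.val_mul]; exact cov_mul hag ch cg
  have chginv := cov_inv hhg chg.1
  set k : U3 := (g * h) * (h * g)⁻¹ with hk
  have hkΓ : k ∈ Γ := mul_mem (mul_mem hgΓ hhΓ) (inv_mem (mul_mem hhΓ hgΓ))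
  have hka : IsAffMat k.val := by
    rw [hk, Units.val_mul]; exact affine_mul hgh (affine_inv hhg)
  have ck : Cov p q k.val ∧ tv p q k.val = 0 := by
    have := cov_mul (affine_inv hhg) cgh.1 chginv.1
    rw [← Units.val_mul, ← hk] at this
    refine ⟨this.1, ?_⟩
    rw [this.2, cgh.2, chginv.2, chg.2]
    abel
  by_cases hk1 : k = 1
  · have hcomm : g * h = h * g := mul_inv_eq_one.mp (hk ▸ hk1)
    constructor <;> rw [← Units.val_mul, ← Units.val_mul h g, hcomm]
  · have hAI : k.val 0 0 = 1 ∧ k.val 0 1 = 0 ∧ k.val 1 0 = 0 ∧ k.val 1 1 = 1 := by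
      by_contra hA
      exact hk1 (hfree k hkΓ (cov_fixed hka hpq ck.1 ck.2 hA))
    have hval : (g * h).val = k.val * (h * g).val := by
      have : k * (h * g) = g * h := by rw [hk]; group
      rw [← this, Units.val_mul]
    rw [← Units.val_mul, ← Units.val_mul h g]
    constructor
    · rw [hval, mul3, hAI.1, hAI.2.1, hhg.2.1, mul_zero, one_mul, zero_mul, add_zero,
        add_zero]
    · rw [hval, mul3, hAI.2.2.1, hAI.2.2.2, hhg.1, zero_mul, one_mul, mul_zero,
        zero_add, add_zero]

lemma core {Γ : Subgroup U3} (haff : ∀ g ∈ Γ, IsAffMat g.val)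
    (hfree : ActsFreely Γ) {g h : U3} (hgΓ : g ∈ Γ) (hhΓ : h ∈ Γ)
    (hg00 : g.val 0 0 = 1) (hg10 : g.val 1 0 = 0)
    (hh01 : h.val 0 1 = 0) (hh11 : h.val 1 1 = 1)
    (hA : ¬(g.val 0 1 = 0 ∧ g.val 1 1 = 1))
    (hB : ¬(h.val 0 0 = 1 ∧ h.val 1 0 = 0)) : False := by
  have hag := haff g hgΓ
  have hah := haff h hhΓ
  have e00 : (g.val * h.val) 0 0 = h.val 0 0 + g.val 0 1 * h.val 1 0 := by
    rw [mul3, hg00, one_mul, hah.1, mul_zero, add_zero]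
  have e01 : (g.val * h.val) 0 1 = g.val 0 1 := by
    rw [mul3, hh01, mul_zero, hh11, mul_one, hah.2.1, mul_zero, zero_add, add_zero]
  have e10 : (g.val * h.val) 1 0 = g.val 1 1 * h.val 1 0 := by
    rw [mul3, hg10, zero_mul, hah.1, mul_zero, zero_add, add_zero]
  have e11 : (g.val * h.val) 1 1 = g.val 1 1 := by
    rw [mul3, hg10, zero_mul, hh11, mul_one, hah.2.1, mul_zero, zero_add, add_zero]
  have f01 : (h.val * g.val) 0 1 = h.val 0 0 * g.val 0 1 := by
    rw [mul3, hh01, zero_mul, hag.2.1, mul_zero, add_zero, add_zero]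
  have f10 : (h.val * g.val) 1 0 = h.val 1 0 := by
    rw [mul3, hg00, mul_one, hg10, mul_zero, hag.1, mul_zero, add_zero, add_zero]
  by_cases ha : g.val 0 1 = 0
  · have hb1 : g.val 1 1 ≠ 1 := fun hb => hA ⟨ha, hb⟩
    by_cases hc : h.val 0 0 = 1
    · -- φ = (1,0); machine gives b*d = d, so b = 1, contradiction
      have hd : h.val 1 0 ≠ 0 := fun hd => hB ⟨hc, hd⟩
      have cg : Cov 1 0 g.val := by
        constructor
        · rw [hg00, mul_one, zero_mul, add_zero]
        · rw [ha, mul_zero, zero_mul, add_zero]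
      have ch : Cov 1 0 h.val := by
        constructor
        · rw [hc, mul_one, zero_mul, add_zero]
        · rw [hh01, mul_zero, zero_mul, add_zero]
      have hm := (machine haff hfree hgΓ hhΓ (fun hx => one_ne_zero hx.1) cg ch).2
      rw [e10, f10] at hm
      have h0 : (g.val 1 1 - 1) * h.val 1 0 = 0 := by
        calc (g.val 1 1 - 1) * h.val 1 0 = g.val 1 1 * h.val 1 0 - h.val 1 0 := by
              noncomm_ring
          _ = 0 := by rw [hm, sub_self]
      rcases mul_eq_zero.mp h0 with h1 | h1
      · exact hb1 (by rwa [sub_eq_zero] at h1)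
      · exact hd h1
    · -- fixed point for g*h
      obtain ⟨v1, hv1⟩ : ∃ v : K, v = (g.val * h.val) 0 2 := ⟨_, rfl⟩
      obtain ⟨v2, hv2⟩ : ∃ v : K, v = (g.val * h.val) 1 2 := ⟨_, rfl⟩
      obtain ⟨x, hx⟩ : ∃ x : K, x = (h.val 0 0 - 1)⁻¹ * (-v1) := ⟨_, rfl⟩
      obtain ⟨y, hy⟩ : ∃ y : K,
          y = (g.val 1 1 - 1)⁻¹ * (-((g.val 1 1 * h.val 1 0) * x + v2)) := ⟨_, rfl⟩
      have hcx : (h.val 0 0 - 1) * x = -v1 := by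
        rw [hx, mul_inv_cancel_left₀ (sub_ne_zero.mpr hc)]
      have hby : (g.val 1 1 - 1) * y = -((g.val 1 1 * h.val 1 0) * x + v2) := by
        rw [hy, mul_inv_cancel_left₀ (sub_ne_zero.mpr hb1)]
      have hfix := hfree (g * h) (mul_mem hgΓ hhΓ) ⟨(x, y), by
        rw [Units.val_mul]
        unfold affAct
        rw [Prod.mk.injEq]
        constructor
        · show (g.val * h.val) 0 0 * x + (g.val * h.val) 0 1 * y + (g.val * h.val) 0 2 = x
          rw [e00, e01, ← hv1, ha, zero_mul, add_zero, zero_mul, add_zero]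
          calc h.val 0 0 * x + v1 = ((h.val 0 0 - 1) * x + v1) + x := by noncomm_ring
            _ = (-v1 + v1) + x := by rw [hcx]
            _ = x := by abel
        · show (g.val * h.val) 1 0 * x + (g.val * h.val) 1 1 * y + (g.val * h.val) 1 2 = y
          rw [e10, e11, ← hv2]
          calc g.val 1 1 * h.val 1 0 * x + g.val 1 1 * y + v2
              = ((g.val 1 1 - 1) * y) + ((g.val 1 1 * h.val 1 0) * x + v2) + y := by
                noncomm_ring
            _ = -((g.val 1 1 * h.val 1 0) * x + v2) +
                  ((g.val 1 1 * h.val 1 0) * x + v2) + y := by rw [hby]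
            _ = y := by noncomm_ring⟩
      have : (g.val * h.val) 1 1 = (1 : Q3) 1 1 := by
        rw [← Units.val_mul]
        exact entry_eq (by rw [hfix, Units.val_one]) 1 1
      rw [e11, Matrix.one_apply_eq] at this
      exact hb1 this
  · -- a ≠ 0
    by_cases hd2 : h.val 1 0 = (g.val 1 1 - 1) * (g.val 0 1)⁻¹ * (h.val 0 0 - 1)
    · -- covector branch
      have hmach : g.val 0 1 = h.val 0 0 * g.val 0 1 := by
        by_cases hb : g.val 1 1 = 1
        · -- φ = (0,1)
          have hd0 : h.val 1 0 = 0 := by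
            rw [hd2, hb, sub_self, zero_mul, zero_mul]
          have cg : Cov 0 1 g.val := by
            constructor
            · rw [zero_mul, one_mul, zero_add, hg10]
            · rw [zero_mul, one_mul, zero_add, hb]
          have ch : Cov 0 1 h.val := by
            constructor
            · rw [zero_mul, one_mul, zero_add, hd0]
            · rw [zero_mul, one_mul, zero_add, hh11]
          have hm := (machine haff hfree hgΓ hhΓ (fun hx => one_ne_zero hx.2) cg ch).1
          rw [e01, f01] at hm
          exact hm
        · -- φ = (1, a*(1-b)⁻¹)
          have h1b : (1 : K) - g.val 1 1 ≠ 0 := sub_ne_zero.mpr (Ne.symm hb)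
          have hm1 : ((1 : K) - g.val 1 1)⁻¹ * (g.val 1 1 - 1) = -1 := by
            rw [← neg_sub (1 : K) (g.val 1 1), mul_neg, inv_mul_cancel₀ h1b]
          have cg : Cov 1 (g.val 0 1 * (1 - g.val 1 1)⁻¹) g.val := by
            constructor
            · rw [hg00, mul_one, hg10, mul_zero, add_zero]
            · rw [one_mul]
              have h1 : g.val 0 1 * (1 - g.val 1 1)⁻¹ * (1 - g.val 1 1) = g.val 0 1 :=
                inv_mul_cancel_right₀ h1b _
              calc g.val 0 1 + g.val 0 1 * (1 - g.val 1 1)⁻¹ * g.val 1 1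
                  = g.val 0 1 * (1 - g.val 1 1)⁻¹ * (1 - g.val 1 1) +
                      g.val 0 1 * (1 - g.val 1 1)⁻¹ * g.val 1 1 := by rw [h1]
                _ = g.val 0 1 * (1 - g.val 1 1)⁻¹ := by noncomm_ring
          have ch : Cov 1 (g.val 0 1 * (1 - g.val 1 1)⁻¹) h.val := by
            constructor
            · rw [one_mul, hd2]
              have s1 : g.val 0 1 * (1 - g.val 1 1)⁻¹ *
                    ((g.val 1 1 - 1) * (g.val 0 1)⁻¹ * (h.val 0 0 - 1))
                  = g.val 0 1 * ((1 - g.val 1 1)⁻¹ * (g.val 1 1 - 1)) *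
                      ((g.val 0 1)⁻¹ * (h.val 0 0 - 1)) := by noncomm_ring
              rw [s1, hm1, mul_neg_one, neg_mul, mul_inv_cancel_left₀ ha]
              noncomm_ring
            · rw [one_mul, hh01, hh11, mul_one, zero_add]
          have hm := (machine haff hfree hgΓ hhΓ (fun hx => one_ne_zero hx.1) cg ch).1
          rw [e01, f01] at hm
          exact hm
      have hc1 : h.val 0 0 = 1 := by
        have h0 : (h.val 0 0 - 1) * g.val 0 1 = 0 := by
          calc (h.val 0 0 - 1) * g.val 0 1 = h.val 0 0 * g.val 0 1 - g.val 0 1 := by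
                noncomm_ring
            _ = 0 := by rw [← hmach, sub_self]
        rcases mul_eq_zero.mp h0 with h1 | h1
        · rwa [sub_eq_zero] at h1
        · exact absurd h1 ha
      have hd0 : h.val 1 0 = 0 := by
        rw [hd2, hc1, sub_self, mul_zero]
      exact hB ⟨hc1, hd0⟩
    · -- invertible branch: fixed point for g*h
      obtain ⟨v1, hv1⟩ : ∃ v : K, v = (g.val * h.val) 0 2 := ⟨_, rfl⟩
      obtain ⟨v2, hv2⟩ : ∃ v : K, v = (g.val * h.val) 1 2 := ⟨_, rfl⟩
      have heN : g.val 1 1 * h.val 1 0 -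
          (g.val 1 1 - 1) * (g.val 0 1)⁻¹ * (h.val 0 0 + g.val 0 1 * h.val 1 0 - 1) ≠ 0 := by
        have expand : (g.val 1 1 - 1) * (g.val 0 1)⁻¹ *
              (h.val 0 0 + g.val 0 1 * h.val 1 0 - 1)
            = (g.val 1 1 - 1) * ((g.val 0 1)⁻¹ * (g.val 0 1 * h.val 1 0)) +
              (g.val 1 1 - 1) * (g.val 0 1)⁻¹ * (h.val 0 0 - 1) := by noncomm_ring
        rw [expand, inv_mul_cancel_left₀ ha]
        intro hzero
        apply hd2
        have h2 : h.val 1 0 - (g.val 1 1 - 1) * (g.val 0 1)⁻¹ * (h.val 0 0 - 1) = 0 := by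
          calc h.val 1 0 - (g.val 1 1 - 1) * (g.val 0 1)⁻¹ * (h.val 0 0 - 1)
              = g.val 1 1 * h.val 1 0 - ((g.val 1 1 - 1) * h.val 1 0 +
                  (g.val 1 1 - 1) * (g.val 0 1)⁻¹ * (h.val 0 0 - 1)) := by noncomm_ring
            _ = 0 := hzero
        exact sub_eq_zero.mp h2
      obtain ⟨x, hx⟩ : ∃ x : K, x = (g.val 1 1 * h.val 1 0 - (g.val 1 1 - 1) * (g.val 0 1)⁻¹ *
          (h.val 0 0 + g.val 0 1 * h.val 1 0 - 1))⁻¹ *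
          ((g.val 1 1 - 1) * ((g.val 0 1)⁻¹ * v1) - v2) := ⟨_, rfl⟩
      obtain ⟨y, hy⟩ : ∃ y : K,
          y = -((g.val 0 1)⁻¹ * ((h.val 0 0 + g.val 0 1 * h.val 1 0 - 1) * x + v1)) := ⟨_, rfl⟩
      have hay : g.val 0 1 * y = -((h.val 0 0 + g.val 0 1 * h.val 1 0 - 1) * x + v1) := by
        rw [hy, mul_neg, mul_inv_cancel_left₀ ha]
      have hEx : (g.val 1 1 * h.val 1 0 - (g.val 1 1 - 1) * (g.val 0 1)⁻¹ *
          (h.val 0 0 + g.val 0 1 * h.val 1 0 - 1)) * x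
          = (g.val 1 1 - 1) * ((g.val 0 1)⁻¹ * v1) - v2 := by
        rw [hx, mul_inv_cancel_left₀ heN]
      have hfix := hfree (g * h) (mul_mem hgΓ hhΓ) ⟨(x, y), by
        rw [Units.val_mul]
        unfold affAct
        rw [Prod.mk.injEq]
        constructor
        · show (g.val * h.val) 0 0 * x + (g.val * h.val) 0 1 * y + (g.val * h.val) 0 2 = x
          rw [e00, e01, ← hv1]
          calc (h.val 0 0 + g.val 0 1 * h.val 1 0) * x + g.val 0 1 * y + v1
              = ((h.val 0 0 + g.val 0 1 * h.val 1 0 - 1) * x + v1) + g.val 0 1 * y + x := by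
                noncomm_ring
            _ = ((h.val 0 0 + g.val 0 1 * h.val 1 0 - 1) * x + v1) +
                  -((h.val 0 0 + g.val 0 1 * h.val 1 0 - 1) * x + v1) + x := by rw [hay]
            _ = x := by noncomm_ring
        · show (g.val * h.val) 1 0 * x + (g.val * h.val) 1 1 * y + (g.val * h.val) 1 2 = y
          rw [e10, e11, ← hv2]
          have hby : (g.val 1 1 - 1) * y
              = -((g.val 1 1 - 1) * ((g.val 0 1)⁻¹ *
                  ((h.val 0 0 + g.val 0 1 * h.val 1 0 - 1) * x + v1))) := by
            rw [hy, mul_neg]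
          calc g.val 1 1 * h.val 1 0 * x + g.val 1 1 * y + v2
              = ((g.val 1 1 - 1) * y) + (g.val 1 1 * h.val 1 0 * x + v2) + y := by
                noncomm_ring
            _ = -((g.val 1 1 - 1) * ((g.val 0 1)⁻¹ *
                  ((h.val 0 0 + g.val 0 1 * h.val 1 0 - 1) * x + v1))) +
                  (g.val 1 1 * h.val 1 0 * x + v2) + y := by rw [hby]
            _ = ((g.val 1 1 * h.val 1 0 - (g.val 1 1 - 1) * (g.val 0 1)⁻¹ *
                  (h.val 0 0 + g.val 0 1 * h.val 1 0 - 1)) * x -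
                  ((g.val 1 1 - 1) * ((g.val 0 1)⁻¹ * v1) - v2)) + y := by noncomm_ring
            _ = (((g.val 1 1 - 1) * ((g.val 0 1)⁻¹ * v1) - v2) -
                  ((g.val 1 1 - 1) * ((g.val 0 1)⁻¹ * v1) - v2)) + y := by rw [hEx]
            _ = y := by noncomm_ring⟩
      have hcon : (g.val * h.val) 0 1 = (1 : Q3) 0 1 := by
        rw [← Units.val_mul]
        exact entry_eq (by rw [hfix, Units.val_one]) 0 1
      rw [e01, Matrix.one_apply_ne (by decide)] at hcon
      exact ha hcon

def M3 (a b r c d s : K) : Q3 := fun i j =>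
  if i = 0 then (if j = 0 then a else if j = 1 then b else r)
  else if i = 1 then (if j = 0 then c else if j = 1 then d else s)
  else (if j = 0 then 0 else if j = 1 then 0 else 1)

lemma M3_affine {a b r c d s : K} : IsAffMat (M3 a b r c d s) := ⟨rfl, rfl, rfl⟩

lemma M3_one : M3 1 0 0 0 1 0 = (1 : Q3) := by
  refine Matrix.ext fun i j => ?_
  fin_cases i <;> fin_cases j <;> simp [M3, Matrix.one_apply]

lemma M3_mul (a b r c d s a' b' r' c' d' s' : K) :
    M3 a b r c d s * M3 a' b' r' c' d' s' =
      M3 (a * a' + b * c') (a * b' + b * d') (a * r' + b * s' + r)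
        (c * a' + d * c') (c * b' + d * d') (c * r' + d * s' + s) := by
  refine Matrix.ext fun i j => ?_
  rw [mul3]
  fin_cases i <;> fin_cases j <;>
    simp [M3] <;> noncomm_ring

lemma unit_L (m : K) : ∃ u : U3, u.val = M3 1 0 0 m 1 0 ∧ (u⁻¹).val = M3 1 0 0 (-m) 1 0 := by
  refine ⟨⟨M3 1 0 0 m 1 0, M3 1 0 0 (-m) 1 0, ?_, ?_⟩, rfl, rfl⟩
  · rw [M3_mul]
    simp only [one_mul, mul_one, mul_zero, zero_mul, add_zero, zero_add, add_neg_cancel,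
      neg_add_cancel]
    exact M3_one
  · rw [M3_mul]
    simp only [one_mul, mul_one, mul_zero, zero_mul, add_zero, zero_add, add_neg_cancel,
      neg_add_cancel]
    exact M3_one

lemma unit_U (t : K) : ∃ u : U3, u.val = M3 1 t 0 0 1 0 := by
  refine ⟨⟨M3 1 t 0 0 1 0, M3 1 (-t) 0 0 1 0, ?_, ?_⟩, rfl⟩
  · rw [M3_mul]
    simp only [one_mul, mul_one, mul_zero, zero_mul, add_zero, zero_add, add_neg_cancel,
      neg_add_cancel]
    exact M3_one
  · rw [M3_mul]
    simp only [one_mul, mul_one, mul_zero, zero_mul, add_zero, zero_add, add_neg_cancel,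
      neg_add_cancel]
    exact M3_one

lemma unit_D (α β : K) (hα : α ≠ 0) (hβ : β ≠ 0) : ∃ u : U3, u.val = M3 α 0 0 0 β 0 := by
  refine ⟨⟨M3 α 0 0 0 β 0, M3 α⁻¹ 0 0 0 β⁻¹ 0, ?_, ?_⟩, rfl⟩
  · rw [M3_mul]
    simp only [mul_zero, zero_mul, add_zero, zero_add, mul_inv_cancel₀ hα,
      mul_inv_cancel₀ hβ]
    exact M3_one
  · rw [M3_mul]
    simp only [mul_zero, zero_mul, add_zero, zero_add, inv_mul_cancel₀ hα,
      inv_mul_cancel₀ hβ]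
    exact M3_one

lemma unit_W : ∃ u : U3, u.val = M3 0 1 0 1 0 0 := by
  refine ⟨⟨M3 0 1 0 1 0 0, M3 0 1 0 1 0 0, ?_, ?_⟩, rfl⟩ <;>
  · rw [M3_mul]
    simp only [one_mul, mul_one, mul_zero, zero_mul, add_zero, zero_add]
    exact M3_one

lemma basis_unit (u1 u2 w1 w2 : K) (hu : ¬(u1 = 0 ∧ u2 = 0))
    (hind : ∀ t : K, ¬(w1 = u1 * t ∧ w2 = u2 * t)) :
    ∃ Q : U3, Q.val = M3 u1 w1 0 u2 w2 0 := by
  by_cases h1 : u1 = 0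
  · have h2 : u2 ≠ 0 := fun h => hu ⟨h1, h⟩
    have hw1 : w1 ≠ 0 := by
      intro hw
      exact hind (u2⁻¹ * w2) ⟨by rw [hw, h1, zero_mul], by rw [mul_inv_cancel_left₀ h2]⟩
    obtain ⟨uW, hW⟩ := unit_W
    obtain ⟨uD, hD⟩ := unit_D u2 w1 h2 hw1
    obtain ⟨uU, hU⟩ := unit_U (u2⁻¹ * w2)
    refine ⟨uW * (uD * uU), ?_⟩
    rw [Units.val_mul, Units.val_mul, hW, hD, hU, M3_mul]
    simp only [one_mul, mul_one, mul_zero, zero_mul, add_zero, zero_add,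
      mul_inv_cancel_left₀ h2]
    rw [M3_mul]
    simp only [one_mul, mul_one, mul_zero, zero_mul, add_zero, zero_add, h1]
  · have he : w2 - u2 * (u1⁻¹ * w1) ≠ 0 := by
      intro hz
      exact hind (u1⁻¹ * w1) ⟨by rw [mul_inv_cancel_left₀ h1], sub_eq_zero.mp hz⟩
    obtain ⟨uL, hL, _⟩ := unit_L (u2 * u1⁻¹)
    obtain ⟨uD, hD⟩ := unit_D u1 (w2 - u2 * (u1⁻¹ * w1)) h1 he
    obtain ⟨uU, hU⟩ := unit_U (u1⁻¹ * w1)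
    refine ⟨uL * (uD * uU), ?_⟩
    rw [Units.val_mul, Units.val_mul, hL, hD, hU, M3_mul]
    simp only [one_mul, mul_one, mul_zero, zero_mul, add_zero, zero_add,
      mul_inv_cancel_left₀ h1]
    rw [M3_mul]
    simp only [one_mul, mul_one, mul_zero, zero_mul, add_zero, zero_add]
    have hm1 : u2 * u1⁻¹ * u1 = u2 := inv_mul_cancel_right₀ h1 u2
    have hm2 : u2 * u1⁻¹ * w1 + (w2 - u2 * (u1⁻¹ * w1)) = w2 := by
      rw [mul_assoc]
      abel
    rw [hm1, hm2]

lemma conj_col {gU Q : U3} (hga : IsAffMat gU.val) (j : Fin 3) (z1 z2 : K)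
    (h0 : Q.val 0 j = z1) (h1 : Q.val 1 j = z2) (h2 : Q.val 2 j = 0)
    (k1 : gU.val 0 0 * z1 + gU.val 0 1 * z2 = z1)
    (k2 : gU.val 1 0 * z1 + gU.val 1 1 * z2 = z2)
    (i : Fin 3) : (Q⁻¹ * gU * Q).val i j = (1 : Q3) i j := by
  have hcol0 : (gU.val * Q.val) 0 j = Q.val 0 j := by
    rw [mul3, h0, h1, h2, mul_zero, add_zero, k1]
  have hcol1 : (gU.val * Q.val) 1 j = Q.val 1 j := by
    rw [mul3, h0, h1, h2, mul_zero, add_zero, k2]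
  have hcol2 : (gU.val * Q.val) 2 j = Q.val 2 j := by
    rw [mul3, hga.1, hga.2.1, hga.2.2, zero_mul, zero_mul, one_mul, zero_add, zero_add]
  have hv : (Q⁻¹ * gU * Q).val = (Q⁻¹).val * (gU.val * Q.val) := by
    rw [Units.val_mul, Units.val_mul, mul_assoc]
  have hQiQ : (Q⁻¹).val * Q.val = 1 := Q.inv_mul
  rw [hv, mul3, hcol0, hcol1, hcol2, ← mul3, hQiQ]

lemma conj_id {g' Q : U3} (hQia : IsAffMat (Q⁻¹).val) (hg'a : IsAffMat g'.val)
    (hI00 : g'.val 0 0 = 1) (hI01 : g'.val 0 1 = 0)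
    (hI10 : g'.val 1 0 = 0) (hI11 : g'.val 1 1 = 1)
    (i j : Fin 3) (hj : j ≠ 2) :
    (Q * g' * Q⁻¹).val i j = (1 : Q3) i j := by
  have hPi2 : (Q⁻¹).val 2 j = 0 := by
    fin_cases j
    · exact hQia.1
    · exact hQia.2.1
    · exact absurd rfl hj
  have hNPi0 : (g'.val * (Q⁻¹).val) 0 j = (Q⁻¹).val 0 j := by
    rw [mul3, hI00, hI01, hPi2, one_mul, zero_mul, mul_zero, add_zero, add_zero]
  have hNPi1 : (g'.val * (Q⁻¹).val) 1 j = (Q⁻¹).val 1 j := by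
    rw [mul3, hI10, hI11, hPi2, zero_mul, one_mul, mul_zero, zero_add, add_zero]
  have hNPi2 : (g'.val * (Q⁻¹).val) 2 j = (Q⁻¹).val 2 j := by
    rw [mul3, hg'a.1, hg'a.2.1, hg'a.2.2, zero_mul, zero_mul, one_mul, zero_add, zero_add]
  have hv : (Q * g' * Q⁻¹).val = Q.val * (g'.val * (Q⁻¹).val) := by
    rw [Units.val_mul, Units.val_mul, mul_assoc]
  have hQQi : Q.val * (Q⁻¹).val = 1 := Q.mul_inv
  rw [hv, mul3, hNPi0, hNPi1, hNPi2, ← mul3, hQQi]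

lemma no_fix_kernel {Γ : Subgroup U3} (hfree : ActsFreely Γ) {g : U3} (hg : g ∈ Γ)
    (hgne : g ≠ 1) :
    ∃ z1 z2 : K, ¬(z1 = 0 ∧ z2 = 0) ∧ g.val 0 0 * z1 + g.val 0 1 * z2 = z1 ∧
      g.val 1 0 * z1 + g.val 1 1 * z2 = z2 := by
  rcases solve2 (g.val 0 0 - 1) (g.val 0 1) (g.val 1 0) (g.val 1 1 - 1) with
    hs | ⟨z1, z2, hz, k1, k2⟩
  · exfalso
    obtain ⟨x, y, e1, e2⟩ := hs (-(g.val 0 2)) (-(g.val 1 2))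
    apply hgne
    apply hfree g hg
    refine ⟨(x, y), ?_⟩
    unfold affAct
    rw [Prod.mk.injEq]
    constructor
    · calc g.val 0 0 * x + g.val 0 1 * y + g.val 0 2
          = ((g.val 0 0 - 1) * x + g.val 0 1 * y) + g.val 0 2 + x := by noncomm_ring
        _ = -(g.val 0 2) + g.val 0 2 + x := by rw [e1]
        _ = x := by abel
    · calc g.val 1 0 * x + g.val 1 1 * y + g.val 1 2
          = ((g.val 1 0) * x + (g.val 1 1 - 1) * y) + g.val 1 2 + y := by noncomm_ring
        _ = -(g.val 1 2) + g.val 1 2 + y := by rw [e2]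
        _ = y := by abel
  · refine ⟨z1, z2, hz, ?_, ?_⟩
    · calc g.val 0 0 * z1 + g.val 0 1 * z2
          = ((g.val 0 0 - 1) * z1 + g.val 0 1 * z2) + z1 := by noncomm_ring
        _ = z1 := by rw [k1, zero_add]
    · calc g.val 1 0 * z1 + g.val 1 1 * z2
          = (g.val 1 0 * z1 + (g.val 1 1 - 1) * z2) + z2 := by noncomm_ring
        _ = z2 := by rw [k2, zero_add]

def conjSub (Γ : Subgroup U3) (Q : U3) : Subgroup U3 :=
  Γ.map (MulAut.conj Q⁻¹).toMonoidHom

lemma mem_conjSub {Γ : Subgroup U3} {Q g : U3} (hg : g ∈ Γ) :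
    Q⁻¹ * g * Q ∈ conjSub Γ Q := by
  refine ⟨g, hg, ?_⟩
  show Q⁻¹ * g * Q⁻¹⁻¹ = Q⁻¹ * g * Q
  rw [inv_inv]

lemma conjSub_spec {Γ : Subgroup U3} {Q : U3} {x : U3} (hx : x ∈ conjSub Γ Q) :
    ∃ g ∈ Γ, x = Q⁻¹ * g * Q := by
  obtain ⟨g, hg, hgx⟩ := hx
  refine ⟨g, hg, ?_⟩
  rw [← hgx]
  show (MulAut.conj Q⁻¹) g = Q⁻¹ * g * Q
  rw [MulAut.conj_apply, inv_inv]

lemma conj_affine {Γ : Subgroup U3} {Q : U3} (haff : ∀ g ∈ Γ, IsAffMat g.val)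
    (hQa : IsAffMat Q.val) : ∀ x ∈ conjSub Γ Q, IsAffMat x.val := by
  intro x hx
  obtain ⟨g, hg, hxe⟩ := conjSub_spec hx
  rw [hxe, Units.val_mul, Units.val_mul]
  exact affine_mul (affine_mul (affine_inv hQa) (haff g hg)) hQa

lemma conj_free {Γ : Subgroup U3} {Q : U3} (haff : ∀ g ∈ Γ, IsAffMat g.val)
    (hfree : ActsFreely Γ) (hQa : IsAffMat Q.val) : ActsFreely (conjSub Γ Q) := by
  intro x hx hex
  obtain ⟨pp, hpp⟩ := hex
  obtain ⟨g, hgΓ, hxe⟩ := conjSub_spec hx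
  have hxa : IsAffMat x.val := conj_affine haff hQa x hx
  have key : affAct g.val (affAct Q.val pp) = affAct Q.val pp := by
    have h1 : g * Q = Q * x := by rw [hxe]; group
    calc affAct g.val (affAct Q.val pp) = affAct (g.val * Q.val) pp :=
          (affAct_mul hQa pp).symm
      _ = affAct ((g * Q).val) pp := by rw [Units.val_mul]
      _ = affAct ((Q * x).val) pp := by rw [h1]
      _ = affAct (Q.val * x.val) pp := by rw [Units.val_mul]
      _ = affAct Q.val (affAct x.val pp) := affAct_mul hxa pp
      _ = affAct Q.val pp := by rw [hpp]
  have hg1 := hfree g hgΓ ⟨affAct Q.val pp, key⟩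
  rw [hxe, hg1, mul_one, inv_mul_cancel]

lemma buildP {Γ : Subgroup U3} (haff : ∀ g ∈ Γ, IsAffMat g.val) (u1 u2 : K)
    (claim : ∀ h ∈ Γ, h.val 0 0 * u1 + h.val 0 1 * u2 = u1 ∧
        h.val 1 0 * u1 + h.val 1 1 * u2 = u2)
    {P : U3} (hPa : IsAffMat P.val)
    (hP00 : P.val 0 0 = u1) (hP10 : P.val 1 0 = u2) (hP20 : P.val 2 0 = 0) :
    ∀ g ∈ Γ, InG2 ((P⁻¹ * g * P).val) := by
  intro g hgΓ
  have hga := haff g hgΓ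
  have hcc := conj_col hga 0 u1 u2 hP00 hP10 hP20 (claim g hgΓ).1 (claim g hgΓ).2
  have h00 : (P⁻¹ * g * P).val 0 0 = 1 := by rw [hcc 0, Matrix.one_apply_eq]
  have h10 : (P⁻¹ * g * P).val 1 0 = 0 := by rw [hcc 1, Matrix.one_apply_ne (by decide)]
  have hca : IsAffMat ((P⁻¹ * g * P).val) := by
    rw [Units.val_mul, Units.val_mul]
    exact affine_mul (affine_mul (affine_inv hPa) hga) hPa
  exact ⟨h00, h10, fun h11 => row_ne_zero hca 1 (by decide) h10 h11, hca⟩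

end AffAux

open AffAux

/-- If `Γ ⊆ Aff(2,ℍ)` acts freely on ℍ², then `Γ` is conjugate in Aff(2,ℍ) to a
subgroup of `G₂`. -/
theorem conjugate_to_subgroup_of_G2
    (Γ : Subgroup (Matrix (Fin 3) (Fin 3) ℍ[ℝ])ˣ)
    (haff : ∀ g ∈ Γ, IsAffMat g.val)
    (hfree : ActsFreely Γ) :
    ∃ P : (Matrix (Fin 3) (Fin 3) ℍ[ℝ])ˣ, IsAffMat P.val ∧
      ∀ g ∈ Γ, InG2 ((P⁻¹ * g * P).val) := by
  classical
  by_cases hex : ∃ g ∈ Γ, ¬(g.val 0 0 = 1 ∧ g.val 1 0 = 0)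
  · obtain ⟨g₀, hg₀Γ, hg₀⟩ := hex
    have hg₀ne : g₀ ≠ 1 := by
      intro h
      apply hg₀
      rw [h, Units.val_one]
      exact ⟨Matrix.one_apply_eq _, Matrix.one_apply_ne (by decide)⟩
    obtain ⟨u1, u2, hu, hk1, hk2⟩ := no_fix_kernel hfree hg₀Γ hg₀ne
    have claim : ∀ h ∈ Γ, h.val 0 0 * u1 + h.val 0 1 * u2 = u1 ∧
        h.val 1 0 * u1 + h.val 1 1 * u2 = u2 := by
      intro h hhΓ
      by_contra hcl
      have hhne : h ≠ 1 := by
        intro h1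
        apply hcl
        rw [h1, Units.val_one]
        constructor
        · rw [Matrix.one_apply_eq, Matrix.one_apply_ne (by decide), one_mul, zero_mul,
            add_zero]
        · rw [Matrix.one_apply_ne (by decide), Matrix.one_apply_eq, zero_mul, one_mul,
            zero_add]
      obtain ⟨w1, w2, hw, hl1, hl2⟩ := no_fix_kernel hfree hhΓ hhne
      have hind : ∀ t : K, ¬(w1 = u1 * t ∧ w2 = u2 * t) := by
        rintro t ⟨e1, e2⟩
        have ht : t ≠ 0 := by
          intro h0
          rw [h0, mul_zero] at e1 e2
          exact hw ⟨e1, e2⟩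
        apply hcl
        constructor
        · have hthis := hl1
          rw [e1, e2] at hthis
          have h2 : (h.val 0 0 * u1 + h.val 0 1 * u2) * t = u1 * t := by
            calc (h.val 0 0 * u1 + h.val 0 1 * u2) * t
                = h.val 0 0 * (u1 * t) + h.val 0 1 * (u2 * t) := by noncomm_ring
              _ = u1 * t := hthis
          exact mul_right_cancel₀ ht h2
        · have hthis := hl2
          rw [e1, e2] at hthis
          have h2 : (h.val 1 0 * u1 + h.val 1 1 * u2) * t = u2 * t := by
            calc (h.val 1 0 * u1 + h.val 1 1 * u2) * t
                = h.val 1 0 * (u1 * t) + h.val 1 1 * (u2 * t) := by noncomm_ring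
              _ = u2 * t := hthis
          exact mul_right_cancel₀ ht h2
      obtain ⟨Q, hQv⟩ := basis_unit u1 u2 w1 w2 hu hind
      have hQa : IsAffMat Q.val := by rw [hQv]; exact M3_affine
      have hQia := affine_inv hQa
      have hQ00 : Q.val 0 0 = u1 := by rw [hQv]; rfl
      have hQ10 : Q.val 1 0 = u2 := by rw [hQv]; rfl
      have hQ20 : Q.val 2 0 = 0 := by rw [hQv]; rfl
      have hQ01 : Q.val 0 1 = w1 := by rw [hQv]; rfl
      have hQ11 : Q.val 1 1 = w2 := by rw [hQv]; rfl
      have hQ21 : Q.val 2 1 = 0 := by rw [hQv]; rfl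
      have haff' := conj_affine (Q := Q) haff hQa
      have hfree' := conj_free (Q := Q) haff hfree hQa
      have hg'mem : Q⁻¹ * g₀ * Q ∈ conjSub Γ Q := mem_conjSub hg₀Γ
      have hh'mem : Q⁻¹ * h * Q ∈ conjSub Γ Q := mem_conjSub hhΓ
      have hg'col := conj_col (haff g₀ hg₀Γ) 0 u1 u2 hQ00 hQ10 hQ20 hk1 hk2
      have hh'col := conj_col (haff h hhΓ) 1 w1 w2 hQ01 hQ11 hQ21 hl1 hl2
      have hg'00 : (Q⁻¹ * g₀ * Q).val 0 0 = 1 := by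
        rw [hg'col 0, Matrix.one_apply_eq]
      have hg'10 : (Q⁻¹ * g₀ * Q).val 1 0 = 0 := by
        rw [hg'col 1, Matrix.one_apply_ne (by decide)]
      have hh'01 : (Q⁻¹ * h * Q).val 0 1 = 0 := by
        rw [hh'col 0, Matrix.one_apply_ne (by decide)]
      have hh'11 : (Q⁻¹ * h * Q).val 1 1 = 1 := by
        rw [hh'col 1, Matrix.one_apply_eq]
      have hA : ¬((Q⁻¹ * g₀ * Q).val 0 1 = 0 ∧ (Q⁻¹ * g₀ * Q).val 1 1 = 1) := by
        rintro ⟨hI01, hI11⟩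
        have hg'a : IsAffMat (Q⁻¹ * g₀ * Q).val := haff' _ hg'mem
        have hid := conj_id hQia hg'a hg'00 hI01 hg'10 hI11
        have hback : Q * (Q⁻¹ * g₀ * Q) * Q⁻¹ = g₀ := by group
        apply hg₀
        constructor
        · have h5 := hid 0 0 (by decide)
          rw [hback] at h5
          rw [h5, Matrix.one_apply_eq]
        · have h5 := hid 1 0 (by decide)
          rw [hback] at h5
          rw [h5, Matrix.one_apply_ne (by decide)]
      have hB : ¬((Q⁻¹ * h * Q).val 0 0 = 1 ∧ (Q⁻¹ * h * Q).val 1 0 = 0) := by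
        rintro ⟨hI00, hI10⟩
        have hh'a : IsAffMat (Q⁻¹ * h * Q).val := haff' _ hh'mem
        have hid := conj_id hQia hh'a hI00 hh'01 hI10 hh'11
        have hback : Q * (Q⁻¹ * h * Q) * Q⁻¹ = h := by group
        apply hcl
        have hAI : ∀ i j : Fin 3, j ≠ 2 → h.val i j = (1 : Q3) i j := by
          intro i j hj
          rw [← hback]
          exact hid i j hj
        constructor
        · rw [hAI 0 0 (by decide), hAI 0 1 (by decide), Matrix.one_apply_eq,
            Matrix.one_apply_ne (by decide), one_mul, zero_mul, add_zero]
        · rw [hAI 1 0 (by decide), hAI 1 1 (by decide), Matrix.one_apply_ne (by decide),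
            Matrix.one_apply_eq, zero_mul, one_mul, zero_add]
      exact core haff' hfree' hg'mem hh'mem hg'00 hg'10 hh'01 hh'11 hA hB
    by_cases hu1 : u1 = 0
    · obtain ⟨P, hPv⟩ := basis_unit u1 u2 1 0 hu (by
        rintro t ⟨e1, e2⟩
        rw [hu1, zero_mul] at e1
        exact one_ne_zero e1)
      exact ⟨P, by rw [hPv]; exact M3_affine,
        buildP haff u1 u2 claim (by rw [hPv]; exact M3_affine) (by rw [hPv]; rfl)
          (by rw [hPv]; rfl) (by rw [hPv]; rfl)⟩
    · obtain ⟨P, hPv⟩ := basis_unit u1 u2 0 1 hu (by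
        rintro t ⟨e1, e2⟩
        rcases mul_eq_zero.mp e1.symm with h0 | h0
        · exact hu1 h0
        · rw [h0, mul_zero] at e2
          exact one_ne_zero e2)
      exact ⟨P, by rw [hPv]; exact M3_affine,
        buildP haff u1 u2 claim (by rw [hPv]; exact M3_affine) (by rw [hPv]; rfl)
          (by rw [hPv]; rfl) (by rw [hPv]; rfl)⟩
  · have hall : ∀ g ∈ Γ, g.val 0 0 = 1 ∧ g.val 1 0 = 0 := by
      intro g hg
      by_contra hc
      exact hex ⟨g, hg, hc⟩
    refine ⟨1, ?_, ?_⟩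
    · rw [Units.val_one]
      exact ⟨Matrix.one_apply_ne (by decide), Matrix.one_apply_ne (by decide),
        Matrix.one_apply_eq _⟩
    · intro g hg
      have h := hall g hg
      have hga := haff g hg
      have h1 : (1 : (Matrix (Fin 3) (Fin 3) ℍ[ℝ])ˣ)⁻¹ * g * 1 = g := by group
      rw [h1]
      exact ⟨h.1, h.2, fun h11 => row_ne_zero hga 1 (by decide) h.2 h11, hga⟩
end
end

section
/- If a subgroup Γ of Aff(2,ℍ) acts freely on ℍ², then Γ is conjugate in Aff(2,ℍ) to a subgroup of G₁ or to a subgroup of G₂, where G₁ is the group of all matrices [[a,b,r],[0,1,s],[0,0,1]] with a,b,r,s ∈ ℍ, a ≠ 0, and G₂ is the group of all matrices [[1,b,r],[0,d,s],[0,0,1]] with b,r,s,d ∈ ℍ, d ≠ 0. -/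
open Quaternion Matrix

noncomputable section

/-- Membership in G₁: matrices `[[a,b,r],[0,1,s],[0,0,1]]` with `a ≠ 0`. -/
def InG1 (M : Matrix (Fin 3) (Fin 3) ℍ[ℝ]) : Prop :=
  M 0 0 ≠ 0 ∧ M 1 0 = 0 ∧ M 1 1 = 1 ∧ IsAffMat M

set_option maxHeartbeats 1000000

section ScalarAux
variable {K : Type*} [DivisionRing K]


lemma ker_fix (a b x y : K) : (a - 1) * x + b * y = 0 ↔ a * x + b * y = x := by
  constructor <;> intro h
  · have : a * x + b * y - x = (a - 1) * x + b * y := by noncomm_ring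
    rw [h] at this; exact sub_eq_zero.mp this
  · have : (a - 1) * x + b * y = a * x + b * y - x := by noncomm_ring
    rw [this, h, sub_self]

lemma coker_fix (a c w1 w2 : K) : w1 * (a - 1) + w2 * c = 0 ↔ w1 * a + w2 * c = w1 := by
  constructor <;> intro h
  · have : w1 * a + w2 * c - w1 = w1 * (a - 1) + w2 * c := by noncomm_ring
    rw [h] at this; exact sub_eq_zero.mp this
  · have : w1 * (a - 1) + w2 * c = w1 * a + w2 * c - w1 := by noncomm_ring
    rw [this, h, sub_self]

/-- a nonzero right kernel of a 2×2 matrix yields a nonzero left kernel -/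
lemma leftker_of_rightker (p q r s : K)
    (h : ∃ x y : K, ¬(x = 0 ∧ y = 0) ∧ p * x + q * y = 0 ∧ r * x + s * y = 0) :
    ∃ w1 w2 : K, ¬(w1 = 0 ∧ w2 = 0) ∧ w1 * p + w2 * r = 0 ∧ w1 * q + w2 * s = 0 := by
  obtain ⟨x, y, hxy, h1, h2⟩ := h
  by_cases hx : x = 0
  · have hy : y ≠ 0 := fun hy => hxy ⟨hx, hy⟩
    subst hx
    rw [mul_zero, zero_add] at h1 h2
    have hq : q = 0 := (mul_eq_zero.mp h1).resolve_right hy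
    have hs : s = 0 := (mul_eq_zero.mp h2).resolve_right hy
    by_cases hr : r = 0
    · exact ⟨0, 1, by simp, by simp [hr], by simp [hs]⟩
    · refine ⟨1, -(p * r⁻¹), by simp, ?_, by simp [hq, hs]⟩
      rw [one_mul, neg_mul, mul_assoc, inv_mul_cancel₀ hr, mul_one, add_neg_cancel]
  · have hp : p = -(q * (y * x⁻¹)) := by
      have e : p * x = -(q * y) := by
        have := h1; rw [add_eq_zero_iff_eq_neg] at this; exact this
      calc p = p * x * x⁻¹ := by rw [mul_assoc, mul_inv_cancel₀ hx, mul_one]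
        _ = -(q * y) * x⁻¹ := by rw [e]
        _ = -(q * (y * x⁻¹)) := by rw [neg_mul, mul_assoc]
    have hr : r = -(s * (y * x⁻¹)) := by
      have e : r * x = -(s * y) := by
        have := h2; rw [add_eq_zero_iff_eq_neg] at this; exact this
      calc r = r * x * x⁻¹ := by rw [mul_assoc, mul_inv_cancel₀ hx, mul_one]
        _ = -(s * y) * x⁻¹ := by rw [e]
        _ = -(s * (y * x⁻¹)) := by rw [neg_mul, mul_assoc]
    by_cases hs : s = 0
    · refine ⟨0, 1, by simp, by simp [hr, hs], by simp [hs]⟩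
    · refine ⟨1, -(q * s⁻¹), by simp, ?_, ?_⟩
      · rw [one_mul, hp, hr, neg_mul, mul_neg, neg_neg, mul_assoc,
          ← mul_assoc s⁻¹ s, inv_mul_cancel₀ hs, one_mul, neg_add_cancel]
      · rw [one_mul, neg_mul, mul_assoc, inv_mul_cancel₀ hs, mul_one, add_neg_cancel]


/-- kernel line is unique for a nonzero singular 2×2 matrix -/
lemma ker_unique (p q r s : K) (hN : ¬(p = 0 ∧ q = 0 ∧ r = 0 ∧ s = 0))
    (x y : K) (hxy : ¬(x = 0 ∧ y = 0)) (h1 : p * x + q * y = 0) (h2 : r * x + s * y = 0)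
    (x' y' : K) (h1' : p * x' + q * y' = 0) (h2' : r * x' + s * y' = 0) :
    ∃ t : K, x' = x * t ∧ y' = y * t := by
  by_cases hx : x = 0
  · have hy : y ≠ 0 := fun hy => hxy ⟨hx, hy⟩
    subst hx
    rw [mul_zero, zero_add] at h1 h2
    have hq : q = 0 := (mul_eq_zero.mp h1).resolve_right hy
    have hs : s = 0 := (mul_eq_zero.mp h2).resolve_right hy
    subst hq; subst hs
    rw [zero_mul, add_zero] at h1' h2'
    have hpr : p ≠ 0 ∨ r ≠ 0 := by
      by_contra hc; push_neg at hc; exact hN ⟨hc.1, rfl, hc.2, rfl⟩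
    have hx' : x' = 0 := by
      rcases hpr with hp | hr
      · exact (mul_eq_zero.mp h1').resolve_left hp
      · exact (mul_eq_zero.mp h2').resolve_left hr
    exact ⟨y⁻¹ * y', by simp [hx'], by rw [← mul_assoc, mul_inv_cancel₀ hy, one_mul]⟩
  · have hqs : ¬(q = 0 ∧ s = 0) := by
      rintro ⟨hq, hs⟩
      subst hq; subst hs
      rw [zero_mul, add_zero] at h1 h2
      have hp : p = 0 := (mul_eq_zero.mp h1).resolve_right hx
      have hr : r = 0 := (mul_eq_zero.mp h2).resolve_right hx
      exact hN ⟨hp, rfl, hr, rfl⟩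
    have hp : p = -(q * (y * x⁻¹)) := by
      have e : p * x = -(q * y) := add_eq_zero_iff_eq_neg.mp h1
      calc p = p * x * x⁻¹ := by rw [mul_assoc, mul_inv_cancel₀ hx, mul_one]
        _ = -(q * (y * x⁻¹)) := by rw [e, neg_mul, mul_assoc]
    have hr : r = -(s * (y * x⁻¹)) := by
      have e : r * x = -(s * y) := add_eq_zero_iff_eq_neg.mp h2
      calc r = r * x * x⁻¹ := by rw [mul_assoc, mul_inv_cancel₀ hx, mul_one]
        _ = -(s * (y * x⁻¹)) := by rw [e, neg_mul, mul_assoc]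
    -- from h1' : q * (y' - y*x⁻¹*x') = 0, h2' : s * (...) = 0
    have key : ∀ u v : K, u = -(v * (y * x⁻¹)) → u * x' + v * y' = 0 →
        v * (y' - y * (x⁻¹ * x')) = 0 := by
      intro u v huv h
      rw [huv] at h
      have : v * (y' - y * (x⁻¹ * x')) = -(v * (y * x⁻¹)) * x' + v * y' := by noncomm_ring
      rw [this, h]
    have keyq := key p q hp h1'
    have keys := key r s hr h2'
    clear key
    have hyy : y' = y * (x⁻¹ * x') := by
      by_cases hq : q = 0
      · have hs : s ≠ 0 := fun hs => hqs ⟨hq, hs⟩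
        have := (mul_eq_zero.mp keys).resolve_left hs
        exact sub_eq_zero.mp this
      · have := (mul_eq_zero.mp keyq).resolve_left hq
        exact sub_eq_zero.mp this
    exact ⟨x⁻¹ * x', by rw [← mul_assoc, mul_inv_cancel₀ hx, one_mul], hyy⟩

/-- cokernel line is unique for a nonzero singular 2×2 matrix -/
lemma coker_unique (p q r s : K) (hN : ¬(p = 0 ∧ q = 0 ∧ r = 0 ∧ s = 0))
    (w1 w2 : K) (hw : ¬(w1 = 0 ∧ w2 = 0)) (h1 : w1 * p + w2 * r = 0) (h2 : w1 * q + w2 * s = 0)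
    (w1' w2' : K) (h1' : w1' * p + w2' * r = 0) (h2' : w1' * q + w2' * s = 0) :
    ∃ t : K, w1' = t * w1 ∧ w2' = t * w2 := by
  by_cases hw2 : w2 = 0
  · have hw1 : w1 ≠ 0 := fun h => hw ⟨h, hw2⟩
    subst hw2
    rw [zero_mul, add_zero] at h1 h2
    have hp : p = 0 := (mul_eq_zero.mp h1).resolve_left hw1
    have hq : q = 0 := (mul_eq_zero.mp h2).resolve_left hw1
    subst hp; subst hq
    rw [mul_zero, zero_add] at h1' h2'
    have hrs : r ≠ 0 ∨ s ≠ 0 := by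
      by_contra hc; push_neg at hc; exact hN ⟨rfl, rfl, hc.1, hc.2⟩
    have hw2' : w2' = 0 := by
      rcases hrs with hr | hs
      · exact (mul_eq_zero.mp h1').resolve_right hr
      · exact (mul_eq_zero.mp h2').resolve_right hs
    exact ⟨w1' * w1⁻¹, by rw [mul_assoc, inv_mul_cancel₀ hw1, mul_one], by simp [hw2']⟩
  · have hpq : ¬(p = 0 ∧ q = 0) := by
      rintro ⟨hp, hq⟩
      subst hp; subst hq
      rw [mul_zero, zero_add] at h1 h2
      have hr : r = 0 := (mul_eq_zero.mp h1).resolve_left hw2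
      have hs : s = 0 := (mul_eq_zero.mp h2).resolve_left hw2
      exact hN ⟨rfl, rfl, hr, hs⟩
    have hr : r = -(w2⁻¹ * w1 * p) := by
      have e : w2 * r = -(w1 * p) := by
        rw [add_comm] at h1; exact add_eq_zero_iff_eq_neg.mp h1
      calc r = w2⁻¹ * (w2 * r) := by rw [← mul_assoc, inv_mul_cancel₀ hw2, one_mul]
        _ = -(w2⁻¹ * w1 * p) := by rw [e, mul_neg, mul_assoc]
    have hs : s = -(w2⁻¹ * w1 * q) := by
      have e : w2 * s = -(w1 * q) := by
        rw [add_comm] at h2; exact add_eq_zero_iff_eq_neg.mp h2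
      calc s = w2⁻¹ * (w2 * s) := by rw [← mul_assoc, inv_mul_cancel₀ hw2, one_mul]
        _ = -(w2⁻¹ * w1 * q) := by rw [e, mul_neg, mul_assoc]
    have key : ∀ u v : K, u = -(w2⁻¹ * w1 * v) → w1' * v + w2' * u = 0 →
        (w1' - w2' * w2⁻¹ * w1) * v = 0 := by
      intro u v huv h
      rw [huv] at h
      have : (w1' - w2' * w2⁻¹ * w1) * v = w1' * v + w2' * -(w2⁻¹ * w1 * v) := by noncomm_ring
      rw [this, h]
    have hww : w1' = w2' * w2⁻¹ * w1 := by
      by_cases hp : p = 0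
      · have hq : q ≠ 0 := fun h => hpq ⟨hp, h⟩
        have := (mul_eq_zero.mp (key s q hs h2')).resolve_right hq
        exact sub_eq_zero.mp this
      · have := (mul_eq_zero.mp (key r p hr h1')).resolve_right hp
        exact sub_eq_zero.mp this
    exact ⟨w2' * w2⁻¹, hww, by rw [mul_assoc, inv_mul_cancel₀ hw2, mul_one]⟩

/-- if ρ annihilates two independent vectors it is zero -/
lemma indep_ann (u1 u2 v1 v2 r1 r2 : K) (hu : ¬(u1 = 0 ∧ u2 = 0))
    (hnd : ¬∃ t : K, v1 = u1 * t ∧ v2 = u2 * t)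
    (hru : r1 * u1 + r2 * u2 = 0) (hrv : r1 * v1 + r2 * v2 = 0) : r1 = 0 ∧ r2 = 0 := by
  by_cases h1 : r1 = 0
  · subst h1
    rw [zero_mul, zero_add] at hru hrv
    by_cases h2 : r2 = 0
    · exact ⟨rfl, h2⟩
    · have hu2 : u2 = 0 := (mul_eq_zero.mp hru).resolve_left h2
      have hv2 : v2 = 0 := (mul_eq_zero.mp hrv).resolve_left h2
      have hu1 : u1 ≠ 0 := fun h => hu ⟨h, hu2⟩
      exact absurd ⟨u1⁻¹ * v1, by rw [← mul_assoc, mul_inv_cancel₀ hu1, one_mul],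
        by simp [hu2, hv2]⟩ hnd
  · exfalso
    have hu1 : u1 = -(r1⁻¹ * r2 * u2) := by
      have e : r1 * u1 = -(r2 * u2) := add_eq_zero_iff_eq_neg.mp hru
      calc u1 = r1⁻¹ * (r1 * u1) := by rw [← mul_assoc, inv_mul_cancel₀ h1, one_mul]
        _ = -(r1⁻¹ * r2 * u2) := by rw [e, mul_neg, mul_assoc]
    have hv1 : v1 = -(r1⁻¹ * r2 * v2) := by
      have e : r1 * v1 = -(r2 * v2) := add_eq_zero_iff_eq_neg.mp hrv
      calc v1 = r1⁻¹ * (r1 * v1) := by rw [← mul_assoc, inv_mul_cancel₀ h1, one_mul]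
        _ = -(r1⁻¹ * r2 * v2) := by rw [e, mul_neg, mul_assoc]
    have hu2 : u2 ≠ 0 := by
      intro h; subst h; exact hu ⟨by simp [hu1], rfl⟩
    refine hnd ⟨u2⁻¹ * v2, ?_, by rw [← mul_assoc, mul_inv_cancel₀ hu2, one_mul]⟩
    rw [hu1, hv1, neg_mul, mul_assoc (r1⁻¹ * r2) u2 (u2⁻¹ * v2), ← mul_assoc u2 u2⁻¹ v2,
      mul_inv_cancel₀ hu2, one_mul]


/-- Pair lemma: A,B with eigenvector 1, and a left 1-eigenvector of AB,
    yield a common fixed vector or a common fixed covector. -/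
lemma pair_lemma (a b c d a' b' c' d' u1 u2 v1 v2 w1 w2 : K)
    (hu : ¬(u1 = 0 ∧ u2 = 0)) (hAu1 : a * u1 + b * u2 = u1) (hAu2 : c * u1 + d * u2 = u2)
    (hv : ¬(v1 = 0 ∧ v2 = 0)) (hBv1 : a' * v1 + b' * v2 = v1) (hBv2 : c' * v1 + d' * v2 = v2)
    (hw : ¬(w1 = 0 ∧ w2 = 0))
    (hAB1 : w1 * (a * a' + b * c') + w2 * (c * a' + d * c') = w1)
    (hAB2 : w1 * (a * b' + b * d') + w2 * (c * b' + d * d') = w2) :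
    (∃ z1 z2 : K, ¬(z1 = 0 ∧ z2 = 0) ∧ a * z1 + b * z2 = z1 ∧ c * z1 + d * z2 = z2 ∧
        a' * z1 + b' * z2 = z1 ∧ c' * z1 + d' * z2 = z2) ∨
    (w1 * a + w2 * c = w1 ∧ w1 * b + w2 * d = w2 ∧
        w1 * a' + w2 * c' = w1 ∧ w1 * b' + w2 * d' = w2) := by
  by_cases hdep : ∃ t : K, v1 = u1 * t ∧ v2 = u2 * t
  · obtain ⟨t, ht1, ht2⟩ := hdep
    left
    refine ⟨v1, v2, hv, ?_, ?_, hBv1, hBv2⟩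
    · rw [ht1, ht2, ← mul_assoc, ← mul_assoc, ← add_mul, hAu1]
    · rw [ht1, ht2, ← mul_assoc, ← mul_assoc, ← add_mul, hAu2]
  · right
    -- σ = ωA
    set σ1 := w1 * a + w2 * c with hσ1
    set σ2 := w1 * b + w2 * d with hσ2
    have hσB1 : σ1 * a' + σ2 * c' = w1 := by
      calc σ1 * a' + σ2 * c' = w1 * (a * a' + b * c') + w2 * (c * a' + d * c') := by
            rw [hσ1, hσ2]; noncomm_ring
        _ = w1 := hAB1
    have hσB2 : σ1 * b' + σ2 * d' = w2 := by
      calc σ1 * b' + σ2 * d' = w1 * (a * b' + b * d') + w2 * (c * b' + d * d') := by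
            rw [hσ1, hσ2]; noncomm_ring
        _ = w2 := hAB2
    -- ρ = ωA - ω kills u and v
    have hρu : (σ1 - w1) * u1 + (σ2 - w2) * u2 = 0 := by
      have e : (σ1 - w1) * u1 + (σ2 - w2) * u2
          = w1 * (a * u1 + b * u2) + w2 * (c * u1 + d * u2) - (w1 * u1 + w2 * u2) := by
        rw [hσ1, hσ2]; noncomm_ring
      rw [e, hAu1, hAu2, sub_self]
    have hρv : (σ1 - w1) * v1 + (σ2 - w2) * v2 = 0 := by
      have e1 : (σ1 - w1) * v1 + (σ2 - w2) * v2 = σ1 * v1 + σ2 * v2 - (w1 * v1 + w2 * v2) := by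
        noncomm_ring
      rw [e1, ← hσB1, ← hσB2]
      have e2 : σ1 * v1 + σ2 * v2 - ((σ1 * a' + σ2 * c') * v1 + (σ1 * b' + σ2 * d') * v2)
          = σ1 * (v1 - (a' * v1 + b' * v2)) + σ2 * (v2 - (c' * v1 + d' * v2)) := by
        noncomm_ring
      rw [e2, hBv1, hBv2, sub_self, sub_self, mul_zero, mul_zero, add_zero]
    obtain ⟨e1, e2⟩ := indep_ann u1 u2 v1 v2 (σ1 - w1) (σ2 - w2) hu hdep hρu hρv
    have h1 : σ1 = w1 := sub_eq_zero.mp e1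
    have h2 : σ2 = w2 := sub_eq_zero.mp e2
    rw [h1, h2] at hσB1 hσB2
    exact ⟨h1, h2, hσB1, hσB2⟩

/-- either solve the affine system or produce a kernel vector -/
lemma solve_or_ker (p q r s u v : K) :
    (∃ x y : K, p * x + q * y = u ∧ r * x + s * y = v) ∨
    (∃ x y : K, ¬(x = 0 ∧ y = 0) ∧ p * x + q * y = 0 ∧ r * x + s * y = 0) := by
  by_cases hp : p = 0
  · by_cases hr : r = 0
    · exact Or.inr ⟨1, 0, by simp, by simp [hp], by simp [hr]⟩
    · by_cases hq : q = 0
      · refine Or.inr ⟨-(r⁻¹ * s), 1, by simp, by simp [hp, hq], ?_⟩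
        rw [mul_neg, ← mul_assoc, mul_inv_cancel₀ hr, one_mul, mul_one, neg_add_cancel]
      · refine Or.inl ⟨r⁻¹ * (v - s * (q⁻¹ * u)), q⁻¹ * u, ?_, ?_⟩
        · rw [hp, zero_mul, zero_add, ← mul_assoc, mul_inv_cancel₀ hq, one_mul]
        · rw [← mul_assoc, mul_inv_cancel₀ hr, one_mul, sub_add_cancel]
  · set k := s - r * (p⁻¹ * q) with hk
    by_cases hkz : k = 0
    · refine Or.inr ⟨-(p⁻¹ * q), 1, by simp, ?_, ?_⟩
      · rw [mul_neg, ← mul_assoc, mul_inv_cancel₀ hp, one_mul, mul_one, neg_add_cancel]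
      · rw [mul_neg, mul_one]
        have e : -(r * (p⁻¹ * q)) + s = k := by rw [hk]; noncomm_ring
        rw [e]; exact hkz
    · set y' := k⁻¹ * (v - r * (p⁻¹ * u)) with hy'
      refine Or.inl ⟨p⁻¹ * (u - q * y'), y', ?_, ?_⟩
      · rw [← mul_assoc, mul_inv_cancel₀ hp, one_mul, sub_add_cancel]
      · have hs : s = k + r * (p⁻¹ * q) := by rw [hk]; noncomm_ring
        have hky : k * y' = v - r * (p⁻¹ * u) := by
          rw [hy', ← mul_assoc, mul_inv_cancel₀ hkz, one_mul]
        rw [hs]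
        have expand : r * (p⁻¹ * (u - q * y')) + (k + r * (p⁻¹ * q)) * y'
            = r * (p⁻¹ * u) + k * y' := by noncomm_ring
        rw [expand, hky]
        noncomm_ring

end ScalarAux

lemma entry11_ne (A B : Matrix (Fin 3) (Fin 3) ℍ[ℝ]) (hBA : B * A = 1) (h00 : A 0 0 = 1)
    (h10 : A 1 0 = 0) (h20 : A 2 0 = 0) (h21 : A 2 1 = 0) :
    A 1 1 ≠ 0 := by
  intro h11
  have e10 : (B * A) 1 0 = 0 := by rw [hBA]; simp [Matrix.one_apply]
  have e11 : (B * A) 1 1 = 1 := by rw [hBA]; simp [Matrix.one_apply]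
  rw [Matrix.mul_apply, Fin.sum_univ_three, h00, h10, h20, mul_one, mul_zero, mul_zero,
    add_zero, add_zero] at e10
  rw [Matrix.mul_apply, Fin.sum_univ_three, h11, h21, e10, mul_zero, mul_zero, zero_mul,
    zero_add, add_zero] at e11
  exact zero_ne_one e11

lemma entry00_ne (A B : Matrix (Fin 3) (Fin 3) ℍ[ℝ]) (hBA : B * A = 1)
    (h10 : A 1 0 = 0) (h20 : A 2 0 = 0) : A 0 0 ≠ 0 := by
  intro h00
  have e00 : (B * A) 0 0 = 1 := by rw [hBA]; simp [Matrix.one_apply]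
  rw [Matrix.mul_apply, Fin.sum_univ_three, h00, h10, h20, mul_zero, mul_zero, mul_zero,
    add_zero, add_zero] at e00
  exact zero_ne_one e00

lemma conj_val (Pm Pv : Matrix (Fin 3) (Fin 3) ℍ[ℝ]) (h1 : Pm * Pv = 1) (h2 : Pv * Pm = 1)
    (g : (Matrix (Fin 3) (Fin 3) ℍ[ℝ])ˣ) :
    ((⟨Pm, Pv, h1, h2⟩ : (Matrix (Fin 3) (Fin 3) ℍ[ℝ])ˣ)⁻¹ * g * ⟨Pm, Pv, h1, h2⟩).val
      = Pv * g.val * Pm := by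
  rw [Units.val_mul, Units.val_mul]; rfl

lemma conj_inv_mul (Pm Pv : Matrix (Fin 3) (Fin 3) ℍ[ℝ]) (h1 : Pm * Pv = 1) (h2 : Pv * Pm = 1)
    (g : (Matrix (Fin 3) (Fin 3) ℍ[ℝ])ˣ) :
    (Pv * (g⁻¹).val * Pm) * (Pv * g.val * Pm) = 1 := by
  have hg : (g⁻¹).val * g.val = 1 := by
    rw [← Units.val_mul, inv_mul_cancel, Units.val_one]
  rw [mul_assoc (Pv * (g⁻¹).val) Pm ((Pv * g.val) * Pm), ← mul_assoc Pm (Pv * g.val) Pm,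
    ← mul_assoc Pm Pv g.val, h1, one_mul, mul_assoc Pv (g⁻¹).val (g.val * Pm),
    ← mul_assoc (g⁻¹).val g.val Pm, hg, one_mul, h2]

lemma conj_vector (x y : ℍ[ℝ]) (hxy : ¬(x = 0 ∧ y = 0)) :
    ∃ P : (Matrix (Fin 3) (Fin 3) ℍ[ℝ])ˣ, IsAffMat P.val ∧
      ∀ g : (Matrix (Fin 3) (Fin 3) ℍ[ℝ])ˣ, IsAffMat g.val →
        g.val 0 0 * x + g.val 0 1 * y = x → g.val 1 0 * x + g.val 1 1 * y = y →
        InG2 ((P⁻¹ * g * P).val) := by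
  by_cases hx : x = 0
  · have hy : y ≠ 0 := fun h => hxy ⟨hx, h⟩
    subst hx
    have h1 : !![(0:ℍ[ℝ]), 1, 0; y, 0, 0; 0, 0, 1] * !![0, y⁻¹, 0; 1, 0, 0; 0, 0, 1] = 1 := by
      refine Matrix.ext fun i j => ?_
      fin_cases i <;> fin_cases j <;>
        simp [Matrix.mul_apply, Fin.sum_univ_three, Matrix.one_apply, Matrix.vecHead,
          Matrix.vecTail, mul_inv_cancel₀ hy, inv_mul_cancel₀ hy]
    have h2 : !![(0:ℍ[ℝ]), y⁻¹, 0; 1, 0, 0; 0, 0, 1] * !![0, 1, 0; y, 0, 0; 0, 0, 1] = 1 := by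
      refine Matrix.ext fun i j => ?_
      fin_cases i <;> fin_cases j <;>
        simp [Matrix.mul_apply, Fin.sum_univ_three, Matrix.one_apply, Matrix.vecHead,
          Matrix.vecTail, mul_inv_cancel₀ hy, inv_mul_cancel₀ hy]
    refine ⟨⟨_, _, h1, h2⟩, ⟨by simp [Matrix.vecHead, Matrix.vecTail],
      by simp [Matrix.vecHead, Matrix.vecTail], by simp [Matrix.vecHead, Matrix.vecTail]⟩,
      fun g hgaff hf1 hf2 => ?_⟩
    obtain ⟨h20, h21, h22⟩ := hgaff
    rw [mul_zero, zero_add] at hf1 hf2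
    rw [conj_val]
    have e00 : (!![(0:ℍ[ℝ]), y⁻¹, 0; 1, 0, 0; 0, 0, 1] * g.val * !![0, 1, 0; y, 0, 0; 0, 0, 1]) 0 0
        = 1 := by
      have e : (!![(0:ℍ[ℝ]), y⁻¹, 0; 1, 0, 0; 0, 0, 1] * g.val * !![0, 1, 0; y, 0, 0; 0, 0, 1]) 0 0
          = y⁻¹ * (g.val 1 1 * y) := by
        simp [Matrix.mul_apply, Matrix.vecMul, dotProduct, Fin.sum_univ_three,
          Matrix.vecHead, Matrix.vecTail]
        noncomm_ring
      rw [e, hf2, inv_mul_cancel₀ hy]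
    have e10 : (!![(0:ℍ[ℝ]), y⁻¹, 0; 1, 0, 0; 0, 0, 1] * g.val * !![0, 1, 0; y, 0, 0; 0, 0, 1]) 1 0
        = 0 := by
      have e : (!![(0:ℍ[ℝ]), y⁻¹, 0; 1, 0, 0; 0, 0, 1] * g.val * !![0, 1, 0; y, 0, 0; 0, 0, 1]) 1 0
          = g.val 0 1 * y := by
        simp [Matrix.mul_apply, Matrix.vecMul, dotProduct, Fin.sum_univ_three,
          Matrix.vecHead, Matrix.vecTail]
      rw [e, hf1]
    have e20 : (!![(0:ℍ[ℝ]), y⁻¹, 0; 1, 0, 0; 0, 0, 1] * g.val * !![0, 1, 0; y, 0, 0; 0, 0, 1]) 2 0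
        = 0 := by
      simp [Matrix.mul_apply, Matrix.vecMul, dotProduct, Fin.sum_univ_three,
        Matrix.vecHead, Matrix.vecTail, h20, h21, h22]
    have e21 : (!![(0:ℍ[ℝ]), y⁻¹, 0; 1, 0, 0; 0, 0, 1] * g.val * !![0, 1, 0; y, 0, 0; 0, 0, 1]) 2 1
        = 0 := by
      simp [Matrix.mul_apply, Matrix.vecMul, dotProduct, Fin.sum_univ_three,
        Matrix.vecHead, Matrix.vecTail, h20, h21, h22]
    have e22 : (!![(0:ℍ[ℝ]), y⁻¹, 0; 1, 0, 0; 0, 0, 1] * g.val * !![0, 1, 0; y, 0, 0; 0, 0, 1]) 2 2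
        = 1 := by
      simp [Matrix.mul_apply, Matrix.vecMul, dotProduct, Fin.sum_univ_three,
        Matrix.vecHead, Matrix.vecTail, h20, h21, h22]
    exact ⟨e00, e10, entry11_ne _ _ (conj_inv_mul _ _ h1 h2 g) e00 e10 e20 e21, e20, e21, e22⟩
  · have h1 : !![x, 0, 0; y, 1, 0; (0:ℍ[ℝ]), 0, 1] * !![x⁻¹, 0, 0; -(y*x⁻¹), 1, 0; 0, 0, 1]
        = 1 := by
      refine Matrix.ext fun i j => ?_
      fin_cases i <;> fin_cases j <;>
        simp [Matrix.mul_apply, Fin.sum_univ_three, Matrix.one_apply, Matrix.vecHead,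
          Matrix.vecTail, mul_assoc, mul_inv_cancel₀ hx, inv_mul_cancel₀ hx]
    have h2 : !![x⁻¹, 0, 0; -(y*x⁻¹), 1, 0; (0:ℍ[ℝ]), 0, 1] * !![x, 0, 0; y, 1, 0; 0, 0, 1]
        = 1 := by
      refine Matrix.ext fun i j => ?_
      fin_cases i <;> fin_cases j <;>
        simp [Matrix.mul_apply, Fin.sum_univ_three, Matrix.one_apply, Matrix.vecHead,
          Matrix.vecTail, mul_assoc, mul_inv_cancel₀ hx, inv_mul_cancel₀ hx]
    refine ⟨⟨_, _, h1, h2⟩, ⟨by simp [Matrix.vecHead, Matrix.vecTail],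
      by simp [Matrix.vecHead, Matrix.vecTail], by simp [Matrix.vecHead, Matrix.vecTail]⟩,
      fun g hgaff hf1 hf2 => ?_⟩
    obtain ⟨h20, h21, h22⟩ := hgaff
    rw [conj_val]
    have e00 : (!![x⁻¹, 0, 0; -(y*x⁻¹), 1, 0; (0:ℍ[ℝ]), 0, 1] * g.val
        * !![x, 0, 0; y, 1, 0; 0, 0, 1]) 0 0 = 1 := by
      have e : (!![x⁻¹, 0, 0; -(y*x⁻¹), 1, 0; (0:ℍ[ℝ]), 0, 1] * g.val
          * !![x, 0, 0; y, 1, 0; 0, 0, 1]) 0 0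
          = x⁻¹ * (g.val 0 0 * x + g.val 0 1 * y) := by
        simp [Matrix.mul_apply, Matrix.vecMul, dotProduct, Fin.sum_univ_three,
          Matrix.vecHead, Matrix.vecTail]
        noncomm_ring
      rw [e, hf1, inv_mul_cancel₀ hx]
    have e10 : (!![x⁻¹, 0, 0; -(y*x⁻¹), 1, 0; (0:ℍ[ℝ]), 0, 1] * g.val
        * !![x, 0, 0; y, 1, 0; 0, 0, 1]) 1 0 = 0 := by
      have e : (!![x⁻¹, 0, 0; -(y*x⁻¹), 1, 0; (0:ℍ[ℝ]), 0, 1] * g.val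
          * !![x, 0, 0; y, 1, 0; 0, 0, 1]) 1 0
          = -((y*x⁻¹) * (g.val 0 0 * x + g.val 0 1 * y)) + (g.val 1 0 * x + g.val 1 1 * y) := by
        simp [Matrix.mul_apply, Matrix.vecMul, dotProduct, Fin.sum_univ_three,
          Matrix.vecHead, Matrix.vecTail]
        noncomm_ring
      rw [e, hf1, hf2, mul_assoc, inv_mul_cancel₀ hx, mul_one, neg_add_cancel]
    have e20 : (!![x⁻¹, 0, 0; -(y*x⁻¹), 1, 0; (0:ℍ[ℝ]), 0, 1] * g.val
        * !![x, 0, 0; y, 1, 0; 0, 0, 1]) 2 0 = 0 := by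
      simp [Matrix.mul_apply, Matrix.vecMul, dotProduct, Fin.sum_univ_three,
        Matrix.vecHead, Matrix.vecTail, h20, h21, h22]
    have e21 : (!![x⁻¹, 0, 0; -(y*x⁻¹), 1, 0; (0:ℍ[ℝ]), 0, 1] * g.val
        * !![x, 0, 0; y, 1, 0; 0, 0, 1]) 2 1 = 0 := by
      simp [Matrix.mul_apply, Matrix.vecMul, dotProduct, Fin.sum_univ_three,
        Matrix.vecHead, Matrix.vecTail, h20, h21, h22]
    have e22 : (!![x⁻¹, 0, 0; -(y*x⁻¹), 1, 0; (0:ℍ[ℝ]), 0, 1] * g.val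
        * !![x, 0, 0; y, 1, 0; 0, 0, 1]) 2 2 = 1 := by
      simp [Matrix.mul_apply, Matrix.vecMul, dotProduct, Fin.sum_univ_three,
        Matrix.vecHead, Matrix.vecTail, h20, h21, h22]
    exact ⟨e00, e10, entry11_ne _ _ (conj_inv_mul _ _ h1 h2 g) e00 e10 e20 e21, e20, e21, e22⟩
lemma conj_covector (w1 w2 : ℍ[ℝ]) (hw : ¬(w1 = 0 ∧ w2 = 0)) :
    ∃ P : (Matrix (Fin 3) (Fin 3) ℍ[ℝ])ˣ, IsAffMat P.val ∧
      ∀ g : (Matrix (Fin 3) (Fin 3) ℍ[ℝ])ˣ, IsAffMat g.val →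
        w1 * g.val 0 0 + w2 * g.val 1 0 = w1 → w1 * g.val 0 1 + w2 * g.val 1 1 = w2 →
        InG1 ((P⁻¹ * g * P).val) := by
  by_cases hw2 : w2 = 0
  · have hw1 : w1 ≠ 0 := fun h => hw ⟨h, hw2⟩
    subst hw2
    have h1 : !![(0:ℍ[ℝ]), w1⁻¹, 0; 1, 0, 0; 0, 0, 1] * !![0, 1, 0; w1, 0, 0; 0, 0, 1] = 1 := by
      refine Matrix.ext fun i j => ?_
      fin_cases i <;> fin_cases j <;>
        simp [Matrix.mul_apply, Fin.sum_univ_three, Matrix.one_apply, Matrix.vecHead,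
          Matrix.vecTail, mul_inv_cancel₀ hw1, inv_mul_cancel₀ hw1]
    have h2 : !![(0:ℍ[ℝ]), 1, 0; w1, 0, 0; 0, 0, 1] * !![0, w1⁻¹, 0; 1, 0, 0; 0, 0, 1] = 1 := by
      refine Matrix.ext fun i j => ?_
      fin_cases i <;> fin_cases j <;>
        simp [Matrix.mul_apply, Fin.sum_univ_three, Matrix.one_apply, Matrix.vecHead,
          Matrix.vecTail, mul_inv_cancel₀ hw1, inv_mul_cancel₀ hw1]
    refine ⟨⟨_, _, h1, h2⟩, ⟨by simp [Matrix.vecHead, Matrix.vecTail],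
      by simp [Matrix.vecHead, Matrix.vecTail], by simp [Matrix.vecHead, Matrix.vecTail]⟩,
      fun g hgaff hc1 hc2 => ?_⟩
    obtain ⟨h20, h21, h22⟩ := hgaff
    rw [zero_mul, add_zero] at hc1 hc2
    rw [conj_val]
    have e10 : (!![(0:ℍ[ℝ]), 1, 0; w1, 0, 0; 0, 0, 1] * g.val
        * !![0, w1⁻¹, 0; 1, 0, 0; 0, 0, 1]) 1 0 = 0 := by
      have e : (!![(0:ℍ[ℝ]), 1, 0; w1, 0, 0; 0, 0, 1] * g.val
          * !![0, w1⁻¹, 0; 1, 0, 0; 0, 0, 1]) 1 0 = w1 * g.val 0 1 := by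
        simp [Matrix.mul_apply, Matrix.vecMul, dotProduct, Fin.sum_univ_three,
          Matrix.vecHead, Matrix.vecTail]
      rw [e, hc2]
    have e11 : (!![(0:ℍ[ℝ]), 1, 0; w1, 0, 0; 0, 0, 1] * g.val
        * !![0, w1⁻¹, 0; 1, 0, 0; 0, 0, 1]) 1 1 = 1 := by
      have e : (!![(0:ℍ[ℝ]), 1, 0; w1, 0, 0; 0, 0, 1] * g.val
          * !![0, w1⁻¹, 0; 1, 0, 0; 0, 0, 1]) 1 1 = w1 * g.val 0 0 * w1⁻¹ := by
        simp [Matrix.mul_apply, Matrix.vecMul, dotProduct, Fin.sum_univ_three,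
          Matrix.vecHead, Matrix.vecTail]
      rw [e, hc1, mul_inv_cancel₀ hw1]
    have e20 : (!![(0:ℍ[ℝ]), 1, 0; w1, 0, 0; 0, 0, 1] * g.val
        * !![0, w1⁻¹, 0; 1, 0, 0; 0, 0, 1]) 2 0 = 0 := by
      simp [Matrix.mul_apply, Matrix.vecMul, dotProduct, Fin.sum_univ_three,
        Matrix.vecHead, Matrix.vecTail, h20, h21, h22]
    have e21 : (!![(0:ℍ[ℝ]), 1, 0; w1, 0, 0; 0, 0, 1] * g.val
        * !![0, w1⁻¹, 0; 1, 0, 0; 0, 0, 1]) 2 1 = 0 := by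
      simp [Matrix.mul_apply, Matrix.vecMul, dotProduct, Fin.sum_univ_three,
        Matrix.vecHead, Matrix.vecTail, h20, h21, h22]
    have e22 : (!![(0:ℍ[ℝ]), 1, 0; w1, 0, 0; 0, 0, 1] * g.val
        * !![0, w1⁻¹, 0; 1, 0, 0; 0, 0, 1]) 2 2 = 1 := by
      simp [Matrix.mul_apply, Matrix.vecMul, dotProduct, Fin.sum_univ_three,
        Matrix.vecHead, Matrix.vecTail, h20, h21, h22]
    exact ⟨entry00_ne _ _ (conj_inv_mul _ _ h1 h2 g) e10 e20, e10, e11, e20, e21, e22⟩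
  · have h1 : !![(1:ℍ[ℝ]), 0, 0; -(w2⁻¹*w1), w2⁻¹, 0; 0, 0, 1]
        * !![1, 0, 0; w1, w2, 0; 0, 0, 1] = 1 := by
      refine Matrix.ext fun i j => ?_
      fin_cases i <;> fin_cases j <;>
        simp [Matrix.mul_apply, Fin.sum_univ_three, Matrix.one_apply, Matrix.vecHead,
          Matrix.vecTail, mul_assoc, mul_inv_cancel₀ hw2, inv_mul_cancel₀ hw2,
          inv_mul_cancel_left₀ hw2, mul_inv_cancel_left₀ hw2]
    have h2 : !![(1:ℍ[ℝ]), 0, 0; w1, w2, 0; 0, 0, 1]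
        * !![1, 0, 0; -(w2⁻¹*w1), w2⁻¹, 0; 0, 0, 1] = 1 := by
      refine Matrix.ext fun i j => ?_
      fin_cases i <;> fin_cases j <;>
        simp [Matrix.mul_apply, Fin.sum_univ_three, Matrix.one_apply, Matrix.vecHead,
          Matrix.vecTail, mul_assoc, mul_inv_cancel₀ hw2, inv_mul_cancel₀ hw2,
          inv_mul_cancel_left₀ hw2, mul_inv_cancel_left₀ hw2]
    refine ⟨⟨_, _, h1, h2⟩, ⟨by simp [Matrix.vecHead, Matrix.vecTail],
      by simp [Matrix.vecHead, Matrix.vecTail], by simp [Matrix.vecHead, Matrix.vecTail]⟩,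
      fun g hgaff hc1 hc2 => ?_⟩
    obtain ⟨h20, h21, h22⟩ := hgaff
    rw [conj_val]
    have e10 : (!![(1:ℍ[ℝ]), 0, 0; w1, w2, 0; 0, 0, 1] * g.val
        * !![1, 0, 0; -(w2⁻¹*w1), w2⁻¹, 0; 0, 0, 1]) 1 0 = 0 := by
      have e : (!![(1:ℍ[ℝ]), 0, 0; w1, w2, 0; 0, 0, 1] * g.val
          * !![1, 0, 0; -(w2⁻¹*w1), w2⁻¹, 0; 0, 0, 1]) 1 0
          = (w1 * g.val 0 0 + w2 * g.val 1 0)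
            + (w1 * g.val 0 1 + w2 * g.val 1 1) * -(w2⁻¹*w1) := by
        simp [Matrix.mul_apply, Matrix.vecMul, dotProduct, Fin.sum_univ_three,
          Matrix.vecHead, Matrix.vecTail]
      rw [e, hc1, hc2, mul_neg, ← mul_assoc, mul_inv_cancel₀ hw2, one_mul, add_neg_cancel]
    have e11 : (!![(1:ℍ[ℝ]), 0, 0; w1, w2, 0; 0, 0, 1] * g.val
        * !![1, 0, 0; -(w2⁻¹*w1), w2⁻¹, 0; 0, 0, 1]) 1 1 = 1 := by
      have e : (!![(1:ℍ[ℝ]), 0, 0; w1, w2, 0; 0, 0, 1] * g.val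
          * !![1, 0, 0; -(w2⁻¹*w1), w2⁻¹, 0; 0, 0, 1]) 1 1
          = (w1 * g.val 0 1 + w2 * g.val 1 1) * w2⁻¹ := by
        simp [Matrix.mul_apply, Matrix.vecMul, dotProduct, Fin.sum_univ_three,
          Matrix.vecHead, Matrix.vecTail]
      rw [e, hc2, mul_inv_cancel₀ hw2]
    have e20 : (!![(1:ℍ[ℝ]), 0, 0; w1, w2, 0; 0, 0, 1] * g.val
        * !![1, 0, 0; -(w2⁻¹*w1), w2⁻¹, 0; 0, 0, 1]) 2 0 = 0 := by
      simp [Matrix.mul_apply, Matrix.vecMul, dotProduct, Fin.sum_univ_three,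
        Matrix.vecHead, Matrix.vecTail, h20, h21, h22]
    have e21 : (!![(1:ℍ[ℝ]), 0, 0; w1, w2, 0; 0, 0, 1] * g.val
        * !![1, 0, 0; -(w2⁻¹*w1), w2⁻¹, 0; 0, 0, 1]) 2 1 = 0 := by
      simp [Matrix.mul_apply, Matrix.vecMul, dotProduct, Fin.sum_univ_three,
        Matrix.vecHead, Matrix.vecTail, h20, h21, h22]
    have e22 : (!![(1:ℍ[ℝ]), 0, 0; w1, w2, 0; 0, 0, 1] * g.val
        * !![1, 0, 0; -(w2⁻¹*w1), w2⁻¹, 0; 0, 0, 1]) 2 2 = 1 := by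
      simp [Matrix.mul_apply, Matrix.vecMul, dotProduct, Fin.sum_univ_three,
        Matrix.vecHead, Matrix.vecTail, h20, h21, h22]
    exact ⟨entry00_ne _ _ (conj_inv_mul _ _ h1 h2 g) e10 e20, e10, e11, e20, e21, e22⟩

section MoreScalar
variable {K : Type*} [DivisionRing K]

lemma ker_fix2 (c d x y : K) : c * x + (d - 1) * y = 0 ↔ c * x + d * y = y := by
  constructor <;> intro h
  · have : c * x + d * y - y = c * x + (d - 1) * y := by noncomm_ring
    rw [h] at this; exact sub_eq_zero.mp this
  · have : c * x + (d - 1) * y = c * x + d * y - y := by noncomm_ring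
    rw [this, h, sub_self]

lemma coker_fix2 (b d w1 w2 : K) : w1 * b + w2 * (d - 1) = 0 ↔ w1 * b + w2 * d = w2 := by
  constructor <;> intro h
  · have : w1 * b + w2 * d - w2 = w1 * b + w2 * (d - 1) := by noncomm_ring
    rw [h] at this; exact sub_eq_zero.mp this
  · have : w1 * b + w2 * (d - 1) = w1 * b + w2 * d - w2 := by noncomm_ring
    rw [this, h, sub_self]

lemma fix_comp (a b t x y : K) (h : (a - 1) * x + b * y = -t) : a * x + b * y + t = x := by
  have e : a * x + b * y + t - x = ((a - 1) * x + b * y) + t := by noncomm_ring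
  rw [h, neg_add_cancel] at e
  exact sub_eq_zero.mp e

lemma fix_comp2 (c d t x y : K) (h : c * x + (d - 1) * y = -t) : c * x + d * y + t = y := by
  have e : c * x + d * y + t - y = (c * x + (d - 1) * y) + t := by noncomm_ring
  rw [h, neg_add_cancel] at e
  exact sub_eq_zero.mp e

lemma fix_scale (a b x y z1 z2 t : K) (ht : t ≠ 0) (h1 : z1 = x * t) (h2 : z2 = y * t)
    (hz : a * z1 + b * z2 = z1) : a * x + b * y = x := by
  have e : (a * x + b * y - x) * t = 0 := by
    have e' : (a * x + b * y - x) * t = a * (x * t) + b * (y * t) - x * t := by noncomm_ring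
    rw [e', ← h1, ← h2, hz, sub_self]
  exact sub_eq_zero.mp ((mul_eq_zero.mp e).resolve_right ht)

lemma cofix_scale (a c w1 w2 o1 o2 t : K) (ht : t ≠ 0) (h1 : o1 = t * w1) (h2 : o2 = t * w2)
    (hz : o1 * a + o2 * c = o1) : w1 * a + w2 * c = w1 := by
  have e : t * (w1 * a + w2 * c - w1) = 0 := by
    have e' : t * (w1 * a + w2 * c - w1) = (t * w1) * a + (t * w2) * c - t * w1 := by
      noncomm_ring
    rw [e', ← h1, ← h2, hz, sub_self]
  exact sub_eq_zero.mp ((mul_eq_zero.mp e).resolve_left ht)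

lemma fix_scale2 (c d x y z1 z2 t : K) (ht : t ≠ 0) (h1 : z1 = x * t) (h2 : z2 = y * t)
    (hz : c * z1 + d * z2 = z2) : c * x + d * y = y := by
  have e : (c * x + d * y - y) * t = 0 := by
    have e' : (c * x + d * y - y) * t = c * (x * t) + d * (y * t) - y * t := by noncomm_ring
    rw [e', ← h1, ← h2, hz, sub_self]
  exact sub_eq_zero.mp ((mul_eq_zero.mp e).resolve_right ht)

lemma cofix_scale2 (b d w1 w2 o1 o2 t : K) (ht : t ≠ 0) (h1 : o1 = t * w1) (h2 : o2 = t * w2)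
    (hz : o1 * b + o2 * d = o2) : w1 * b + w2 * d = w2 := by
  have e : t * (w1 * b + w2 * d - w2) = 0 := by
    have e' : t * (w1 * b + w2 * d - w2) = (t * w1) * b + (t * w2) * d - t * w2 := by
      noncomm_ring
    rw [e', ← h1, ← h2, hz, sub_self]
  exact sub_eq_zero.mp ((mul_eq_zero.mp e).resolve_left ht)

end MoreScalar

/-- If `Γ ⊆ Aff(2,ℍ)` acts freely on ℍ², then `Γ` is conjugate in Aff(2,ℍ) to a
subgroup of `G₁` or to a subgroup of `G₂`. -/
theorem conjugate_to_subgroup_of_G1_or_G2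
    (Γ : Subgroup (Matrix (Fin 3) (Fin 3) ℍ[ℝ])ˣ)
    (haff : ∀ g ∈ Γ, IsAffMat g.val)
    (hfree : ActsFreely Γ) :
    ∃ P : (Matrix (Fin 3) (Fin 3) ℍ[ℝ])ˣ, IsAffMat P.val ∧
      ((∀ g ∈ Γ, InG1 ((P⁻¹ * g * P).val)) ∨ (∀ g ∈ Γ, InG2 ((P⁻¹ * g * P).val))) := by
  classical
  -- every element of Γ has a 1-eigenvector for its linear part
  have evΓ : ∀ g ∈ Γ, ∃ x y : ℍ[ℝ], ¬(x = 0 ∧ y = 0) ∧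
      (g.val 0 0 - 1) * x + g.val 0 1 * y = 0 ∧
      g.val 1 0 * x + (g.val 1 1 - 1) * y = 0 := by
    intro g hg
    rcases solve_or_ker (g.val 0 0 - 1) (g.val 0 1) (g.val 1 0) (g.val 1 1 - 1)
        (-(g.val 0 2)) (-(g.val 1 2)) with ⟨x, y, h1, h2⟩ | hker
    · have hfix : affAct g.val (x, y) = (x, y) := by
        have e1 : g.val 0 0 * x + g.val 0 1 * y + g.val 0 2 = x := fix_comp _ _ _ _ _ h1
        have e2 : g.val 1 0 * x + g.val 1 1 * y + g.val 1 2 = y := fix_comp2 _ _ _ _ _ h2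
        simp only [affAct, Prod.mk.injEq]
        exact ⟨e1, e2⟩
      have hone := hfree g hg ⟨(x, y), hfix⟩
      refine ⟨1, 0, by simp, ?_, ?_⟩ <;>
        · rw [hone]
          simp [Matrix.one_apply]
    · exact hker
  -- linear parts multiply
  have mulE : ∀ g ∈ Γ, ∀ h ∈ Γ,
      (g * h).val 0 0 = g.val 0 0 * h.val 0 0 + g.val 0 1 * h.val 1 0 ∧
      (g * h).val 0 1 = g.val 0 0 * h.val 0 1 + g.val 0 1 * h.val 1 1 ∧
      (g * h).val 1 0 = g.val 1 0 * h.val 0 0 + g.val 1 1 * h.val 1 0 ∧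
      (g * h).val 1 1 = g.val 1 0 * h.val 0 1 + g.val 1 1 * h.val 1 1 := by
    intro g _ h hh
    obtain ⟨k20, k21, _⟩ := haff h hh
    refine ⟨?_, ?_, ?_, ?_⟩ <;>
      · rw [Units.val_mul, Matrix.mul_apply, Fin.sum_univ_three]
        simp [k20, k21]
  by_cases htriv : ∃ g ∈ Γ, ¬(g.val 0 0 = 1 ∧ g.val 0 1 = 0 ∧ g.val 1 0 = 0 ∧ g.val 1 1 = 1)
  · -- there is an element with nontrivial linear part
    obtain ⟨g₀, hg₀, hne⟩ := htriv
    have hN0 : ¬(g₀.val 0 0 - 1 = 0 ∧ g₀.val 0 1 = 0 ∧ g₀.val 1 0 = 0 ∧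
        g₀.val 1 1 - 1 = 0) := by
      rintro ⟨e1, e2, e3, e4⟩
      exact hne ⟨sub_eq_zero.mp e1, e2, e3, sub_eq_zero.mp e4⟩
    obtain ⟨x₀, y₀, hu0, hk1, hk2⟩ := evΓ g₀ hg₀
    obtain ⟨w1, w2, hw0, hc1, hc2⟩ :=
      leftker_of_rightker _ _ _ _ ⟨x₀, y₀, hu0, hk1, hk2⟩
    by_cases hvec : ∃ g ∈ Γ,
        ¬(g.val 0 0 * x₀ + g.val 0 1 * y₀ = x₀ ∧ g.val 1 0 * x₀ + g.val 1 1 * y₀ = y₀)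
    · by_cases hcov : ∃ g ∈ Γ,
          ¬(w1 * g.val 0 0 + w2 * g.val 1 0 = w1 ∧ w1 * g.val 0 1 + w2 * g.val 1 1 = w2)
      · -- contradiction : free action is violated
        exfalso
        obtain ⟨gb, hgb, hbfix⟩ := hvec
        obtain ⟨gc, hgc, hccof⟩ := hcov
        -- Step A : pair (g₀, gb) forces w gb = w
        have stepA : w1 * gb.val 0 0 + w2 * gb.val 1 0 = w1 ∧
            w1 * gb.val 0 1 + w2 * gb.val 1 1 = w2 := by
          obtain ⟨vb1, vb2, hvb, hvbk1, hvbk2⟩ := evΓ gb hgb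
          obtain ⟨p00, p01, p10, p11⟩ := mulE g₀ hg₀ gb hgb
          obtain ⟨ω1, ω2, hω, hωk1, hωk2⟩ :=
            leftker_of_rightker _ _ _ _ (evΓ (g₀ * gb) (mul_mem hg₀ hgb))
          rw [coker_fix, p00, p10] at hωk1
          rw [coker_fix2, p01, p11] at hωk2
          rcases pair_lemma (g₀.val 0 0) (g₀.val 0 1) (g₀.val 1 0) (g₀.val 1 1)
              (gb.val 0 0) (gb.val 0 1) (gb.val 1 0) (gb.val 1 1)
              x₀ y₀ vb1 vb2 ω1 ω2 hu0 ((ker_fix _ _ _ _).mp hk1) ((ker_fix2 _ _ _ _).mp hk2)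
              hvb ((ker_fix _ _ _ _).mp hvbk1) ((ker_fix2 _ _ _ _).mp hvbk2) hω hωk1 hωk2 with
            ⟨z1, z2, hz, hAz1, hAz2, hBz1, hBz2⟩ | ⟨hω1, hω2, hω3, hω4⟩
          · exfalso
            obtain ⟨t, ht1, ht2⟩ := ker_unique (g₀.val 0 0 - 1) (g₀.val 0 1) (g₀.val 1 0)
              (g₀.val 1 1 - 1) hN0 x₀ y₀ hu0 hk1 hk2 z1 z2
              ((ker_fix _ _ _ _).mpr hAz1) ((ker_fix2 _ _ _ _).mpr hAz2)
            have htne : t ≠ 0 := by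
              rintro rfl
              rw [mul_zero] at ht1 ht2
              exact hz ⟨ht1, ht2⟩
            exact hbfix ⟨fix_scale _ _ _ _ _ _ _ htne ht1 ht2 hBz1,
              fix_scale2 _ _ _ _ _ _ _ htne ht1 ht2 hBz2⟩
          · obtain ⟨t, ht1, ht2⟩ := coker_unique (g₀.val 0 0 - 1) (g₀.val 0 1) (g₀.val 1 0)
              (g₀.val 1 1 - 1) hN0 w1 w2 hw0 hc1 hc2 ω1 ω2
              ((coker_fix _ _ _ _).mpr hω1) ((coker_fix2 _ _ _ _).mpr hω2)
            have htne : t ≠ 0 := by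
              rintro rfl
              rw [zero_mul] at ht1 ht2
              exact hω ⟨ht1, ht2⟩
            exact ⟨cofix_scale _ _ _ _ _ _ _ htne ht1 ht2 hω3,
              cofix_scale2 _ _ _ _ _ _ _ htne ht1 ht2 hω4⟩
        -- Step B : pair (g₀, gc) forces gc to fix u₀
        have stepB : gc.val 0 0 * x₀ + gc.val 0 1 * y₀ = x₀ ∧
            gc.val 1 0 * x₀ + gc.val 1 1 * y₀ = y₀ := by
          obtain ⟨vc1, vc2, hvc, hvck1, hvck2⟩ := evΓ gc hgc
          obtain ⟨p00, p01, p10, p11⟩ := mulE g₀ hg₀ gc hgc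
          obtain ⟨ω1, ω2, hω, hωk1, hωk2⟩ :=
            leftker_of_rightker _ _ _ _ (evΓ (g₀ * gc) (mul_mem hg₀ hgc))
          rw [coker_fix, p00, p10] at hωk1
          rw [coker_fix2, p01, p11] at hωk2
          rcases pair_lemma (g₀.val 0 0) (g₀.val 0 1) (g₀.val 1 0) (g₀.val 1 1)
              (gc.val 0 0) (gc.val 0 1) (gc.val 1 0) (gc.val 1 1)
              x₀ y₀ vc1 vc2 ω1 ω2 hu0 ((ker_fix _ _ _ _).mp hk1) ((ker_fix2 _ _ _ _).mp hk2)
              hvc ((ker_fix _ _ _ _).mp hvck1) ((ker_fix2 _ _ _ _).mp hvck2) hω hωk1 hωk2 with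
            ⟨z1, z2, hz, hAz1, hAz2, hCz1, hCz2⟩ | ⟨hω1, hω2, hω3, hω4⟩
          · obtain ⟨t, ht1, ht2⟩ := ker_unique (g₀.val 0 0 - 1) (g₀.val 0 1) (g₀.val 1 0)
              (g₀.val 1 1 - 1) hN0 x₀ y₀ hu0 hk1 hk2 z1 z2
              ((ker_fix _ _ _ _).mpr hAz1) ((ker_fix2 _ _ _ _).mpr hAz2)
            have htne : t ≠ 0 := by
              rintro rfl
              rw [mul_zero] at ht1 ht2
              exact hz ⟨ht1, ht2⟩
            exact ⟨fix_scale _ _ _ _ _ _ _ htne ht1 ht2 hCz1,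
              fix_scale2 _ _ _ _ _ _ _ htne ht1 ht2 hCz2⟩
          · exfalso
            obtain ⟨t, ht1, ht2⟩ := coker_unique (g₀.val 0 0 - 1) (g₀.val 0 1) (g₀.val 1 0)
              (g₀.val 1 1 - 1) hN0 w1 w2 hw0 hc1 hc2 ω1 ω2
              ((coker_fix _ _ _ _).mpr hω1) ((coker_fix2 _ _ _ _).mpr hω2)
            have htne : t ≠ 0 := by
              rintro rfl
              rw [zero_mul] at ht1 ht2
              exact hω ⟨ht1, ht2⟩
            exact hccof ⟨cofix_scale _ _ _ _ _ _ _ htne ht1 ht2 hω3,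
              cofix_scale2 _ _ _ _ _ _ _ htne ht1 ht2 hω4⟩
        -- gb ≠ I, gc ≠ I (linear parts)
        have hNb : ¬(gb.val 0 0 - 1 = 0 ∧ gb.val 0 1 = 0 ∧ gb.val 1 0 = 0 ∧
            gb.val 1 1 - 1 = 0) := by
          rintro ⟨e1, e2, e3, e4⟩
          refine hbfix ⟨?_, ?_⟩
          · rw [sub_eq_zero.mp e1, e2, one_mul, zero_mul, add_zero]
          · rw [e3, sub_eq_zero.mp e4, one_mul, zero_mul, zero_add]
        have hNc : ¬(gc.val 0 0 - 1 = 0 ∧ gc.val 0 1 = 0 ∧ gc.val 1 0 = 0 ∧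
            gc.val 1 1 - 1 = 0) := by
          rintro ⟨e1, e2, e3, e4⟩
          refine hccof ⟨?_, ?_⟩
          · rw [sub_eq_zero.mp e1, e3, mul_one, mul_zero, add_zero]
          · rw [e2, sub_eq_zero.mp e4, mul_one, mul_zero, zero_add]
        -- Step C : pair (gb, gc) gives the final contradiction
        obtain ⟨vb1, vb2, hvb, hvbk1, hvbk2⟩ := evΓ gb hgb
        obtain ⟨vc1, vc2, hvc, hvck1, hvck2⟩ := evΓ gc hgc
        obtain ⟨p00, p01, p10, p11⟩ := mulE gb hgb gc hgc
        obtain ⟨ω1, ω2, hω, hωk1, hωk2⟩ :=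
          leftker_of_rightker _ _ _ _ (evΓ (gb * gc) (mul_mem hgb hgc))
        rw [coker_fix, p00, p10] at hωk1
        rw [coker_fix2, p01, p11] at hωk2
        rcases pair_lemma (gb.val 0 0) (gb.val 0 1) (gb.val 1 0) (gb.val 1 1)
            (gc.val 0 0) (gc.val 0 1) (gc.val 1 0) (gc.val 1 1)
            vb1 vb2 vc1 vc2 ω1 ω2 hvb ((ker_fix _ _ _ _).mp hvbk1) ((ker_fix2 _ _ _ _).mp hvbk2)
            hvc ((ker_fix _ _ _ _).mp hvck1) ((ker_fix2 _ _ _ _).mp hvck2) hω hωk1 hωk2 with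
          ⟨z1, z2, hz, hBz1, hBz2, hCz1, hCz2⟩ | ⟨hω1, hω2, hω3, hω4⟩
        · -- z and u₀ are both fixed vectors of gc  ⇒  gb fixes u₀ : contradiction
          obtain ⟨t, ht1, ht2⟩ := ker_unique (gc.val 0 0 - 1) (gc.val 0 1) (gc.val 1 0)
            (gc.val 1 1 - 1) hNc x₀ y₀ hu0
            ((ker_fix _ _ _ _).mpr stepB.1) ((ker_fix2 _ _ _ _).mpr stepB.2) z1 z2
            ((ker_fix _ _ _ _).mpr hCz1) ((ker_fix2 _ _ _ _).mpr hCz2)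
          have htne : t ≠ 0 := by
            rintro rfl
            rw [mul_zero] at ht1 ht2
            exact hz ⟨ht1, ht2⟩
          exact hbfix ⟨fix_scale _ _ _ _ _ _ _ htne ht1 ht2 hBz1,
            fix_scale2 _ _ _ _ _ _ _ htne ht1 ht2 hBz2⟩
        · -- ω and w are both fixed covectors of gb ⇒ gc cofixes w : contradiction
          obtain ⟨t, ht1, ht2⟩ := coker_unique (gb.val 0 0 - 1) (gb.val 0 1) (gb.val 1 0)
            (gb.val 1 1 - 1) hNb w1 w2 hw0
            ((coker_fix _ _ _ _).mpr stepA.1) ((coker_fix2 _ _ _ _).mpr stepA.2) ω1 ω2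
            ((coker_fix _ _ _ _).mpr hω1) ((coker_fix2 _ _ _ _).mpr hω2)
          have htne : t ≠ 0 := by
            rintro rfl
            rw [zero_mul] at ht1 ht2
            exact hω ⟨ht1, ht2⟩
          exact hccof ⟨cofix_scale _ _ _ _ _ _ _ htne ht1 ht2 hω3,
            cofix_scale2 _ _ _ _ _ _ _ htne ht1 ht2 hω4⟩
      · push_neg at hcov
        obtain ⟨P, hPaff, hP⟩ := conj_covector w1 w2 hw0
        exact ⟨P, hPaff, Or.inl fun g hg => hP g (haff g hg) (hcov g hg).1 (hcov g hg).2⟩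
    · push_neg at hvec
      obtain ⟨P, hPaff, hP⟩ := conj_vector x₀ y₀ hu0
      exact ⟨P, hPaff, Or.inr fun g hg => hP g (haff g hg) (hvec g hg).1 (hvec g hg).2⟩
  · push_neg at htriv
    refine ⟨1, ⟨by simp [Matrix.one_apply], by simp [Matrix.one_apply],
      by simp [Matrix.one_apply]⟩, Or.inr fun g hg => ?_⟩
    rw [inv_one, one_mul, mul_one]
    obtain ⟨e1, e2, e3, e4⟩ := htriv g hg
    exact ⟨e1, e3, by rw [e4]; exact one_ne_zero, haff g hg⟩
end
end

section
/- Let Γ be a subgroup of Aff(2,ℍ) acting freely on ℍ² and suppose that h(Γ) = {h(A) : A ∈ Γ} is an abelian group. Then Γ is conjugate in Aff(2,ℍ) to a subgroup of the group of all matrices of the form [[1,0,r],[0,d,s],[0,0,1]] with d ≠ 0, or to a subgroup of the group of all matrices of the form [[1,b,r],[0,1,s],[0,0,1]]. -/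
open Quaternion Matrix

noncomputable section

/-- The holonomy part of an affine matrix `[[a,b,r],[c,d,s],[0,0,1]]`:
the 2×2 matrix `[[a,b],[c,d]]`. -/
def holonomy (M : Matrix (Fin 3) (Fin 3) ℍ[ℝ]) : Matrix (Fin 2) (Fin 2) ℍ[ℝ] :=
  Matrix.of fun i j : Fin 2 => M (Fin.castSucc i) (Fin.castSucc j)

/-- Shape `[[1,0,r],[0,d,s],[0,0,1]]` with `d ≠ 0`. -/
def InH1 (M : Matrix (Fin 3) (Fin 3) ℍ[ℝ]) : Prop :=
  M 0 0 = 1 ∧ M 0 1 = 0 ∧ M 1 0 = 0 ∧ M 1 1 ≠ 0 ∧ IsAffMat M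

/-- Shape `[[1,b,r],[0,1,s],[0,0,1]]`. -/
def InH2 (M : Matrix (Fin 3) (Fin 3) ℍ[ℝ]) : Prop :=
  M 0 0 = 1 ∧ M 1 0 = 0 ∧ M 1 1 = 1 ∧ IsAffMat M

abbrev M2 := Matrix (Fin 2) (Fin 2) ℍ[ℝ]
abbrev M3 := Matrix (Fin 3) (Fin 3) ℍ[ℝ]

/-- action of a 2x2 matrix on a pair -/
def hact (N : M2) (p : ℍ[ℝ] × ℍ[ℝ]) : ℍ[ℝ] × ℍ[ℝ] :=
  (N 0 0 * p.1 + N 0 1 * p.2, N 1 0 * p.1 + N 1 1 * p.2)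

lemma hact_mul (N P : M2) (p : ℍ[ℝ] × ℍ[ℝ]) : hact (N*P) p = hact N (hact P p) := by
  simp only [hact, Matrix.mul_apply, Fin.sum_univ_two, Prod.mk.injEq]
  constructor <;> noncomm_ring

lemma hact_one (p : ℍ[ℝ] × ℍ[ℝ]) : hact 1 p = p := by
  simp [hact, Matrix.one_apply]

lemma hact_zero (N : M2) : hact N 0 = 0 := by simp [hact]

structure Good (S : Set M2) : Prop where
  one : (1:M2) ∈ S
  mul : ∀ h ∈ S, ∀ k ∈ S, h * k ∈ S
  inv : ∀ h ∈ S, ∃ k ∈ S, h * k = 1 ∧ k * h = 1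
  comm : ∀ h ∈ S, ∀ k ∈ S, h * k = k * h
  fix : ∀ h ∈ S, ∃ p : ℍ[ℝ] × ℍ[ℝ], p ≠ 0 ∧ hact h p = p

def cw (Q Qi : M2) (S : Set M2) : Set M2 := {m | ∃ h ∈ S, m = Qi * h * Q}

lemma qconj_mul {Q Qi : M2} (hQQi : Q * Qi = 1) (a b : M2) :
    (Qi*a*Q)*(Qi*b*Q) = Qi*(a*b)*Q := by
  simp only [mul_assoc]
  rw [← mul_assoc Q Qi, hQQi, one_mul]

lemma good_cw {S : Set M2} {Q Qi : M2} (hS : Good S) (hQQi : Q*Qi = 1) (hQiQ : Qi*Q = 1) :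
    Good (cw Q Qi S) := by
  constructor
  · exact ⟨1, hS.one, by rw [mul_one, hQiQ]⟩
  · rintro m ⟨a, ha, rfl⟩ k ⟨b, hb, rfl⟩
    exact ⟨a*b, hS.mul a ha b hb, qconj_mul hQQi a b⟩
  · rintro m ⟨a, ha, rfl⟩
    obtain ⟨b, hb, e1, e2⟩ := hS.inv a ha
    exact ⟨Qi*b*Q, ⟨b, hb, rfl⟩, by rw [qconj_mul hQQi, e1, mul_one, hQiQ],
      by rw [qconj_mul hQQi, e2, mul_one, hQiQ]⟩
  · rintro m ⟨a, ha, rfl⟩ k ⟨b, hb, rfl⟩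
    rw [qconj_mul hQQi, qconj_mul hQQi, hS.comm a ha b hb]
  · rintro m ⟨a, ha, rfl⟩
    obtain ⟨p, hp, hfp⟩ := hS.fix a ha
    refine ⟨hact Qi p, ?_, ?_⟩
    · intro h0
      apply hp
      have : hact Q (hact Qi p) = hact Q 0 := by rw [h0]
      rwa [← hact_mul, hQQi, hact_one, hact_zero] at this
    · rw [← hact_mul]
      have e : (Qi*a*Q)*Qi = Qi*a := by rw [mul_assoc (Qi*a) Q Qi, hQQi, mul_one]
      rw [e, hact_mul, hfp]
lemma holonomy_one : holonomy (1 : M3) = 1 := by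
  ext i j : 1
  simp [holonomy, Matrix.one_apply, Fin.castSucc_inj]

lemma isAffMat_one : IsAffMat (1 : M3) := by
  refine ⟨?_, ?_, ?_⟩ <;> simp [Matrix.one_apply]

lemma isAffMat_mul {A B : M3} (hA : IsAffMat A) (hB : IsAffMat B) : IsAffMat (A*B) := by
  obtain ⟨a1, a2, a3⟩ := hA; obtain ⟨b1, b2, b3⟩ := hB
  refine ⟨?_, ?_, ?_⟩ <;>
    simp [Matrix.mul_apply, Fin.sum_univ_three, a1, a2, a3, b1, b2, b3]

lemma holonomy_mul (A B : M3) (hB : IsAffMat B) : holonomy (A*B) = holonomy A * holonomy B := by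
  obtain ⟨b1, b2, b3⟩ := hB
  ext i j : 1
  fin_cases i <;> fin_cases j <;>
    simp [holonomy, Matrix.mul_apply, Fin.sum_univ_three, Fin.sum_univ_two, b1, b2]

lemma isAffMat_inv (g : M3ˣ) (hg : IsAffMat g.val) : IsAffMat (Units.val g⁻¹) := by
  obtain ⟨a1, a2, a3⟩ := hg
  generalize hk : Units.val g⁻¹ = k at *
  have e : ∀ j, (g.val * k) 2 j = (1:M3) 2 j := fun j => by rw [← hk, g.mul_inv]
  refine ⟨?_, ?_, ?_⟩
  · have := e 0; simpa [Matrix.mul_apply, Fin.sum_univ_three, a1, a2, a3, Matrix.one_apply] using this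
  · have := e 1; simpa [Matrix.mul_apply, Fin.sum_univ_three, a1, a2, a3, Matrix.one_apply] using this
  · have := e 2; simpa [Matrix.mul_apply, Fin.sum_univ_three, a1, a2, a3, Matrix.one_apply] using this

/-- every element of a freely acting affine group has a holonomy fixed vector -/
lemma exists_fixed_vec (Γ : Subgroup M3ˣ) (hfree : ActsFreely Γ)
    (g : M3ˣ) (hg : g ∈ Γ) :
    ∃ p : ℍ[ℝ] × ℍ[ℝ], p ≠ 0 ∧ hact (holonomy g.val) p = p := by
  by_contra hcon
  push_neg at hcon
  have hker : ∀ p : ℍ[ℝ] × ℍ[ℝ], hact (holonomy g.val) p = p → p = 0 := by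
    intro p hp
    by_contra h0
    exact hcon p h0 hp
  let f : (ℍ[ℝ] × ℍ[ℝ]) →ₗ[ℝ] (ℍ[ℝ] × ℍ[ℝ]) :=
    { toFun := fun p => (g.val 0 0 * p.1 + g.val 0 1 * p.2 - p.1,
        g.val 1 0 * p.1 + g.val 1 1 * p.2 - p.2)
      map_add' := by
        intro p q
        refine Prod.ext ?_ ?_ <;>
          simp only [Prod.fst_add, Prod.snd_add, mul_add] <;> abel
      map_smul' := by
        intro r p
        refine Prod.ext ?_ ?_ <;>
          simp [Algebra.mul_smul_comm, smul_sub, smul_add] }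
  have hinj : Function.Injective f := by
    rw [← LinearMap.ker_eq_bot, LinearMap.ker_eq_bot']
    intro m hm
    apply hker
    have h1 : g.val 0 0 * m.1 + g.val 0 1 * m.2 - m.1 = 0 := congrArg Prod.fst hm
    have h2 : g.val 1 0 * m.1 + g.val 1 1 * m.2 - m.2 = 0 := congrArg Prod.snd hm
    rw [sub_eq_zero] at h1 h2
    exact Prod.ext h1 h2
  have hsurj : Function.Surjective f := (LinearMap.injective_iff_surjective).mp hinj
  obtain ⟨p, hp⟩ := hsurj (-(g.val 0 2), -(g.val 1 2))
  have h1 : g.val 0 0 * p.1 + g.val 0 1 * p.2 - p.1 = -(g.val 0 2) := congrArg Prod.fst hp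
  have h2 : g.val 1 0 * p.1 + g.val 1 1 * p.2 - p.2 = -(g.val 1 2) := congrArg Prod.snd hp
  rw [sub_eq_iff_eq_add] at h1 h2
  have hfix : affAct g.val p = p := by
    refine Prod.ext ?_ ?_
    · show g.val 0 0 * p.1 + g.val 0 1 * p.2 + g.val 0 2 = p.1
      rw [h1]; abel
    · show g.val 1 0 * p.1 + g.val 1 1 * p.2 + g.val 1 2 = p.2
      rw [h2]; abel
  have hg1 : g = 1 := hfree g hg ⟨p, hfix⟩
  have : ((1:ℍ[ℝ]), (0:ℍ[ℝ])) = 0 := by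
    apply hker
    rw [hg1, Units.val_one, holonomy_one, hact_one]
  simp [Prod.ext_iff] at this
lemma mul_app (X Y : M2) (i j : Fin 2) : (X*Y) i j = X i 0 * Y 0 j + X i 1 * Y 1 j := by
  rw [Matrix.mul_apply, Fin.sum_univ_two]

lemma U_mul_Ui (c : ℍ[ℝ]) : (!![1,c;0,1] : M2) * !![1,-c;0,1] = 1 := by
  ext i j : 1
  fin_cases i <;> fin_cases j <;>
    simp [Matrix.mul_apply, Fin.sum_univ_two, Matrix.one_apply]

lemma Ui_mul_U (c : ℍ[ℝ]) : (!![1,-c;0,1] : M2) * !![1,c;0,1] = 1 := by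
  ext i j : 1
  fin_cases i <;> fin_cases j <;>
    simp [Matrix.mul_apply, Fin.sum_univ_two, Matrix.one_apply]

lemma swap_invol : (!![0,1;1,0] : M2) * (!![0,1;1,0] : M2) = 1 := by
  ext i j : 1
  fin_cases i <;> fin_cases j <;>
    simp [Matrix.mul_apply, Fin.sum_univ_two, Matrix.one_apply]

lemma conj_entries (c : ℍ[ℝ]) (h : M2) (h10 : h 1 0 = 0) :
    (!![1,-c;0,1] * h * !![1,c;0,1]) 0 0 = h 0 0 ∧
    (!![1,-c;0,1] * h * !![1,c;0,1]) 1 0 = 0 ∧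
    (!![1,-c;0,1] * h * !![1,c;0,1]) 1 1 = h 1 1 ∧
    (!![1,-c;0,1] * h * !![1,c;0,1]) 0 1 = h 0 0 * c + h 0 1 - c * h 1 1 := by
  refine ⟨?_, ?_, ?_, ?_⟩ <;>
    · simp only [mul_app, Matrix.of_apply, Matrix.cons_val', Matrix.cons_val_zero,
        Matrix.cons_val_one, Matrix.head_cons, Matrix.empty_val', Matrix.cons_val_fin_one,
        Matrix.head_fin_const, h10]
      noncomm_ring

lemma swap_conj (B : M2) :
    ((!![0,1;1,0] : M2) * B * (!![0,1;1,0] : M2)) 0 0 = B 1 1 ∧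
    ((!![0,1;1,0] : M2) * B * (!![0,1;1,0] : M2)) 0 1 = B 1 0 ∧
    ((!![0,1;1,0] : M2) * B * (!![0,1;1,0] : M2)) 1 0 = B 0 1 ∧
    ((!![0,1;1,0] : M2) * B * (!![0,1;1,0] : M2)) 1 1 = B 0 0 := by
  refine ⟨?_, ?_, ?_, ?_⟩ <;>
    · simp only [mul_app, Matrix.of_apply, Matrix.cons_val', Matrix.cons_val_zero,
        Matrix.cons_val_one, Matrix.head_cons, Matrix.empty_val', Matrix.cons_val_fin_one,
        Matrix.head_fin_const]
      noncomm_ring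

lemma comm_entry01 (A B : M2) (hAB : A * B = B * A) :
    A 0 0 * B 0 1 + A 0 1 * B 1 1 = B 0 0 * A 0 1 + B 0 1 * A 1 1 := by
  have := congrArg (fun M : M2 => M 0 1) hAB
  simpa [Matrix.mul_apply, Fin.sum_univ_two] using this

theorem key_tri (S : Set M2) (hS : Good S) (htri : ∀ h ∈ S, h 1 0 = 0) :
    ∃ Q Qi : M2, Q*Qi = 1 ∧ Qi*Q = 1 ∧
      ((∀ h ∈ S, (Qi*h*Q) 0 0 = 1 ∧ (Qi*h*Q) 0 1 = 0 ∧ (Qi*h*Q) 1 0 = 0 ∧ (Qi*h*Q) 1 1 ≠ 0) ∨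
       (∀ h ∈ S, (Qi*h*Q) 0 0 = 1 ∧ (Qi*h*Q) 1 0 = 0 ∧ (Qi*h*Q) 1 1 = 1)) := by
  have hunit : ∀ h ∈ S, h 0 0 ≠ 0 ∧ h 1 1 ≠ 0 := by
    intro h hh
    obtain ⟨k, hk, hk1, hk2⟩ := hS.inv h hh
    constructor
    · have e : k 0 0 * h 0 0 + k 0 1 * h 1 0 = 1 := by
        have := congrArg (fun M : M2 => M 0 0) hk2
        simpa [Matrix.mul_apply, Fin.sum_univ_two] using this
      rw [htri h hh, mul_zero, add_zero] at e
      exact right_ne_zero_of_mul_eq_one e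
    · have e : h 1 0 * k 0 1 + h 1 1 * k 1 1 = 1 := by
        have := congrArg (fun M : M2 => M 1 1) hk1
        simpa [Matrix.mul_apply, Fin.sum_univ_two] using this
      rw [htri h hh, zero_mul, zero_add] at e
      exact left_ne_zero_of_mul_eq_one e
  have hfs : ∀ h ∈ S, h 0 0 = 1 ∨ h 1 1 = 1 := by
    intro h hh
    obtain ⟨p, hp0, hfp⟩ := hS.fix h hh
    have e1 : h 0 0 * p.1 + h 0 1 * p.2 = p.1 := congrArg Prod.fst hfp
    have e2 : h 1 0 * p.1 + h 1 1 * p.2 = p.2 := congrArg Prod.snd hfp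
    rw [htri h hh, zero_mul, zero_add] at e2
    by_cases hp2 : p.2 = 0
    · left
      have hp1 : p.1 ≠ 0 := fun hp1 => hp0 (Prod.ext hp1 hp2)
      rw [hp2, mul_zero, add_zero] at e1
      exact mul_right_cancel₀ hp1 ((by rw [one_mul, e1]) : h 0 0 * p.1 = 1 * p.1)
    · right
      exact mul_right_cancel₀ hp2 ((by rw [one_mul, e2]) : h 1 1 * p.2 = 1 * p.2)
  by_cases hcase : ∀ h ∈ S, h 0 0 = 1
  · by_cases hcase2 : ∀ h ∈ S, h 1 1 = 1
    · refine ⟨1, 1, one_mul 1, one_mul 1, Or.inr ?_⟩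
      intro h hh
      rw [one_mul, mul_one]
      exact ⟨hcase h hh, htri h hh, hcase2 h hh⟩
    · push_neg at hcase2
      obtain ⟨h1, h1S, hd1⟩ := hcase2
      have hd1' : h1 1 1 - 1 ≠ 0 := sub_ne_zero.mpr hd1
      set c := h1 0 1 * (h1 1 1 - 1)⁻¹ with hc
      refine ⟨!![1,c;0,1], !![1,-c;0,1], U_mul_Ui c, Ui_mul_U c, Or.inl ?_⟩
      obtain ⟨a1, a2, a3, a4⟩ := conj_entries c h1 (htri h1 h1S)
      have hb1 : (!![1,-c;0,1] * h1 * !![1,c;0,1]) 0 1 = 0 := by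
        rw [a4, hcase h1 h1S, one_mul]
        have e3 : c * (h1 1 1 - 1) = h1 0 1 := by
          rw [hc, mul_assoc, inv_mul_cancel₀ hd1', mul_one]
        rw [mul_sub, mul_one] at e3
        have e5 : c + h1 0 1 - c * h1 1 1 = -(c * h1 1 1 - c) + h1 0 1 := by abel
        rw [e5, e3]
        abel
      intro h hh
      obtain ⟨b1e, b2e, b3e, b4e⟩ := conj_entries c h (htri h hh)
      have hcm : (!![1,-c;0,1] * h1 * !![1,c;0,1]) * (!![1,-c;0,1] * h * !![1,c;0,1])
               = (!![1,-c;0,1] * h * !![1,c;0,1]) * (!![1,-c;0,1] * h1 * !![1,c;0,1]) := by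
        rw [qconj_mul (U_mul_Ui c), qconj_mul (U_mul_Ui c), hS.comm h1 h1S h hh]
      have E := comm_entry01 _ _ hcm
      rw [hb1, a1, a3, b1e, hcase h1 h1S, hcase h hh] at E
      simp only [one_mul, zero_mul, mul_zero, add_zero, zero_add] at E
      have hz : (!![1,-c;0,1] * h * !![1,c;0,1]) 0 1 * (h1 1 1 - 1) = 0 := by
        rw [mul_sub, mul_one, ← E, sub_self]
      have hB01 : (!![1,-c;0,1] * h * !![1,c;0,1]) 0 1 = 0 := by
        rcases mul_eq_zero.mp hz with h' | h'
        · exact h'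
        · exact absurd h' hd1'
      refine ⟨?_, hB01, b2e, ?_⟩
      · rw [b1e]; exact hcase h hh
      · rw [b3e]; exact (hunit h hh).2
  · push_neg at hcase
    obtain ⟨A, hAS, hA00⟩ := hcase
    have hA11 : A 1 1 = 1 := (hfs A hAS).resolve_left hA00
    have hall11 : ∀ h ∈ S, h 1 1 = 1 := by
      intro B hB
      by_contra hB11
      have hB00 : B 0 0 = 1 := (hfs B hB).resolve_right hB11
      have hABS := hS.mul A hAS B hB
      have c00 : (A*B) 0 0 = A 0 0 := by
        rw [mul_app, htri B hB, mul_zero, add_zero, hB00, mul_one]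
      have c11 : (A*B) 1 1 = B 1 1 := by
        rw [mul_app, htri A hAS, zero_mul, zero_add, hA11, one_mul]
      rcases hfs _ hABS with hcc | hcc
      · rw [c00] at hcc; exact hA00 hcc
      · rw [c11] at hcc; exact hB11 hcc
    have hA0' : A 0 0 - 1 ≠ 0 := sub_ne_zero.mpr hA00
    set c := -((A 0 0 - 1)⁻¹ * A 0 1) with hc
    refine ⟨!![1,c;0,1] * (!![0,1;1,0] : M2), (!![0,1;1,0] : M2) * !![1,-c;0,1], ?_, ?_,
      Or.inl ?_⟩
    · rw [mul_assoc, ← mul_assoc (!![0,1;1,0] : M2) (!![0,1;1,0] : M2), swap_invol, one_mul,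
        U_mul_Ui]
    · rw [mul_assoc, ← mul_assoc (!![1,-c;0,1] : M2) (!![1,c;0,1] : M2), Ui_mul_U, one_mul,
        swap_invol]
    · intro h hh
      obtain ⟨b1e, b2e, b3e, b4e⟩ := conj_entries c h (htri h hh)
      obtain ⟨x1, x2, x3, x4⟩ := conj_entries c A (htri A hAS)
      have hA01' : (!![1,-c;0,1] * A * !![1,c;0,1]) 0 1 = 0 := by
        rw [x4, hA11, mul_one]
        have e3 : (A 0 0 - 1) * c = -(A 0 1) := by
          rw [hc, mul_neg, ← mul_assoc, mul_inv_cancel₀ hA0', one_mul]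
        rw [sub_mul, one_mul] at e3
        have e5 : A 0 0 * c + A 0 1 - c = (A 0 0 * c - c) + A 0 1 := by abel
        rw [e5, e3]
        abel
      have hcm : (!![1,-c;0,1] * A * !![1,c;0,1]) * (!![1,-c;0,1] * h * !![1,c;0,1])
               = (!![1,-c;0,1] * h * !![1,c;0,1]) * (!![1,-c;0,1] * A * !![1,c;0,1]) := by
        rw [qconj_mul (U_mul_Ui c), qconj_mul (U_mul_Ui c), hS.comm A hAS h hh]
      have E := comm_entry01 _ _ hcm
      rw [hA01', x1, x3, hA11, b1e, b3e, hall11 h hh] at E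
      simp only [one_mul, mul_one, zero_mul, mul_zero, add_zero, zero_add] at E
      have hB01 : (!![1,-c;0,1] * h * !![1,c;0,1]) 0 1 = 0 := by
        have hz : (A 0 0 - 1) * (!![1,-c;0,1] * h * !![1,c;0,1]) 0 1 = 0 := by
          rw [sub_mul, one_mul, E, sub_self]
        rcases mul_eq_zero.mp hz with h' | h'
        · exact absurd h' hA0'
        · exact h'
      have easc : ((!![0,1;1,0] : M2) * !![1,-c;0,1]) * h * (!![1,c;0,1] * (!![0,1;1,0] : M2))
             = (!![0,1;1,0] : M2) * (!![1,-c;0,1] * h * !![1,c;0,1]) * (!![0,1;1,0] : M2) := by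
        simp only [mul_assoc]
      obtain ⟨s1, s2, s3, s4⟩ := swap_conj (!![1,-c;0,1] * h * !![1,c;0,1])
      refine ⟨?_, ?_, ?_, ?_⟩
      · rw [easc, s1, b3e]; exact hall11 h hh
      · rw [easc, s2]; exact b2e
      · rw [easc, s3]; exact hB01
      · rw [easc, s4, b1e]; exact (hunit h hh).1
lemma comm_entry00 (A B : M2) (hAB : A * B = B * A) :
    A 0 0 * B 0 0 + A 0 1 * B 1 0 = B 0 0 * A 0 0 + B 0 1 * A 1 0 := by
  have := congrArg (fun M : M2 => M 0 0) hAB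
  simpa [Matrix.mul_apply, Fin.sum_univ_two] using this

lemma comm_entry10 (A B : M2) (hAB : A * B = B * A) :
    A 1 0 * B 0 0 + A 1 1 * B 1 0 = B 1 0 * A 0 0 + B 1 1 * A 1 0 := by
  have := congrArg (fun M : M2 => M 1 0) hAB
  simpa [Matrix.mul_apply, Fin.sum_univ_two] using this

theorem key (S : Set M2) (hS : Good S) :
    ∃ Q Qi : M2, Q*Qi = 1 ∧ Qi*Q = 1 ∧
      ((∀ h ∈ S, (Qi*h*Q) 0 0 = 1 ∧ (Qi*h*Q) 0 1 = 0 ∧ (Qi*h*Q) 1 0 = 0 ∧ (Qi*h*Q) 1 1 ≠ 0) ∨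
       (∀ h ∈ S, (Qi*h*Q) 0 0 = 1 ∧ (Qi*h*Q) 1 0 = 0 ∧ (Qi*h*Q) 1 1 = 1)) := by
  by_cases hex : ∃ h0 ∈ S, h0 ≠ 1
  · obtain ⟨h0, h0S, h0ne⟩ := hex
    obtain ⟨v, hv0, hfv⟩ := hS.fix h0 h0S
    obtain ⟨Q1, Q1i, hQ1, hQ1i, hcol0, hcol1⟩ :
        ∃ Q1 Q1i : M2, Q1*Q1i = 1 ∧ Q1i*Q1 = 1 ∧ Q1 0 0 = v.1 ∧ Q1 1 0 = v.2 := by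
      by_cases hv1 : v.1 = 0
      · have hv2 : v.2 ≠ 0 := by
          intro hv2; exact hv0 (Prod.ext hv1 hv2)
        refine ⟨!![0,1;v.2,0], !![0,v.2⁻¹;1,0], ?_, ?_, by simp [hv1], by simp⟩
        · ext i j : 1
          fin_cases i <;> fin_cases j <;>
            simp [Matrix.mul_apply, Fin.sum_univ_two, Matrix.one_apply,
              mul_inv_cancel₀ hv2, inv_mul_cancel₀ hv2]
        · ext i j : 1
          fin_cases i <;> fin_cases j <;>
            simp [Matrix.mul_apply, Fin.sum_univ_two, Matrix.one_apply,
              mul_inv_cancel₀ hv2, inv_mul_cancel₀ hv2]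
      · have hvv : v.2 * v.1⁻¹ * v.1 = v.2 := by
          rw [mul_assoc, inv_mul_cancel₀ hv1, mul_one]
        refine ⟨!![v.1, 0; v.2, 1], !![v.1⁻¹, 0; -(v.2*v.1⁻¹), 1], ?_, ?_, by simp, by simp⟩
        · ext i j : 1
          fin_cases i <;> fin_cases j <;>
            simp [Matrix.mul_apply, Fin.sum_univ_two, Matrix.one_apply,
              mul_inv_cancel₀ hv1, inv_mul_cancel₀ hv1, hvv]
        · ext i j : 1
          fin_cases i <;> fin_cases j <;>
            simp [Matrix.mul_apply, Fin.sum_univ_two, Matrix.one_apply,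
              mul_inv_cancel₀ hv1, inv_mul_cancel₀ hv1, hvv]
    have hS1 : Good (cw Q1 Q1i S) := good_cw hS hQ1 hQ1i
    -- the conjugated h0 fixes e1
    have hfe1 : (Q1i*h0*Q1) 0 0 = 1 ∧ (Q1i*h0*Q1) 1 0 = 0 := by
      have c1 : h0 0 0 * v.1 + h0 0 1 * v.2 = v.1 := congrArg Prod.fst hfv
      have c2 : h0 1 0 * v.1 + h0 1 1 * v.2 = v.2 := congrArg Prod.snd hfv
      have e0 : (h0*Q1) 0 0 = Q1 0 0 := by rw [mul_app, hcol0, hcol1, c1]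
      have e1 : (h0*Q1) 1 0 = Q1 1 0 := by rw [mul_app, hcol0, hcol1, c2]
      have k0 : (Q1i*(h0*Q1)) 0 0 = (Q1i*Q1) 0 0 := by
        rw [mul_app, e0, e1, ← mul_app]
      have k1 : (Q1i*(h0*Q1)) 1 0 = (Q1i*Q1) 1 0 := by
        rw [mul_app, e0, e1, ← mul_app]
      rw [← mul_assoc] at k0 k1
      rw [hQ1i] at k0 k1
      constructor
      · rw [k0]; simp [Matrix.one_apply]
      · rw [k1]; simp [Matrix.one_apply]
    have h0'ne : ¬((Q1i*h0*Q1) 0 1 = 0 ∧ (Q1i*h0*Q1) 1 1 = 1) := by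
      rintro ⟨e1, e2⟩
      apply h0ne
      have hid : Q1i*h0*Q1 = 1 := by
        ext i j : 1
        fin_cases i <;> fin_cases j <;>
          simp [hfe1.1, hfe1.2, e1, e2, Matrix.one_apply]
      have efold : Q1 * (Q1i*h0*Q1) * Q1i = h0 := by
        simp only [mul_assoc]
        rw [hQ1, mul_one, ← mul_assoc, hQ1, one_mul]
      rw [hid, mul_one, hQ1] at efold
      exact efold.symm
    have htri : ∀ m ∈ cw Q1 Q1i S, m 1 0 = 0 := by
      rintro m ⟨h, hhS, rfl⟩
      have hcm : (Q1i*h0*Q1) * (Q1i*h*Q1) = (Q1i*h*Q1) * (Q1i*h0*Q1) := by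
        rw [qconj_mul hQ1, qconj_mul hQ1, hS.comm h0 h0S h hhS]
      have E00 := comm_entry00 _ _ hcm
      have E10 := comm_entry10 _ _ hcm
      rw [hfe1.1, hfe1.2] at E00 E10
      simp only [one_mul, mul_one, zero_mul, mul_zero, add_zero, zero_add] at E00 E10
      -- E00 : m00 + b0 * m10 = m00 ;  E10 : d0 * m10 = m10
      by_cases hb0 : (Q1i*h0*Q1) 0 1 = 0
      · have hd0 : (Q1i*h0*Q1) 1 1 ≠ 1 := fun hd => h0'ne ⟨hb0, hd⟩
        have hz : ((Q1i*h0*Q1) 1 1 - 1) * ((Q1i*h*Q1) 1 0) = 0 := by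
          rw [sub_mul, one_mul, E10, sub_self]
        rcases mul_eq_zero.mp hz with h' | h'
        · exact absurd (by rwa [sub_eq_zero] at h') hd0
        · exact h'
      · have hz : (Q1i*h0*Q1) 0 1 * ((Q1i*h*Q1) 1 0) = 0 := by
          have e6 := congrArg (fun x => x - (Q1i*h*Q1) 0 0) E00
          simpa using e6
        rcases mul_eq_zero.mp hz with h' | h'
        · exact absurd h' hb0
        · exact h'
    obtain ⟨Q2, Q2i, hQ2, hQ2i, hcases⟩ := key_tri (cw Q1 Q1i S) hS1 htri
    refine ⟨Q1*Q2, Q2i*Q1i, ?_, ?_, ?_⟩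
    · rw [mul_assoc, ← mul_assoc Q2 Q2i, hQ2, one_mul, hQ1]
    · rw [mul_assoc, ← mul_assoc Q1i Q1, hQ1i, one_mul, hQ2i]
    · have easc : ∀ h : M2, (Q2i*Q1i)*h*(Q1*Q2) = Q2i*(Q1i*h*Q1)*Q2 := by
        intro h; simp only [mul_assoc]
      rcases hcases with hc | hc
      · left
        intro h hh
        have := hc (Q1i*h*Q1) ⟨h, hh, rfl⟩
        rw [easc h]
        exact this
      · right
        intro h hh
        have := hc (Q1i*h*Q1) ⟨h, hh, rfl⟩
        rw [easc h]
        exact this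
  · push_neg at hex
    exact key_tri S hS (fun h hh => by rw [hex h hh]; simp [Matrix.one_apply])
def emb (Q : M2) : M3 :=
  Matrix.of ![![Q 0 0, Q 0 1, 0], ![Q 1 0, Q 1 1, 0], ![0,0,1]]

lemma emb_aff (Q : M2) : IsAffMat (emb Q) := ⟨rfl, rfl, rfl⟩

lemma holonomy_emb (Q : M2) : holonomy (emb Q) = Q := by
  ext i j : 1
  fin_cases i <;> fin_cases j <;> simp [holonomy, emb]

lemma emb_mul (A B : M2) : emb A * emb B = emb (A*B) := by
  ext i j : 1
  fin_cases i <;> fin_cases j <;>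
    simp [emb, Matrix.mul_apply, Fin.sum_univ_three, Fin.sum_univ_two]

lemma emb_one : emb 1 = 1 := by
  ext i j : 1
  fin_cases i <;> fin_cases j <;> simp [emb, Matrix.one_apply, Matrix.vecHead, Matrix.vecTail]

/-- If `Γ ⊆ Aff(2,ℍ)` acts freely on ℍ² and its holonomy group `h(Γ)` is abelian, then
`Γ` is conjugate in Aff(2,ℍ) to a subgroup of the group of matrices `[[1,0,r],[0,d,s],[0,0,1]]`
(`d ≠ 0`) or to a subgroup of the group of matrices `[[1,b,r],[0,1,s],[0,0,1]]`. -/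
theorem abelian_holonomy_conjugation
    (Γ : Subgroup (Matrix (Fin 3) (Fin 3) ℍ[ℝ])ˣ)
    (haff : ∀ g ∈ Γ, IsAffMat g.val)
    (hfree : ActsFreely Γ)
    (habel : ∀ A ∈ Γ, ∀ B ∈ Γ,
      holonomy A.val * holonomy B.val = holonomy B.val * holonomy A.val) :
    ∃ P : (Matrix (Fin 3) (Fin 3) ℍ[ℝ])ˣ, IsAffMat P.val ∧
      ((∀ g ∈ Γ, InH1 ((P⁻¹ * g * P).val)) ∨ (∀ g ∈ Γ, InH2 ((P⁻¹ * g * P).val))) := by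
  set S : Set M2 := {m | ∃ g ∈ Γ, m = holonomy (g : M3ˣ).val} with hSdef
  have hGood : Good S := by
    constructor
    · exact ⟨1, Γ.one_mem, by rw [Units.val_one, holonomy_one]⟩
    · rintro m ⟨a, ha, rfl⟩ k ⟨b, hb, rfl⟩
      refine ⟨a*b, Γ.mul_mem ha hb, ?_⟩
      rw [Units.val_mul, holonomy_mul _ _ (haff b hb)]
    · rintro m ⟨a, ha, rfl⟩
      refine ⟨holonomy (Units.val a⁻¹), ⟨a⁻¹, Γ.inv_mem ha, rfl⟩, ?_, ?_⟩
      · rw [← holonomy_mul _ _ (isAffMat_inv a (haff a ha)), a.mul_inv, holonomy_one]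
      · rw [← holonomy_mul _ _ (haff a ha), a.inv_mul, holonomy_one]
    · rintro m ⟨a, ha, rfl⟩ k ⟨b, hb, rfl⟩
      exact habel a ha b hb
    · rintro m ⟨a, ha, rfl⟩
      exact exists_fixed_vec Γ hfree a ha
  obtain ⟨Q, Qi, hQQi, hQiQ, hc⟩ := key S hGood
  have hPmul : emb Q * emb Qi = 1 := by rw [emb_mul, hQQi, emb_one]
  have hPmul' : emb Qi * emb Q = 1 := by rw [emb_mul, hQiQ, emb_one]
  refine ⟨⟨emb Q, emb Qi, hPmul, hPmul'⟩, emb_aff Q, ?_⟩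
  have hPinv : ∀ g : M3ˣ,
      (((⟨emb Q, emb Qi, hPmul, hPmul'⟩ : M3ˣ))⁻¹ * g * ⟨emb Q, emb Qi, hPmul, hPmul'⟩).val
        = emb Qi * g.val * emb Q := fun g => rfl
  have haffconj : ∀ g ∈ Γ, IsAffMat (emb Qi * g.val * emb Q) := fun g hg =>
    isAffMat_mul (isAffMat_mul (emb_aff Qi) (haff g hg)) (emb_aff Q)
  have hholconj : ∀ g ∈ Γ, holonomy (emb Qi * g.val * emb Q) = Qi * holonomy g.val * Q := by
    intro g hg
    rw [holonomy_mul _ _ (emb_aff Q), holonomy_mul _ _ (haff g hg), holonomy_emb, holonomy_emb]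
  rcases hc with hc | hc
  · left
    intro g hg
    obtain ⟨e1, e2, e3, e4⟩ := hc (holonomy g.val) ⟨g, hg, rfl⟩
    rw [hPinv g]
    refine ⟨?_, ?_, ?_, ?_, haffconj g hg⟩
    · have : holonomy (emb Qi * g.val * emb Q) 0 0 = 1 := by rw [hholconj g hg]; exact e1
      exact this
    · have : holonomy (emb Qi * g.val * emb Q) 0 1 = 0 := by rw [hholconj g hg]; exact e2
      exact this
    · have : holonomy (emb Qi * g.val * emb Q) 1 0 = 0 := by rw [hholconj g hg]; exact e3
      exact this
    · have : holonomy (emb Qi * g.val * emb Q) 1 1 ≠ 0 := by rw [hholconj g hg]; exact e4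
      exact this
  · right
    intro g hg
    obtain ⟨e1, e2, e3⟩ := hc (holonomy g.val) ⟨g, hg, rfl⟩
    rw [hPinv g]
    refine ⟨?_, ?_, ?_, haffconj g hg⟩
    · have : holonomy (emb Qi * g.val * emb Q) 0 0 = 1 := by rw [hholconj g hg]; exact e1
      exact this
    · have : holonomy (emb Qi * g.val * emb Q) 1 0 = 0 := by rw [hholconj g hg]; exact e2
      exact this
    · have : holonomy (emb Qi * g.val * emb Q) 1 1 = 1 := by rw [hholconj g hg]; exact e3
      exact this
end
end

section
/- Let Γ be a subgroup of G₁ acting freely on ℍ². Then h(Γ) = {h(A) : A ∈ Γ} is an abelian group, and there exists an imaginary unit I ∈ ℍ (i.e. I² = −1) such that for every element [[a,b,r],[0,1,s],[0,0,1]] of Γ, the entry a lies in the real plane ℝ + ℝI spanned by 1 and I. -/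
open Quaternion Matrix

noncomputable section

set_option maxHeartbeats 1000000

-- entry reductions
lemma hol00 (M : Matrix (Fin 3) (Fin 3) ℍ[ℝ]) : holonomy M 0 0 = M 0 0 := rfl
lemma hol01 (M : Matrix (Fin 3) (Fin 3) ℍ[ℝ]) : holonomy M 0 1 = M 0 1 := rfl
lemma hol10 (M : Matrix (Fin 3) (Fin 3) ℍ[ℝ]) : holonomy M 1 0 = M 1 0 := rfl
lemma hol11 (M : Matrix (Fin 3) (Fin 3) ℍ[ℝ]) : holonomy M 1 1 = M 1 1 := rfl

lemma holonomy_mul_s6 (M N : Matrix (Fin 3) (Fin 3) ℍ[ℝ]) (h0 : N 2 0 = 0) (h1 : N 2 1 = 0) :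
    holonomy (M * N) = holonomy M * holonomy N := by
  refine Matrix.ext fun i j => ?_
  fin_cases i <;> fin_cases j <;>
    simp [holonomy, Matrix.mul_apply, Fin.sum_univ_three, Fin.sum_univ_two, h0, h1]

lemma holonomy_eq_one (M : Matrix (Fin 3) (Fin 3) ℍ[ℝ]) (e00 : M 0 0 = 1) (e01 : M 0 1 = 0)
    (e10 : M 1 0 = 0) (e11 : M 1 1 = 1) : holonomy M = 1 := by
  refine Matrix.ext fun i j => ?_
  fin_cases i <;> fin_cases j <;>
    simp [holonomy, Matrix.one_apply, e00, e01, e10, e11]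

lemma holonomy_one_s6 : holonomy (1 : Matrix (Fin 3) (Fin 3) ℍ[ℝ]) = 1 := by
  refine Matrix.ext fun i j => ?_
  fin_cases i <;> fin_cases j <;> simp [holonomy, Matrix.one_apply]

lemma quat_comm_span (S : Set ℍ[ℝ]) (hcomm : ∀ a ∈ S, ∀ b ∈ S, a * b = b * a) :
    ∃ I : ℍ[ℝ], I ^ 2 = -1 ∧ ∀ a ∈ S, ∃ x y : ℝ, a = (x : ℍ[ℝ]) + (y : ℍ[ℝ]) * I := by
  by_cases hex : ∃ q ∈ S, q.imI ^ 2 + q.imJ ^ 2 + q.imK ^ 2 ≠ 0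
  · obtain ⟨q, hq, hn⟩ := hex
    obtain ⟨u1, u2, u3, hu⟩ : ∃ u1 u2 u3 : ℝ, q.imI = u1 ∧ q.imJ = u2 ∧ q.imK = u3 :=
      ⟨_, _, _, rfl, rfl, rfl⟩
    obtain ⟨hu1, hu2, hu3⟩ := hu
    rw [hu1, hu2, hu3] at hn
    have hn2 : 0 < u1 ^ 2 + u2 ^ 2 + u3 ^ 2 := lt_of_le_of_ne (by positivity) (Ne.symm hn)
    obtain ⟨c, hc, hcpos⟩ : ∃ c : ℝ, c ^ 2 = u1 ^ 2 + u2 ^ 2 + u3 ^ 2 ∧ 0 < c :=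
      ⟨Real.sqrt _, Real.sq_sqrt hn2.le, Real.sqrt_pos.mpr hn2⟩
    have hc0 : c ≠ 0 := hcpos.ne'
    obtain ⟨I0, r0, r1, r2, r3⟩ : ∃ I0 : ℍ[ℝ], I0.re = 0 ∧ I0.imI = u1 / c ∧ I0.imJ = u2 / c ∧
        I0.imK = u3 / c := ⟨⟨0, u1 / c, u2 / c, u3 / c⟩, rfl, rfl, rfl, rfl⟩
    refine ⟨I0, ?_, ?_⟩
    · rw [sq]
      ext <;>
        simp only [Quaternion.re_mul, Quaternion.imI_mul, Quaternion.imJ_mul,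
          Quaternion.imK_mul, Quaternion.re_neg, Quaternion.imI_neg, Quaternion.imJ_neg,
          Quaternion.imK_neg, Quaternion.re_one, Quaternion.imI_one, Quaternion.imJ_one,
          Quaternion.imK_one, r0, r1, r2, r3] <;>
        field_simp <;> nlinarith [hc, hcpos]
    · intro a ha
      have h := hcomm a ha q hq
      have e1 : a.imJ * u3 = a.imK * u2 := by
        have := congrArg QuaternionAlgebra.imI h
        rw [Quaternion.imI_mul, Quaternion.imI_mul, hu2, hu3] at this
        linarith
      have e2 : a.imK * u1 = a.imI * u3 := by
        have := congrArg QuaternionAlgebra.imJ h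
        rw [Quaternion.imJ_mul, Quaternion.imJ_mul, hu1, hu3] at this
        linarith
      have e3 : a.imI * u2 = a.imJ * u1 := by
        have := congrArg QuaternionAlgebra.imK h
        rw [Quaternion.imK_mul, Quaternion.imK_mul, hu1, hu2] at this
        linarith
      refine ⟨a.re, (a.imI * u1 + a.imJ * u2 + a.imK * u3) / c, ?_⟩
      ext <;>
        simp only [Quaternion.re_add, Quaternion.imI_add, Quaternion.imJ_add,
          Quaternion.imK_add, Quaternion.re_mul, Quaternion.imI_mul, Quaternion.imJ_mul,
          Quaternion.imK_mul, Quaternion.re_coe, Quaternion.imI_coe, Quaternion.imJ_coe,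
          Quaternion.imK_coe, r0, r1, r2, r3]
      · ring
      · field_simp
        linear_combination a.imI * hc + u2 * e3 - u3 * e2
      · field_simp
        linear_combination a.imJ * hc - u1 * e3 + u3 * e1
      · field_simp
        linear_combination a.imK * hc + u1 * e2 - u2 * e1
  · push_neg at hex
    obtain ⟨I0, r0, r1, r2, r3⟩ : ∃ I0 : ℍ[ℝ], I0.re = 0 ∧ I0.imI = 1 ∧ I0.imJ = 0 ∧
        I0.imK = 0 := ⟨⟨0, 1, 0, 0⟩, rfl, rfl, rfl, rfl⟩
    refine ⟨I0, ?_, ?_⟩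
    · rw [sq]; ext <;> simp [Quaternion.re_mul, Quaternion.imI_mul, Quaternion.imJ_mul,
        Quaternion.imK_mul, r0, r1, r2, r3]
    intro a ha
    have h := hex a ha
    have h1 : a.imI = 0 := by nlinarith [sq_nonneg a.imI, sq_nonneg a.imJ, sq_nonneg a.imK]
    have h2 : a.imJ = 0 := by nlinarith [sq_nonneg a.imI, sq_nonneg a.imJ, sq_nonneg a.imK]
    have h3 : a.imK = 0 := by nlinarith [sq_nonneg a.imI, sq_nonneg a.imJ, sq_nonneg a.imK]
    refine ⟨a.re, 0, ?_⟩
    ext <;>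
      simp only [Quaternion.re_add, Quaternion.imI_add, Quaternion.imJ_add,
        Quaternion.imK_add, Quaternion.re_mul, Quaternion.imI_mul, Quaternion.imJ_mul,
        Quaternion.imK_mul, Quaternion.re_coe, Quaternion.imI_coe, Quaternion.imJ_coe,
        Quaternion.imK_coe, h1, h2, h3, r0, r1, r2, r3] <;> ring

/-- If `Γ ⊆ G₁` acts freely on ℍ², then the holonomy group `h(Γ)` is abelian and there
is an imaginary unit `I` such that the `(0,0)` entry `a` of every element of `Γ` lies
in the plane `ℝ + ℝI`. -/
theorem subgroup_of_G1_abelian_holonomy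
    (Γ : Subgroup (Matrix (Fin 3) (Fin 3) ℍ[ℝ])ˣ)
    (hG1 : ∀ g ∈ Γ, InG1 g.val)
    (hfree : ActsFreely Γ) :
    (∀ A ∈ Γ, ∀ B ∈ Γ,
      holonomy A.val * holonomy B.val = holonomy B.val * holonomy A.val) ∧
    ∃ I : ℍ[ℝ], I ^ 2 = -1 ∧
      ∀ g ∈ Γ, ∃ x y : ℝ, g.val 0 0 = (x : ℍ[ℝ]) + (y : ℍ[ℝ]) * I := by
  -- s-component is additive
  have hsmul : ∀ g ∈ Γ, ∀ k ∈ Γ,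
      (g * k).val 1 2 = g.val 1 2 + k.val 1 2 := by
    intro g hg k hk
    have h10 := (hG1 g hg).2.1
    have h11 := (hG1 g hg).2.2.1
    have h22 := (hG1 k hk).2.2.2.2.2
    show (g.val * k.val) 1 2 = _
    rw [Matrix.mul_apply, Fin.sum_univ_three, h10, h11, h22]
    noncomm_ring
  -- freeness: s = 0 forces a = 1 and b = 0
  have hkey : ∀ g ∈ Γ, g.val 1 2 = 0 → g.val 0 0 = 1 ∧ g.val 0 1 = 0 := by
    intro g hg hs
    obtain ⟨ha0, h10, h11, h20, h21, h22⟩ := hG1 g hg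
    by_cases ha : g.val 0 0 = 1
    · refine ⟨ha, ?_⟩
      by_contra hb
      have hfix : affAct g.val (0, -((g.val 0 1)⁻¹ * g.val 0 2)) =
          (0, -((g.val 0 1)⁻¹ * g.val 0 2)) := by
        unfold affAct
        rw [ha, h10, h11, hs]
        refine Prod.ext ?_ (by simp)
        simp [mul_neg, ← mul_assoc, mul_inv_cancel₀ hb]
      have h1 := hfree g hg ⟨_, hfix⟩
      rw [h1] at hb
      exact hb (by simp [Matrix.one_apply])
    · exfalso
      have ha1 : g.val 0 0 - 1 ≠ 0 := sub_ne_zero.mpr ha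
      have hfix : affAct g.val ((g.val 0 0 - 1)⁻¹ * (-(g.val 0 2)), 0) =
          ((g.val 0 0 - 1)⁻¹ * (-(g.val 0 2)), 0) := by
        unfold affAct
        rw [h10, h11, hs]
        refine Prod.ext ?_ (by simp)
        show g.val 0 0 * ((g.val 0 0 - 1)⁻¹ * -g.val 0 2) + g.val 0 1 * 0 + g.val 0 2 = _
        have key : (g.val 0 0 - 1) * ((g.val 0 0 - 1)⁻¹ * -g.val 0 2) = -g.val 0 2 := by
          rw [← mul_assoc, mul_inv_cancel₀ ha1, one_mul]
        have expand : g.val 0 0 * ((g.val 0 0 - 1)⁻¹ * -g.val 0 2)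
            = (g.val 0 0 - 1) * ((g.val 0 0 - 1)⁻¹ * -g.val 0 2)
              + (g.val 0 0 - 1)⁻¹ * -g.val 0 2 := by noncomm_ring
        rw [expand, key]
        noncomm_ring
      have h1 := hfree g hg ⟨_, hfix⟩
      rw [h1] at ha
      exact ha (by simp [Matrix.one_apply])
  -- commutators have holonomy 1
  have hone : (1 : Matrix (Fin 3) (Fin 3) ℍ[ℝ]) 1 2 = 0 :=
    Matrix.one_apply_ne (by decide)
  have hsinv : ∀ g ∈ Γ, (g⁻¹ : _).val 1 2 = -(g.val 1 2) := by
    intro g hg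
    have h := hsmul g hg g⁻¹ (inv_mem hg)
    rw [mul_inv_cancel] at h
    have : (0 : ℍ[ℝ]) = g.val 1 2 + (g⁻¹ : _).val 1 2 := by
      rw [← h]; exact hone.symm
    linear_combination (norm := abel) -this
  have hC : ∀ A ∈ Γ, ∀ B ∈ Γ, holonomy ((A * B * A⁻¹ * B⁻¹ : _).val) = 1 := by
    intro A hA B hB
    have hmem : A * B * A⁻¹ * B⁻¹ ∈ Γ :=
      mul_mem (mul_mem (mul_mem hA hB) (inv_mem hA)) (inv_mem hB)
    have hs : (A * B * A⁻¹ * B⁻¹ : _).val 1 2 = 0 := by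
      rw [hsmul _ (mul_mem (mul_mem hA hB) (inv_mem hA)) B⁻¹ (inv_mem hB),
        hsmul _ (mul_mem hA hB) A⁻¹ (inv_mem hA), hsmul _ hA B hB, hsinv A hA, hsinv B hB]
      abel
    obtain ⟨hc1, hc0⟩ := hkey _ hmem hs
    obtain ⟨_, h10, h11, _⟩ := hG1 _ hmem
    exact holonomy_eq_one _ hc1 hc0 h10 h11
  -- holonomy is multiplicative on Γ
  have hmul : ∀ A : (Matrix (Fin 3) (Fin 3) ℍ[ℝ])ˣ, ∀ B ∈ Γ,
      holonomy ((A * B).val) = holonomy A.val * holonomy B.val := by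
    intro A B hB
    exact holonomy_mul_s6 _ _ (hG1 B hB).2.2.2.1 (hG1 B hB).2.2.2.2.1
  have hinv : ∀ A ∈ Γ, holonomy A.val * holonomy (A⁻¹ : _).val = 1 ∧
      holonomy (A⁻¹ : _).val * holonomy A.val = 1 := by
    intro A hA
    constructor
    · rw [← hmul A A⁻¹ (inv_mem hA), mul_inv_cancel, Units.val_one, holonomy_one_s6]
    · rw [← hmul A⁻¹ A hA, inv_mul_cancel, Units.val_one, holonomy_one_s6]
  -- part 1
  have part1 : ∀ A ∈ Γ, ∀ B ∈ Γ,
      holonomy A.val * holonomy B.val = holonomy B.val * holonomy A.val := by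
    intro A hA B hB
    have hfull : holonomy A.val * holonomy B.val * holonomy (A⁻¹ : _).val *
        holonomy (B⁻¹ : _).val = 1 := by
      have e := hC A hA B hB
      rw [hmul _ B⁻¹ (inv_mem hB), hmul _ A⁻¹ (inv_mem hA), hmul A B hB] at e
      exact e
    have hA' := hinv A hA
    have hB' := hinv B hB
    have e2 : holonomy A.val * holonomy B.val * holonomy (A⁻¹ : _).val = holonomy B.val := by
      calc holonomy A.val * holonomy B.val * holonomy (A⁻¹ : _).val
          = holonomy A.val * holonomy B.val * holonomy (A⁻¹ : _).val *
            (holonomy (B⁻¹ : _).val * holonomy B.val) := by rw [hB'.2, mul_one]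
        _ = holonomy A.val * holonomy B.val * holonomy (A⁻¹ : _).val *
            holonomy (B⁻¹ : _).val * holonomy B.val :=
            (mul_assoc (holonomy A.val * holonomy B.val * holonomy (A⁻¹ : _).val)
              (holonomy (B⁻¹ : _).val) (holonomy B.val)).symm
        _ = holonomy B.val := by rw [hfull, one_mul]
    calc holonomy A.val * holonomy B.val
        = holonomy A.val * holonomy B.val * (holonomy (A⁻¹ : _).val * holonomy A.val) := by
          rw [hA'.2, mul_one]
      _ = holonomy A.val * holonomy B.val * holonomy (A⁻¹ : _).val * holonomy A.val :=
          (mul_assoc (holonomy A.val * holonomy B.val) (holonomy (A⁻¹ : _).val)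
            (holonomy A.val)).symm
      _ = holonomy B.val * holonomy A.val := by rw [e2]
  refine ⟨part1, ?_⟩
  -- part 2
  have hcomm : ∀ a ∈ {a : ℍ[ℝ] | ∃ g ∈ Γ, g.val 0 0 = a},
      ∀ b ∈ {a : ℍ[ℝ] | ∃ g ∈ Γ, g.val 0 0 = a}, a * b = b * a := by
    rintro a ⟨g, hg, rfl⟩ b ⟨k, hk, rfl⟩
    have h := congrFun (congrFun (part1 g hg k hk) 0) 0
    simp only [Matrix.mul_apply, Fin.sum_univ_two, hol00, hol01, hol10] at h
    rw [(hG1 g hg).2.1, (hG1 k hk).2.1] at h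
    simpa using h
  obtain ⟨I, hI, hspan⟩ := quat_comm_span _ hcomm
  exact ⟨I, hI, fun g hg => hspan _ ⟨g, hg, rfl⟩⟩
end
end

section
/- Let Γ be an abelian subgroup of Aff(2,ℍ) acting freely on ℍ². Then Γ is conjugate in Aff(2,ℍ) to a subgroup of the group of all matrices of the form [[1,0,r],[0,d,0],[0,0,1]] with d ≠ 0, or to a subgroup of the group of all matrices of the form [[1,b,r],[0,1,s],[0,0,1]]. -/
open Quaternion Matrix

noncomputable section

/-- Shape `[[1,0,r],[0,d,0],[0,0,1]]` with `d ≠ 0`. -/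
def InK1 (M : Matrix (Fin 3) (Fin 3) ℍ[ℝ]) : Prop :=
  M 0 0 = 1 ∧ M 0 1 = 0 ∧ M 1 0 = 0 ∧ M 1 1 ≠ 0 ∧ M 1 2 = 0 ∧ IsAffMat M

/-- Shape `[[1,b,r],[0,1,s],[0,0,1]]`. -/
def InK2 (M : Matrix (Fin 3) (Fin 3) ℍ[ℝ]) : Prop :=
  M 0 0 = 1 ∧ M 1 0 = 0 ∧ M 1 1 = 1 ∧ IsAffMat M

abbrev Q3 := Matrix (Fin 3) (Fin 3) ℍ[ℝ]
local notation "H" => ℍ[ℝ]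

def Goal (Γ : Subgroup Q3ˣ) : Prop :=
  ∃ P : Q3ˣ, IsAffMat P.val ∧
    ((∀ g ∈ Γ, InK1 ((P⁻¹ * g * P).val)) ∨ (∀ g ∈ Γ, InK2 ((P⁻¹ * g * P).val)))

lemma affMat_mul {M N : Q3} (hM : IsAffMat M) (hN : IsAffMat N) : IsAffMat (M * N) := by
  obtain ⟨hM0, hM1, hM2⟩ := hM
  obtain ⟨hN0, hN1, hN2⟩ := hN
  refine ⟨?_, ?_, ?_⟩ <;>
    simp [Matrix.mul_apply, Fin.sum_univ_three, hM0, hM1, hM2, hN0, hN1, hN2]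

lemma affMat_inv (u : Q3ˣ) (hu : IsAffMat u.val) : IsAffMat (u⁻¹ : Q3ˣ).val := by
  obtain ⟨h0, h1, h2⟩ := hu
  have h : u.val * (u⁻¹ : Q3ˣ).val = 1 := by
    rw [← Units.val_mul, mul_inv_cancel, Units.val_one]
  refine ⟨?_, ?_, ?_⟩
  · have h' := congrFun (congrFun h 2) 0
    rw [Matrix.mul_apply, Fin.sum_univ_three, h0, h1, h2, Matrix.one_apply_ne (by decide),
      zero_mul, zero_mul, one_mul, zero_add, zero_add] at h'
    exact h'
  · have h' := congrFun (congrFun h 2) 1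
    rw [Matrix.mul_apply, Fin.sum_univ_three, h0, h1, h2, Matrix.one_apply_ne (by decide),
      zero_mul, zero_mul, one_mul, zero_add, zero_add] at h'
    exact h'
  · have h' := congrFun (congrFun h 2) 2
    rw [Matrix.mul_apply, Fin.sum_univ_three, h0, h1, h2, Matrix.one_apply_eq,
      zero_mul, zero_mul, one_mul, zero_add, zero_add] at h'
    exact h'

lemma affAct_mul (M N : Q3) (hN : IsAffMat N) (p : ℍ[ℝ] × ℍ[ℝ]) :
    affAct (M * N) p = affAct M (affAct N p) := by
  obtain ⟨h0, h1, h2⟩ := hN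
  simp only [affAct, Matrix.mul_apply, Fin.sum_univ_three, h0, h1, h2]
  refine Prod.ext ?_ ?_ <;> simp only [] <;> noncomm_ring

lemma affAct_one (p : ℍ[ℝ] × ℍ[ℝ]) : affAct (1 : Q3) p = p := by
  simp [affAct, Matrix.one_apply]

/-- Transfer the problem along a conjugation by an affine unit `P`. -/
lemma step (Γ : Subgroup Q3ˣ)
    (haff : ∀ g ∈ Γ, IsAffMat g.val)
    (habel : ∀ A ∈ Γ, ∀ B ∈ Γ, A * B = B * A)
    (hfree : ActsFreely Γ)
    (P : Q3ˣ) (hP : IsAffMat P.val)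
    (next : ∀ (Γ' : Subgroup Q3ˣ),
      (∀ g ∈ Γ', IsAffMat g.val) →
      (∀ A ∈ Γ', ∀ B ∈ Γ', A * B = B * A) →
      ActsFreely Γ' →
      (∀ g ∈ Γ, P⁻¹ * g * P ∈ Γ') →
      (∀ g' ∈ Γ', ∃ g ∈ Γ, g' = P⁻¹ * g * P) →
      Goal Γ') :
    Goal Γ := by
  set Γ' : Subgroup Q3ˣ := Subgroup.map ((MulAut.conj (P⁻¹ : Q3ˣ)).toMonoidHom) Γ with hΓ'
  have hmem : ∀ g ∈ Γ, P⁻¹ * g * P ∈ Γ' := by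
    intro g hg
    refine ⟨g, hg, ?_⟩
    simp [MulAut.conj_apply, mul_assoc]
  have hmem' : ∀ g' ∈ Γ', ∃ g ∈ Γ, g' = P⁻¹ * g * P := by
    rintro g' ⟨g, hg, rfl⟩
    exact ⟨g, hg, by simp [MulAut.conj_apply, mul_assoc]⟩
  have haff' : ∀ g' ∈ Γ', IsAffMat g'.val := by
    intro g' hg'
    obtain ⟨g, hg, rfl⟩ := hmem' g' hg'
    exact affMat_mul (affMat_mul (affMat_inv P hP) (haff g hg)) hP
  have habel' : ∀ A ∈ Γ', ∀ B ∈ Γ', A * B = B * A := by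
    intro A hA B hB
    obtain ⟨a, ha, rfl⟩ := hmem' A hA
    obtain ⟨b, hb, rfl⟩ := hmem' B hB
    have e : ∀ x y : Q3ˣ, (P⁻¹ * x * P) * (P⁻¹ * y * P) = P⁻¹ * (x * y) * P := by
      intro x y; group
    rw [e, e, habel a ha b hb]
  have hfree' : ActsFreely Γ' := by
    intro g' hg' ⟨q, hq⟩
    obtain ⟨g, hg, rfl⟩ := hmem' g' hg'
    have hgaff := haff g hg
    have hg'aff : IsAffMat (Units.val (P⁻¹ * g * P)) :=
      affMat_mul (affMat_mul (affMat_inv P hP) hgaff) hP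
    have key : affAct g.val (affAct P.val q) = affAct P.val q := by
      have e1 : (g * P : Q3ˣ).val = g.val * P.val := rfl
      have e2 : (g : Q3ˣ) * P = P * (P⁻¹ * g * P) := by group
      calc affAct g.val (affAct P.val q)
          = affAct (Units.val (g * P)) q := by
            rw [Units.val_mul, affAct_mul _ _ hP]
        _ = affAct (Units.val (P * (P⁻¹ * g * P))) q := by rw [← e2]
        _ = affAct P.val (affAct (Units.val (P⁻¹ * g * P)) q) := by
            rw [Units.val_mul, affAct_mul _ _ hg'aff]
        _ = affAct P.val q := by rw [hq]
    have : g = 1 := hfree g hg ⟨affAct P.val q, key⟩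
    rw [this]; group
  obtain ⟨P', hP', hK⟩ := next Γ' haff' habel' hfree' hmem hmem'
  refine ⟨P * P', affMat_mul hP hP', ?_⟩
  have conj_eq : ∀ g : Q3ˣ, (P * P')⁻¹ * g * (P * P') = P'⁻¹ * (P⁻¹ * g * P) * P' := by
    intro g; group
  rcases hK with hK | hK
  · exact Or.inl fun g hg => by rw [conj_eq]; exact hK _ (hmem g hg)
  · exact Or.inr fun g hg => by rw [conj_eq]; exact hK _ (hmem g hg)

/-- Solvability of a 2×2 triangularizable quaternionic affine system (Schur). -/
lemma solve2 (A B R C D S : H) (hA : A ≠ 0) (hσ : D - C * A⁻¹ * B ≠ 0) :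
    ∃ x y : H, A * x + B * y + R = 0 ∧ C * x + D * y + S = 0 := by
  set k := C * A⁻¹ with hk
  set σ := D - C * A⁻¹ * B with hσdef
  set y := σ⁻¹ * (k * R - S) with hy
  set x := A⁻¹ * (-(B * y) - R) with hx
  refine ⟨x, y, ?_, ?_⟩
  · rw [hx, ← mul_assoc, mul_inv_cancel₀ hA, one_mul]; noncomm_ring
  · have h2 : σ * y = k * R - S := by rw [hy, ← mul_assoc, mul_inv_cancel₀ hσ, one_mul]
    have h3 : D * y - k * (B * y) = k * R - S := by
      rw [← h2, hσdef, hk]; noncomm_ring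
    have expand : C * x + D * y + S = (D * y - k * (B * y)) - (k * R - S) - S + S := by
      rw [hx, hk, ← mul_assoc, ← mul_assoc]; noncomm_ring
    rw [expand, h3]; noncomm_ring

lemma eigen_of_noFixedPoint (a b r c d s : H)
    (hnf : ∀ x y : H, ¬(a * x + b * y + r = x ∧ c * x + d * y + s = y)) :
    (a = 1 ∧ c = 0) ∨ ∃ e : H, a * e + b = e ∧ c * e + d = 1 := by
  by_cases ha : a = 1
  · by_cases hc : c = 0
    · exact Or.inl ⟨ha, hc⟩
    · right
      have hb : b = 0 := by
        by_contra hb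
        set y := b⁻¹ * (-r) with hy
        set x := c⁻¹ * (y - d * y - s) with hx
        refine hnf x y ⟨?_, ?_⟩
        · rw [ha, one_mul, hy, ← mul_assoc, mul_inv_cancel₀ hb, one_mul]; abel
        · rw [hx, ← mul_assoc, mul_inv_cancel₀ hc, one_mul]; noncomm_ring
      refine ⟨-(c⁻¹ * (d - 1)), ?_, ?_⟩
      · rw [ha, hb, one_mul, add_zero]
      · rw [mul_neg, ← mul_assoc, mul_inv_cancel₀ hc, one_mul]; noncomm_ring
  · have hA : a - 1 ≠ 0 := sub_ne_zero_of_ne ha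
    by_cases hσ : (d - 1) - (c * (a - 1)⁻¹) * b = 0
    · right
      refine ⟨-((a - 1)⁻¹ * b), ?_, ?_⟩
      · have : (a - 1) * -((a - 1)⁻¹ * b) = -b := by
          rw [mul_neg, ← mul_assoc, mul_inv_cancel₀ hA, one_mul]
        have goal : a * -((a - 1)⁻¹ * b) + b - -((a - 1)⁻¹ * b)
            = (a - 1) * -((a - 1)⁻¹ * b) + b := by noncomm_ring
        have := goal.trans (by rw [this]; abel : (a - 1) * -((a - 1)⁻¹ * b) + b = 0)
        linear_combination (norm := noncomm_ring) this
      · have h1 : c * -((a - 1)⁻¹ * b) + d - 1 = -((c * (a-1)⁻¹) * b) + (d - 1) := by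
          noncomm_ring
        have h2 : -((c * (a-1)⁻¹) * b) + (d - 1) = 0 := by
          rw [← hσ]; noncomm_ring
        have := h1.trans h2
        linear_combination (norm := noncomm_ring) this
    · exfalso
      obtain ⟨x, y, e1, e2⟩ := solve2 (a - 1) b r c (d - 1) s hA hσ
      refine hnf x y ⟨?_, ?_⟩
      · linear_combination (norm := noncomm_ring) e1
      · linear_combination (norm := noncomm_ring) e2

lemma entry11_ne_zero (h : Q3ˣ) (haffh : IsAffMat h.val) (h10 : h.val 1 0 = 0) :
    h.val 1 1 ≠ 0 := by
  intro hq
  have hinv : h.val * (h⁻¹ : Q3ˣ).val = 1 := by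
    rw [← Units.val_mul, mul_inv_cancel, Units.val_one]
  obtain ⟨n0, n1, n2⟩ := affMat_inv h haffh
  have h' := congrFun (congrFun hinv 1) 1
  rw [Matrix.mul_apply, Fin.sum_univ_three, h10, hq, n1, Matrix.one_apply_eq,
    zero_mul, zero_mul, mul_zero, zero_add, add_zero] at h'
  exact zero_ne_one h'

lemma affMat_one : IsAffMat (Units.val (1 : Q3ˣ)) := by
  rw [Units.val_one]
  exact ⟨Matrix.one_apply_ne (by decide), Matrix.one_apply_ne (by decide), Matrix.one_apply_eq _⟩

lemma UvalUinv (E C : ℍ[ℝ]) :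
    (!![1,E,E*C;0,1,C;0,0,1] : Q3) * !![1,-E,0;0,1,-C;0,0,1] = 1 := by
  rw [Matrix.one_fin_three]
  apply Matrix.ext; intro i j; fin_cases i <;> fin_cases j <;>
    simp [Matrix.mul_apply, Fin.sum_univ_three, -mul_eq_zero, Matrix.vecHead, Matrix.vecTail]

lemma UinvUval (E C : ℍ[ℝ]) :
    (!![1,-E,0;0,1,-C;0,0,1] : Q3) * !![1,E,E*C;0,1,C;0,0,1] = 1 := by
  rw [Matrix.one_fin_three]
  apply Matrix.ext; intro i j; fin_cases i <;> fin_cases j <;>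
    simp [Matrix.mul_apply, Fin.sum_univ_three, -mul_eq_zero, Matrix.vecHead, Matrix.vecTail]

lemma conjU (B D R S E C : ℍ[ℝ]) :
    (!![1,-E,0;0,1,-C;0,0,1] : Q3) * !![1,B,R;0,D,S;0,0,1] * !![1,E,E*C;0,1,C;0,0,1] =
    !![1, E + (B - E*D), E*C + (B - E*D)*C + (R - E*S); 0, D, D*C + (S - C); 0,0,1] := by
  apply Matrix.ext; intro i j; fin_cases i <;> fin_cases j <;>
    simp [Matrix.mul_apply, Fin.sum_univ_three, -mul_eq_zero, Matrix.vecHead, Matrix.vecTail] <;>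
    noncomm_ring

lemma QvalQinv (e : ℍ[ℝ]) :
    (!![e,1,0;1,0,0;0,0,1] : Q3) * !![0,1,0;1,-e,0;0,0,1] = 1 := by
  rw [Matrix.one_fin_three]
  apply Matrix.ext; intro i j; fin_cases i <;> fin_cases j <;>
    simp [Matrix.mul_apply, Fin.sum_univ_three, -mul_eq_zero, Matrix.vecHead, Matrix.vecTail]

lemma QinvQval (e : ℍ[ℝ]) :
    (!![0,1,0;1,-e,0;0,0,1] : Q3) * !![e,1,0;1,0,0;0,0,1] = 1 := by
  rw [Matrix.one_fin_three]
  apply Matrix.ext; intro i j; fin_cases i <;> fin_cases j <;>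
    simp [Matrix.mul_apply, Fin.sum_univ_three, -mul_eq_zero, Matrix.vecHead, Matrix.vecTail]

lemma conjQ (a b r c d s e : ℍ[ℝ]) :
    (!![0,1,0;1,-e,0;0,0,1] : Q3) * !![a,b,r;c,d,s;0,0,1] * !![e,1,0;1,0,0;0,0,1] =
    !![c*e + d, c, s; (a - e*c)*e + (b - e*d), a - e*c, r - e*s; 0,0,1] := by
  apply Matrix.ext; intro i j; fin_cases i <;> fin_cases j <;>
    simp [Matrix.mul_apply, Fin.sum_univ_three, -mul_eq_zero, Matrix.vecHead, Matrix.vecTail] <;>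
    noncomm_ring

lemma lemB (Γ : Subgroup Q3ˣ)
    (haff : ∀ g ∈ Γ, IsAffMat g.val)
    (habel : ∀ A ∈ Γ, ∀ B ∈ Γ, A * B = B * A)
    (hfree : ActsFreely Γ)
    (g₀ : Q3ˣ) (hg₀ : g₀ ∈ Γ) (h00 : g₀.val 0 0 = 1) (h10 : g₀.val 1 0 = 0)
    (hnot : ¬(g₀.val 0 1 = 0 ∧ g₀.val 1 1 = 1)) : Goal Γ := by
  obtain ⟨z0, z1, z2⟩ := haff g₀ hg₀
  by_cases hd : g₀.val 1 1 = 1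
  · -- Case K2 : d = 1, b ≠ 0
    have hb : g₀.val 0 1 ≠ 0 := fun hb0 => hnot ⟨hb0, hd⟩
    refine ⟨1, affMat_one, Or.inr ?_⟩
    intro h hh
    rw [show (1 : Q3ˣ)⁻¹ * h * 1 = h by group]
    obtain ⟨w0, w1, w2⟩ := haff h hh
    have hcv : g₀.val * h.val = h.val * g₀.val := by
      rw [← Units.val_mul, ← Units.val_mul, habel g₀ hg₀ h hh]
    have E00 := congrFun (congrFun hcv 0) 0
    simp only [Matrix.mul_apply, Fin.sum_univ_three, h00, h10, hd, z0, z1, z2, w0, w1, w2,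
      one_mul, mul_one, zero_mul, mul_zero, add_zero, zero_add] at E00
    have hp0 : g₀.val 0 1 * h.val 1 0 = 0 := by
      linear_combination (norm := noncomm_ring) E00
    have hp : h.val 1 0 = 0 := by
      rcases mul_eq_zero.mp hp0 with h' | h'
      · exact absurd h' hb
      · exact h'
    have E01 := congrFun (congrFun hcv 0) 1
    simp only [Matrix.mul_apply, Fin.sum_univ_three, h00, h10, hd, z0, z1, z2, w0, w1, w2,
      one_mul, mul_one, zero_mul, mul_zero, add_zero, zero_add] at E01
    have bq_eq : g₀.val 0 1 * h.val 1 1 = h.val 0 0 * g₀.val 0 1 := by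
      linear_combination (norm := noncomm_ring) E01
    by_cases hq : h.val 1 1 = 1
    · have hm0 : (h.val 0 0 - 1) * g₀.val 0 1 = 0 := by
        rw [hq, mul_one] at bq_eq
        linear_combination (norm := noncomm_ring) -bq_eq
      have hm : h.val 0 0 = 1 := by
        rcases mul_eq_zero.mp hm0 with h' | h'
        · exact sub_eq_zero.mp h'
        · exact absurd h' hb
      exact ⟨hm, hp, hq, haff h hh⟩
    · exfalso
      have hqm : h.val 1 1 - 1 ≠ 0 := sub_ne_zero_of_ne hq
      have hm' : h.val 0 0 ≠ 1 := by
        intro hm1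
        rw [hm1, one_mul] at bq_eq
        have : g₀.val 0 1 * (h.val 1 1 - 1) = 0 := by
          linear_combination (norm := noncomm_ring) bq_eq
        rcases mul_eq_zero.mp this with h' | h'
        · exact hb h'
        · exact hqm h'
      have hmm : h.val 0 0 - 1 ≠ 0 := sub_ne_zero_of_ne hm'
      set y : H := (h.val 1 1 - 1)⁻¹ * (-(h.val 1 2)) with hy
      set x : H := (h.val 0 0 - 1)⁻¹ * (-(h.val 0 1 * y) - h.val 0 2) with hx
      have fix : affAct h.val (x, y) = (x, y) := by
        have h1 : (h.val 0 0 - 1) * x = -(h.val 0 1 * y) - h.val 0 2 := by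
          rw [hx, ← mul_assoc, mul_inv_cancel₀ hmm, one_mul]
        have h2 : (h.val 1 1 - 1) * y = -(h.val 1 2) := by
          rw [hy, ← mul_assoc, mul_inv_cancel₀ hqm, one_mul]
        simp only [affAct]
        refine Prod.ext ?_ ?_
        · simp only []
          linear_combination (norm := noncomm_ring) h1
        · simp only [hp]
          linear_combination (norm := noncomm_ring) h2
      have h1 := hfree h hh ⟨(x, y), fix⟩
      rw [h1, Units.val_one] at hq
      exact hq (Matrix.one_apply_eq _)
  · -- d ≠ 1 : conjugate to kill b and s, then K1
    obtain ⟨B, hB⟩ : ∃ x, g₀.val 0 1 = x := ⟨_, rfl⟩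
    obtain ⟨D, hD⟩ : ∃ x, g₀.val 1 1 = x := ⟨_, rfl⟩
    obtain ⟨R, hR⟩ : ∃ x, g₀.val 0 2 = x := ⟨_, rfl⟩
    obtain ⟨S, hS⟩ : ∃ x, g₀.val 1 2 = x := ⟨_, rfl⟩
    have hdD : D ≠ 1 := fun h' => hd (hD.symm ▸ h' ▸ rfl)
    have hd1 : (1 : H) - D ≠ 0 := fun h' => hdD (sub_eq_zero.mp h').symm
    have hDm1 : D - 1 ≠ 0 := fun h' => hdD (sub_eq_zero.mp h')
    obtain ⟨E, hE⟩ : ∃ e : H, e * (1 - D) = -B :=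
      ⟨-B * (1 - D)⁻¹, by rw [mul_assoc, inv_mul_cancel₀ hd1, mul_one]⟩
    obtain ⟨C, hC⟩ : ∃ c : H, (D - 1) * c = -S :=
      ⟨(1 - D)⁻¹ * S, by
        have hDneg : D - 1 = -(1 - D) := by noncomm_ring
        rw [hDneg, neg_mul, ← mul_assoc, mul_inv_cancel₀ hd1, one_mul]⟩
    apply step Γ haff habel hfree
      ⟨!![1,E,E*C;0,1,C;0,0,1], !![1,-E,0;0,1,-C;0,0,1], UvalUinv E C, UinvUval E C⟩
      ⟨rfl, rfl, rfl⟩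
    intro Γ' haff' habel' hfree' hmem hmem'
    set U : Q3ˣ := ⟨!![1,E,E*C;0,1,C;0,0,1], !![1,-E,0;0,1,-C;0,0,1], UvalUinv E C, UinvUval E C⟩
      with hUd
    have hg₀' : U⁻¹ * g₀ * U ∈ Γ' := hmem g₀ hg₀
    have hval0 : g₀.val = !![1,B,R;0,D,S;0,0,1] := by
      apply Matrix.ext; intro i j; fin_cases i <;> fin_cases j <;>
        first | rfl | exact h00 | exact h10 | exact z0 | exact z1 | exact z2 | exact hB | exact hD | exact hR | exact hS
    have hval1 : (U⁻¹ * g₀ * U).val = !![1,-E,0;0,1,-C;0,0,1] * g₀.val * !![1,E,E*C;0,1,C;0,0,1] := by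
      rw [Units.val_mul, Units.val_mul]
      rfl
    have hX : E + (B - E*D) = 0 := by
      linear_combination (norm := noncomm_ring) hE
    have hZ : D*C + (S - C) = 0 := by
      linear_combination (norm := noncomm_ring) hC
    obtain ⟨Y, hYd⟩ : ∃ y : H, E*C + (B - E*D)*C + (R - E*S) = y := ⟨_, rfl⟩
    have hval2 : (U⁻¹ * g₀ * U).val = !![1, 0, Y; 0, D, 0; 0,0,1] := by
      rw [hval1, hval0, conjU B D R S E C, hX, hZ, hYd]
    have hg₁ne : U⁻¹ * g₀ * U ≠ 1 := by
      intro h'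
      apply hdD
      have h2 : (U⁻¹ * g₀ * U).val = (1 : Q3ˣ).val := by rw [h']
      have h3 := congrFun (congrFun h2 1) 1
      rw [hval2, Units.val_one, Matrix.one_apply_eq] at h3
      exact h3
    have hY : Y ≠ 0 := by
      intro hY0
      apply hg₁ne
      apply hfree' _ hg₀'
      refine ⟨(0, 0), ?_⟩
      rw [hval2]
      simp [affAct, hY0, Matrix.vecHead, Matrix.vecTail]
    refine ⟨1, affMat_one, Or.inl ?_⟩
    intro h hh
    rw [show (1 : Q3ˣ)⁻¹ * h * 1 = h by group]
    obtain ⟨w0, w1, w2⟩ := haff' h hh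
    have hcv : (U⁻¹ * g₀ * U).val * h.val = h.val * (U⁻¹ * g₀ * U).val := by
      rw [← Units.val_mul, ← Units.val_mul, habel' _ hg₀' h hh]
    rw [hval2] at hcv
    have E01 := congrFun (congrFun hcv 0) 1
    have E10 := congrFun (congrFun hcv 1) 0
    have E02 := congrFun (congrFun hcv 0) 2
    have E12 := congrFun (congrFun hcv 1) 2
    simp [Matrix.mul_apply, Fin.sum_univ_three, -mul_eq_zero, Matrix.vecHead, Matrix.vecTail,
      w0, w1, w2] at E01 E10 E02 E12
    have hn : h.val 0 1 = 0 := by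
      have hn0 : h.val 0 1 * (1 - D) = 0 := by
        linear_combination (norm := noncomm_ring) E01
      rcases mul_eq_zero.mp hn0 with h' | h'
      · exact h'
      · exact absurd h' hd1
    have hp : h.val 1 0 = 0 := by
      have hp0 : (D - 1) * h.val 1 0 = 0 := by
        linear_combination (norm := noncomm_ring) E10
      rcases mul_eq_zero.mp hp0 with h' | h'
      · exact absurd h' hDm1
      · exact h'
    have hm : h.val 0 0 = 1 := by
      have hm0 : (h.val 0 0 - 1) * Y = 0 := by
        linear_combination (norm := noncomm_ring) -E02
      rcases mul_eq_zero.mp hm0 with h' | h'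
      · exact sub_eq_zero.mp h'
      · exact absurd h' hY
    have hs2 : h.val 1 2 = 0 := by
      rw [hp] at E12
      have hs0 : (D - 1) * h.val 1 2 = 0 := by
        linear_combination (norm := noncomm_ring) E12
      rcases mul_eq_zero.mp hs0 with h' | h'
      · exact absurd h' hDm1
      · exact h'
    exact ⟨hm, hn, hp, entry11_ne_zero h (haff' h hh) hp, hs2, haff' h hh⟩

/-- If an abelian subgroup `Γ ⊆ Aff(2,ℍ)` acts freely on ℍ², then `Γ` is conjugate in
Aff(2,ℍ) to a subgroup of the group of matrices `[[1,0,r],[0,d,0],[0,0,1]]` (`d ≠ 0`)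
or to a subgroup of the group of matrices `[[1,b,r],[0,1,s],[0,0,1]]`. -/
theorem abelian_subgroup_conjugation
    (Γ : Subgroup (Matrix (Fin 3) (Fin 3) ℍ[ℝ])ˣ)
    (haff : ∀ g ∈ Γ, IsAffMat g.val)
    (habel : ∀ A ∈ Γ, ∀ B ∈ Γ, A * B = B * A)
    (hfree : ActsFreely Γ) :
    ∃ P : (Matrix (Fin 3) (Fin 3) ℍ[ℝ])ˣ, IsAffMat P.val ∧
      ((∀ g ∈ Γ, InK1 ((P⁻¹ * g * P).val)) ∨ (∀ g ∈ Γ, InK2 ((P⁻¹ * g * P).val))) := by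
  suffices hG : Goal Γ by exact hG
  by_cases hA : ∀ g ∈ Γ, g.val 0 0 = 1 ∧ g.val 1 0 = 0 ∧ g.val 1 1 = 1
  · refine ⟨1, affMat_one, Or.inr ?_⟩
    intro g hg
    rw [show (1 : Q3ˣ)⁻¹ * g * 1 = g by group]
    obtain ⟨e1, e2, e3⟩ := hA g hg
    exact ⟨e1, e2, e3, haff g hg⟩
  · obtain ⟨g₀, hg₀, hn⟩ :
        ∃ g₀, g₀ ∈ Γ ∧ ¬(g₀.val 0 0 = 1 ∧ g₀.val 1 0 = 0 ∧ g₀.val 1 1 = 1) := by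
      by_contra hc
      apply hA
      intro g hg
      by_contra hng
      exact hc ⟨g, hg, hng⟩
    obtain ⟨z0, z1, z2⟩ := haff g₀ hg₀
    obtain ⟨a, hEa⟩ : ∃ x, g₀.val 0 0 = x := ⟨_, rfl⟩
    obtain ⟨b, hEb⟩ : ∃ x, g₀.val 0 1 = x := ⟨_, rfl⟩
    obtain ⟨r, hEr⟩ : ∃ x, g₀.val 0 2 = x := ⟨_, rfl⟩
    obtain ⟨c, hEc⟩ : ∃ x, g₀.val 1 0 = x := ⟨_, rfl⟩
    obtain ⟨d, hEd⟩ : ∃ x, g₀.val 1 1 = x := ⟨_, rfl⟩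
    obtain ⟨s, hEs⟩ : ∃ x, g₀.val 1 2 = x := ⟨_, rfl⟩
    have hval0 : g₀.val = !![a,b,r;c,d,s;0,0,1] := by
      apply Matrix.ext; intro i j; fin_cases i <;> fin_cases j <;>
        first | exact hEa | exact hEb | exact hEr | exact hEc | exact hEd | exact hEs | exact z0 | exact z1 | exact z2
    have hn' : ¬(a = 1 ∧ c = 0 ∧ d = 1) := by
      rintro ⟨x1, x2, x3⟩
      exact hn ⟨hEa.trans x1, hEc.trans x2, hEd.trans x3⟩
    have hne1 : g₀ ≠ 1 := by
      rintro rfl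
      refine hn ⟨?_, ?_, ?_⟩ <;> rw [Units.val_one]
      · exact Matrix.one_apply_eq _
      · exact Matrix.one_apply_ne (by decide)
      · exact Matrix.one_apply_eq _
    have hnf : ∀ x y : ℍ[ℝ], ¬(a * x + b * y + r = x ∧ c * x + d * y + s = y) := by
      rintro x y ⟨H1, H2⟩
      refine hne1 (hfree g₀ hg₀ ⟨(x, y), ?_⟩)
      simp only [affAct]
      refine Prod.ext ?_ ?_
      · simp only []
        rw [hEa, hEb, hEr]
        exact H1
      · simp only []
        rw [hEc, hEd, hEs]
        exact H2
    rcases eigen_of_noFixedPoint a b r c d s hnf with ⟨ha1, hc0⟩ | ⟨e, he1, he2⟩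
    · refine lemB Γ haff habel hfree g₀ hg₀ (hEa.trans ha1) (hEc.trans hc0) ?_
      rintro ⟨u1, u2⟩
      exact hn' ⟨ha1, hc0, hEd.symm.trans u2⟩
    · apply step Γ haff habel hfree
        ⟨!![e,1,0;1,0,0;0,0,1], !![0,1,0;1,-e,0;0,0,1], QvalQinv e, QinvQval e⟩ ⟨rfl, rfl, rfl⟩
      intro Γ' haff' habel' hfree' hmem hmem'
      set Q : Q3ˣ := ⟨!![e,1,0;1,0,0;0,0,1], !![0,1,0;1,-e,0;0,0,1], QvalQinv e, QinvQval e⟩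
        with hQd
      have hval1 : (Q⁻¹ * g₀ * Q).val = !![0,1,0;1,-e,0;0,0,1] * g₀.val * !![e,1,0;1,0,0;0,0,1] := by
        rw [Units.val_mul, Units.val_mul]
        rfl
      have hval2 : (Q⁻¹ * g₀ * Q).val =
          !![c*e + d, c, s; (a - e*c)*e + (b - e*d), a - e*c, r - e*s; 0,0,1] := by
        rw [hval1, hval0, conjQ]
      have h00' : (Q⁻¹ * g₀ * Q).val 0 0 = 1 := by
        rw [hval2]
        exact he2
      have h10' : (Q⁻¹ * g₀ * Q).val 1 0 = 0 := by
        rw [hval2]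
        show (a - e*c)*e + (b - e*d) = 0
        have step1 : (a - e*c)*e + (b - e*d) = (a*e + b) - e*(c*e + d) := by noncomm_ring
        rw [step1, he1, he2, mul_one, sub_self]
      have hnot' : ¬((Q⁻¹ * g₀ * Q).val 0 1 = 0 ∧ (Q⁻¹ * g₀ * Q).val 1 1 = 1) := by
        rintro ⟨u1, u2⟩
        rw [hval2] at u1 u2
        have hc' : c = 0 := u1
        have ha1 : a = 1 := by
          have u2' : a - e*c = 1 := u2
          rwa [hc', mul_zero, sub_zero] at u2'
        have hd1 : d = 1 := by
          rw [hc', zero_mul, zero_add] at he2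
          exact he2
        exact hn' ⟨ha1, hc', hd1⟩
      exact lemB Γ' haff' habel' hfree' _ (hmem g₀ hg₀) h00' h10' hnot'
end
end

section
/- Let b, r, s, d ∈ ℍ with d ≠ 1, and let A = [[1,b,r],[0,d,s],[0,0,1]]. Then for every positive integer n, Aⁿ = [[1, b(d−1)⁻¹(dⁿ−1), b(d−1)⁻²(dⁿ−1)s + n·r − b·n·(d−1)⁻¹s], [0, dⁿ, (d−1)⁻¹(dⁿ−1)s], [0,0,1]], where all products are quaternion products in the written order and (d−1)⁻¹ is the quaternionic inverse of d−1. -/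
open Quaternion Matrix

noncomputable section

/-- Explicit formula for the powers of `A = [[1,b,r],[0,d,s],[0,0,1]]` when `d ≠ 1`. -/
theorem pow_of_affine_matrix
    (b r s d : ℍ[ℝ]) (hd : d ≠ 1) (n : ℕ) (hn : 0 < n) :
    (!![1, b, r; 0, d, s; 0, 0, 1]) ^ n =
      !![1, b * (d - 1)⁻¹ * (d ^ n - 1),
            b * ((d - 1)⁻¹) ^ 2 * (d ^ n - 1) * s + (n : ℍ[ℝ]) * r
              - b * (n : ℍ[ℝ]) * (d - 1)⁻¹ * s;
         0, d ^ n, (d - 1)⁻¹ * (d ^ n - 1) * s;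
         0, 0, 1] := by
  set e := (d - 1)⁻¹ with he
  have hne : d - 1 ≠ 0 := sub_ne_zero.mpr hd
  have h1 : e * (d - 1) = 1 := inv_mul_cancel₀ hne
  clear_value e
  induction n, hn using Nat.le_induction with
  | base =>
      have h2 : b * e * (d ^ 1 - 1) = b := by
        rw [pow_one, mul_assoc, h1, mul_one]
      have h3 : b * e ^ 2 * (d ^ 1 - 1) * s = b * e * s := by
        rw [pow_one, show b * e ^ 2 * (d - 1) = b * e * (e * (d - 1)) by
          rw [sq]; noncomm_ring, h1, mul_one]
      have h4 : e * (d ^ 1 - 1) * s = s := by rw [pow_one, h1, one_mul]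
      rw [pow_one, h2, h3, h4]
      norm_num
  | succ n hn ih =>
      have k1 : b * e * (d ^ (n + 1) - 1) = b + b * e * (d ^ n - 1) * d := by
        rw [show d ^ (n + 1) - 1 = (d - 1) + (d ^ n - 1) * d by
          rw [pow_succ]; noncomm_ring, mul_add, mul_assoc b e (d - 1), h1, mul_one]
        noncomm_ring
      have k2 : b * e ^ 2 * (d ^ (n + 1) - 1) * s
          = b * e ^ 2 * (d ^ n - 1) * s + b * e * (d ^ n - 1) * s + b * e * s := by
        rw [show d ^ (n + 1) - 1 = (d ^ n - 1) + (d - 1) * (d ^ n - 1) + (d - 1) by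
          rw [pow_succ']; noncomm_ring, mul_add, mul_add,
          show b * e ^ 2 * ((d - 1) * (d ^ n - 1)) = b * e * (e * (d - 1)) * (d ^ n - 1) by
            rw [sq]; noncomm_ring, h1, mul_one,
          show b * e ^ 2 * (d - 1) = b * e * (e * (d - 1)) by rw [sq]; noncomm_ring,
          h1, mul_one, add_mul, add_mul]
      have k3 : e * (d ^ (n + 1) - 1) * s = d ^ n * s + e * (d ^ n - 1) * s := by
        rw [show d ^ (n + 1) - 1 = (d ^ n - 1) + (d - 1) * d ^ n by
          rw [pow_succ']; noncomm_ring, mul_add, ← mul_assoc e (d - 1), h1, one_mul,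
          add_mul]
        noncomm_ring
      have K2 : b * e ^ 2 * (d ^ (n + 1) - 1) * s + ((n : ℕ) + 1 : ℕ) * r
          - b * ((n : ℕ) + 1 : ℕ) * e * s
          = r + b * e * (d ^ n - 1) * s
            + (b * e ^ 2 * (d ^ n - 1) * s + (n : ℍ[ℝ]) * r - b * (n : ℍ[ℝ]) * e * s) := by
        rw [k2]; push_cast; noncomm_ring
      rw [pow_succ, ih, Matrix.mul_fin_three]
      simp only [one_mul, mul_one, mul_zero, zero_mul, add_zero, zero_add]
      rw [K2, k1, k3, pow_succ d n]
end
end
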